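/- arXiv:math/9606210 — 6 statements merged into one kernel-verified Lean document; each statement's English description precedes it below -/
import Mathlib

section
/- Let E be an L-space and let F be a Banach lattice with a Levi norm. Then every continuous linear operator T : E → F is regular, i.e., T is the difference of two positive continuous linear operators from E to F. -/
/-- A Banach lattice has a *Levi norm* if every norm-bounded upward directed
(nonempty) set of positive elements has a supremum. -/
def HasLeviNorm (E : Type*) [NormedAddCommGroup E] [Lattice E] : Prop :=
  ∀ A : Set E, A.Nonempty → (∀ x ∈ A, 0 ≤ x) → DirectedOn (· ≤ ·) A →
    (∃ M : ℝ, ∀ x ∈ A, ‖x‖ ≤ M) → ∃ s : E, IsLUB A s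

/-- A Banach lattice has a *sequentially Levi norm* if every norm-bounded
increasing sequence of positive elements has a supremum. -/
def HasSeqLeviNorm (E : Type*) [NormedAddCommGroup E] [Lattice E] : Prop :=
  ∀ x : ℕ → E, (∀ n, 0 ≤ x n) → Monotone x → (∃ M : ℝ, ∀ n, ‖x n‖ ≤ M) →
    ∃ s : E, IsLUB (Set.range x) s
/-- An operator between ordered spaces is *positive* if it maps positive
elements to positive elements. -/
def IsPositiveOp {E F : Type*} [NormedAddCommGroup E] [NormedSpace ℝ E] [Lattice E]
    [NormedAddCommGroup F] [NormedSpace ℝ F] [Lattice F] (T : E →L[ℝ] F) : Prop :=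
  ∀ x : E, 0 ≤ x → 0 ≤ T x

/-- An operator is *regular* if it is the difference of two positive continuous
linear operators. -/
def IsRegularOp {E F : Type*} [NormedAddCommGroup E] [NormedSpace ℝ E] [Lattice E]
    [NormedAddCommGroup F] [NormedSpace ℝ F] [Lattice F] (T : E →L[ℝ] F) : Prop :=
  ∃ P Q : E →L[ℝ] F, IsPositiveOp P ∧ IsPositiveOp Q ∧ T = P - Q


section LatticeHelpers
variable {α : Type*} [Lattice α] [AddCommGroup α] [CovariantClass α α (· + ·) (· ≤ ·)]

lemma kv_sum_nonneg {ι : Type*} (s : Finset ι) (f : ι → α) (h : ∀ i ∈ s, 0 ≤ f i) :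
    0 ≤ ∑ i ∈ s, f i := by
  classical
  induction s using Finset.cons_induction with
  | empty => simp
  | cons a s ha ih =>
    rw [Finset.sum_cons]
    exact add_nonneg (h a (Finset.mem_cons_self a s)) (ih fun i hi => h i (Finset.mem_cons_of_mem hi))

lemma kv_posPart_add_le (a b : α) : (a + b)⁺ ≤ a⁺ + b⁺ :=
  sup_le (add_le_add (le_posPart a) (le_posPart b))
    (add_nonneg (posPart_nonneg a) (posPart_nonneg b))

lemma kv_sum_posPart_le {ι : Type*} (s : Finset ι) (f : ι → α) :
    (∑ i ∈ s, f i)⁺ ≤ ∑ i ∈ s, (f i)⁺ := by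
  classical
  induction s using Finset.cons_induction with
  | empty => simp
  | cons a s ha ih =>
    rw [Finset.sum_cons, Finset.sum_cons]
    exact le_trans (kv_posPart_add_le _ _) (add_le_add le_rfl ih)

/-- Riesz decomposition, two summands. -/
lemma kv_riesz2 {a b c : α} (ha : 0 ≤ a) (hb : 0 ≤ b) (hc : 0 ≤ c) (h : c ≤ a + b) :
    ∃ a' b', 0 ≤ a' ∧ a' ≤ a ∧ 0 ≤ b' ∧ b' ≤ b ∧ a' + b' = c := by
  refine ⟨c ⊓ a, c - c ⊓ a, le_inf hc ha, inf_le_right, ?_, ?_, by abel⟩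
  · exact sub_nonneg.2 inf_le_left
  · have hba : c - c ⊓ a = (c - a)⁺ := by
      rw [posPart_def, sub_eq_add_neg, neg_inf, add_sup]
      simp [sub_eq_add_neg, sup_comm]
    rw [hba]
    exact sup_le (by rwa [sub_le_iff_le_add']) hb

/-- Riesz decomposition of a finite sum against two summands. -/
lemma kv_rieszFin : ∀ {m : ℕ} (y : Fin m → α), (∀ j, 0 ≤ y j) → ∀ (u v : α), 0 ≤ u → 0 ≤ v →
    (∑ j, y j) = u + v → ∃ a b : Fin m → α, (∀ j, 0 ≤ a j) ∧ (∀ j, 0 ≤ b j) ∧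
      (∀ j, a j + b j = y j) ∧ (∑ j, a j) = u ∧ (∑ j, b j) = v := by
  intro m
  induction m with
  | zero =>
    intro y hy u v hu hv h
    rw [Finset.univ_eq_empty, Finset.sum_empty] at h
    have hu0 : u = 0 := le_antisymm (by calc u ≤ u + v := le_add_of_nonneg_right hv
                                             _ = 0 := h.symm) hu
    have hv0 : v = 0 := by rw [hu0, zero_add] at h; exact h.symm
    exact ⟨0, 0, fun j => le_rfl, fun j => le_rfl, fun j => j.elim0,
      by simp [hu0], by simp [hv0]⟩
  | succ m ih =>
    intro y hy u v hu hv h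
    rw [Fin.sum_univ_succ] at h
    have htail : 0 ≤ ∑ j, y (Fin.succ j) := kv_sum_nonneg _ _ fun j _ => hy _
    have hc : y 0 ≤ u + v := by
      rw [← h]; exact le_add_of_nonneg_right htail
    obtain ⟨a0, b0, ha0, ha0u, hb0, hb0v, hab0⟩ := kv_riesz2 hu hv (hy 0) hc
    have htail' : (∑ j, y (Fin.succ j)) = (u - a0) + (v - b0) := by
      have h2 : (∑ j, y (Fin.succ j)) = u + v - y 0 := eq_sub_of_add_eq' h
      rw [← hab0] at h2
      rw [h2]; abel
    obtain ⟨a', b', ha', hb', hab', hsa', hsb'⟩ :=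
      ih (fun j => y (Fin.succ j)) (fun j => hy _) (u - a0) (v - b0)
        (sub_nonneg.2 ha0u) (sub_nonneg.2 hb0v) htail'
    refine ⟨Fin.cons a0 a', Fin.cons b0 b', ?_, ?_, ?_, ?_, ?_⟩
    · intro j; induction j using Fin.cases <;> simp [ha0, ha']
    · intro j; induction j using Fin.cases <;> simp [hb0, hb']
    · intro j
      induction j using Fin.cases with
      | zero => simpa using hab0
      | succ i => simpa using hab' i
    · rw [Fin.sum_univ_succ]; simp [hsa']
    · rw [Fin.sum_univ_succ]; simp [hsb']

/-- Common refinement of two finite positive decompositions of the same element. -/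
lemma kv_rieszMatrix : ∀ {n : ℕ} {m : ℕ} (y : Fin n → α) (y' : Fin m → α),
    (∀ i, 0 ≤ y i) → (∀ j, 0 ≤ y' j) → (∑ i, y i) = (∑ j, y' j) →
    ∃ z : Fin n → Fin m → α, (∀ i j, 0 ≤ z i j) ∧ (∀ i, (∑ j, z i j) = y i) ∧
      (∀ j, (∑ i, z i j) = y' j) := by
  intro n
  induction n with
  | zero =>
    intro m y y' hy hy' h
    rw [Finset.univ_eq_empty, Finset.sum_empty] at h
    have hz : ∀ j, y' j = 0 := by
      intro j
      have h1 : y' j ≤ ∑ j, y' j := by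
        letI : IsOrderedAddMonoid α :=
          { add_le_add_left := fun a b h c => add_le_add h le_rfl }
        exact Finset.single_le_sum (f := y') (fun i _ => hy' i) (Finset.mem_univ j)
      exact le_antisymm (by rw [← h] at h1; exact h1) (hy' j)
    exact ⟨fun i => i.elim0, fun i => i.elim0, fun i => i.elim0,
      fun j => by simp [hz j]⟩
  | succ n ih =>
    intro m y y' hy hy' h
    rw [Fin.sum_univ_succ] at h
    obtain ⟨a, b, ha, hb, hab, hsa, hsb⟩ :=
      kv_rieszFin y' hy' (y 0) (∑ i, y (Fin.succ i)) (hy 0)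
        (kv_sum_nonneg _ _ fun i _ => hy _) h.symm
    obtain ⟨z', hz', hrow', hcol'⟩ :=
      ih (fun i => y (Fin.succ i)) b (fun i => hy _) hb hsb.symm
    refine ⟨Fin.cons a z', ?_, ?_, ?_⟩
    · intro i j
      induction i using Fin.cases with
      | zero => simpa using ha j
      | succ i => simpa using hz' i j
    · intro i
      induction i using Fin.cases with
      | zero => simpa using hsa
      | succ i => simpa using hrow' i
    · intro j
      rw [Fin.sum_univ_succ]
      simp only [Fin.cons_zero, Fin.cons_succ]
      rw [hcol' j, hab j]

end LatticeHelpers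

section SmulHelpers
variable {G : Type*} [NormedAddCommGroup G] [Lattice G] [HasSolidNorm G] [IsOrderedAddMonoid G] [NormedSpace ℝ G]

lemma kv_dyadic_nonneg (m : ℕ) (x : G) (hx : 0 ≤ x) : 0 ≤ ((2:ℝ) ^ m)⁻¹ • x := by
  induction m with
  | zero => simpa using hx
  | succ m ih =>
    have h2 : ((2:ℝ) ^ (m+1))⁻¹ • x = (2:ℝ)⁻¹ • (((2:ℝ) ^ m)⁻¹ • x) := by
      rw [smul_smul]; ring_nf
    rw [h2]
    apply nsmul_two_semiclosed
    have : (2 : ℕ) • ((2:ℝ)⁻¹ • (((2:ℝ) ^ m)⁻¹ • x)) = ((2:ℝ) ^ m)⁻¹ • x := by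
      rw [← Nat.cast_smul_eq_nsmul ℝ, smul_smul]
      norm_num
    rw [this]; exact ih

lemma kv_smul_nonneg {c : ℝ} (hc : 0 ≤ c) {x : G} (hx : 0 ≤ x) : 0 ≤ c • x := by
  -- approximate `c` by dyadic rationals from below
  set r : ℕ → ℝ := fun m => (⌊c * 2 ^ m⌋₊ : ℝ) * ((2:ℝ) ^ m)⁻¹ with hr
  have hr_nonneg : ∀ m, 0 ≤ r m • x := by
    intro m
    have : r m • x = ⌊c * 2 ^ m⌋₊ • (((2:ℝ) ^ m)⁻¹ • x) := by
      rw [← Nat.cast_smul_eq_nsmul ℝ, smul_smul, hr]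
    rw [this]
    exact nsmul_nonneg (kv_dyadic_nonneg m x hx) _
  have hconv : Filter.Tendsto (fun m => r m • x) Filter.atTop (nhds (c • x)) := by
    have h1 : Filter.Tendsto r Filter.atTop (nhds c) := by
      have hub : ∀ m, r m ≤ c := by
        intro m
        rw [hr]
        have h2 : (0:ℝ) < 2 ^ m := by positivity
        rw [mul_inv_le_iff₀ h2]  -- maybe wrong name
        exact Nat.floor_le (by positivity)
      have hlb : ∀ m, c - ((2:ℝ) ^ m)⁻¹ ≤ r m := by
        intro m
        have h2 : (0:ℝ) < 2 ^ m := by positivity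
        have h3 := Nat.lt_floor_add_one (c * 2 ^ m)
        have hi : (2:ℝ)^m * ((2:ℝ)^m)⁻¹ = 1 := mul_inv_cancel₀ (ne_of_gt h2)
        rw [hr]
        nlinarith [h3, hi, h2]
      have hlow : Filter.Tendsto (fun m : ℕ => c - ((2:ℝ) ^ m)⁻¹) Filter.atTop (nhds c) := by
        have hz : Filter.Tendsto (fun m : ℕ => ((2:ℝ) ^ m)⁻¹) Filter.atTop (nhds 0) := by
          simp only [← inv_pow]
          exact tendsto_pow_atTop_nhds_zero_of_lt_one (by norm_num) (by norm_num)
        simpa using Filter.Tendsto.sub (tendsto_const_nhds (x := c)) hz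
      exact tendsto_of_tendsto_of_tendsto_of_le_of_le hlow tendsto_const_nhds hlb hub
    exact h1.smul_const x
  exact ge_of_tendsto' hconv hr_nonneg
  
lemma kv_smul_mono {c : ℝ} (hc : 0 ≤ c) {a b : G} (h : a ≤ b) : c • a ≤ c • b := by
  have := kv_smul_nonneg hc (sub_nonneg.2 h)
  rw [smul_sub] at this
  exact sub_nonneg.1 this

lemma kv_posPart_smul {c : ℝ} (hc : 0 ≤ c) (x : G) : (c • x)⁺ = c • x⁺ := by
  rcases eq_or_lt_of_le hc with rfl | hc'
  · simp
  apply le_antisymm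
  · exact sup_le (kv_smul_mono hc (le_posPart x)) (kv_smul_nonneg hc (posPart_nonneg x))
  · have h1 : x ≤ c⁻¹ • (c • x)⁺ := by
      have := kv_smul_mono (le_of_lt (inv_pos.2 hc')) (le_posPart (c • x))
      rwa [inv_smul_smul₀ (ne_of_gt hc')] at this
    have h2 : (0:G) ≤ c⁻¹ • (c • x)⁺ :=
      kv_smul_nonneg (le_of_lt (inv_pos.2 hc')) (posPart_nonneg _)
    have h3 : x⁺ ≤ c⁻¹ • (c • x)⁺ := sup_le h1 h2
    have := kv_smul_mono hc h3
    rwa [smul_inv_smul₀ (ne_of_gt hc')] at this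

lemma kv_negPart_smul {c : ℝ} (hc : 0 ≤ c) (x : G) : (c • x)⁻ = c • x⁻ := by
  rw [← posPart_neg, ← posPart_neg, ← smul_neg, kv_posPart_smul hc]

lemma kv_posPart_smul_neg {c : ℝ} (hc : c ≤ 0) (x : G) : (c • x)⁺ = (-c) • x⁻ := by
  have : c • x = (-c) • (-x) := by rw [neg_smul, smul_neg, neg_neg]
  rw [this, kv_posPart_smul (neg_nonneg.2 hc), posPart_neg]

lemma kv_negPart_smul_neg {c : ℝ} (hc : c ≤ 0) (x : G) : (c • x)⁻ = (-c) • x⁺ := by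
  have : c • x = (-c) • (-x) := by rw [neg_smul, smul_neg, neg_neg]
  rw [this, kv_negPart_smul (neg_nonneg.2 hc), negPart_neg]

lemma kv_smul_le_smul {c d : ℝ} (h : c ≤ d) {x : G} (hx : 0 ≤ x) : c • x ≤ d • x := by
  have := kv_smul_nonneg (sub_nonneg.2 h) hx
  rw [sub_smul] at this
  exact sub_nonneg.1 this

end SmulHelpers

section LUBHelpers
variable {α : Type*} [Lattice α] [AddCommGroup α] [CovariantClass α α (· + ·) (· ≤ ·)]

lemma kv_isLUB_add {A B : Set α} {s t : α} (hA : IsLUB A s) (hB : IsLUB B t) :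
    IsLUB {z | ∃ a ∈ A, ∃ b ∈ B, z = a + b} (s + t) := by
  constructor
  · rintro z ⟨a, ha, b, hb, rfl⟩
    exact add_le_add (hA.1 ha) (hB.1 hb)
  · intro c hc
    have h1 : ∀ a ∈ A, t ≤ c - a := by
      intro a ha
      refine hB.2 fun b hb => ?_
      rw [le_sub_iff_add_le, add_comm]
      exact hc ⟨a, ha, b, hb, rfl⟩
    have h2 : s ≤ c - t := hA.2 fun a ha => by
      rw [le_sub_iff_add_le, add_comm, ← le_sub_iff_add_le]
      exact h1 a ha
    rw [← sub_add_cancel c t]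
    exact add_le_add h2 le_rfl

end LUBHelpers

section LNorm
variable {E : Type*} [NormedAddCommGroup E] [Lattice E] [HasSolidNorm E] [IsOrderedAddMonoid E]

lemma kv_norm_sum (hL : ∀ x y : E, 0 ≤ x → 0 ≤ y → ‖x + y‖ = ‖x‖ + ‖y‖)
    {ι : Type*} (s : Finset ι) (f : ι → E) (h : ∀ i ∈ s, 0 ≤ f i) :
    ‖∑ i ∈ s, f i‖ = ∑ i ∈ s, ‖f i‖ := by
  classical
  induction s using Finset.cons_induction with
  | empty => simp
  | cons a s ha ih =>
    rw [Finset.sum_cons, Finset.sum_cons,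
      hL _ _ (h a (Finset.mem_cons_self a s))
        (kv_sum_nonneg _ _ fun i hi => h i (Finset.mem_cons_of_mem hi)),
      ih fun i hi => h i (Finset.mem_cons_of_mem hi)]

lemma kv_norm_posPart_le (a : E) : ‖a⁺‖ ≤ ‖a‖ := by
  apply norm_le_norm_of_abs_le_abs
  rw [abs_of_nonneg (posPart_nonneg a), ← posPart_add_negPart a]
  exact le_add_of_nonneg_right (negPart_nonneg a)

end LNorm
section KVSet
variable {E F : Type*}
    [NormedAddCommGroup E] [Lattice E] [HasSolidNorm E] [IsOrderedAddMonoid E] [NormedSpace ℝ E]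
    [NormedAddCommGroup F] [Lattice F] [HasSolidNorm F] [IsOrderedAddMonoid F] [NormedSpace ℝ F]

/-- The set of sums `∑ (T yᵢ)⁺` over finite positive decompositions `∑ yᵢ = x`. -/
def kvSet (T : E →L[ℝ] F) (x : E) : Set F :=
  {z | ∃ (n : ℕ) (y : Fin n → E), (∀ i, 0 ≤ y i) ∧ (∑ i, y i) = x ∧ z = ∑ i, (T (y i))⁺}

variable (T : E →L[ℝ] F)

lemma kv_mem_posPart {x : E} (hx : 0 ≤ x) : (T x)⁺ ∈ kvSet T x :=
  ⟨1, fun _ => x, fun _ => hx, by simp, by simp⟩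

lemma kv_nonneg_of_mem {x : E} {z : F} (hz : z ∈ kvSet T x) : 0 ≤ z := by
  obtain ⟨n, y, hy, hsum, rfl⟩ := hz
  exact kv_sum_nonneg _ _ fun i _ => posPart_nonneg _

lemma kv_bdd_of_mem (hL : ∀ x y : E, 0 ≤ x → 0 ≤ y → ‖x + y‖ = ‖x‖ + ‖y‖)
    {x : E} {z : F} (hz : z ∈ kvSet T x) : ‖z‖ ≤ ‖T‖ * ‖x‖ := by
  obtain ⟨n, y, hy, hsum, rfl⟩ := hz
  calc ‖∑ i, (T (y i))⁺‖ ≤ ∑ i, ‖(T (y i))⁺‖ := norm_sum_le _ _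
    _ ≤ ∑ i, ‖T‖ * ‖y i‖ :=
      Finset.sum_le_sum fun i _ => (kv_norm_posPart_le _).trans (T.le_opNorm _)
    _ = ‖T‖ * ∑ i, ‖y i‖ := by rw [Finset.mul_sum]
    _ = ‖T‖ * ‖x‖ := by
      rw [← kv_norm_sum hL _ _ fun i _ => hy i, hsum]

lemma kv_le_of_refine {n m : ℕ} (y : Fin n → E) (z : Fin n → Fin m → E)
    (hrow : ∀ i, (∑ j, z i j) = y i) :
    ∑ i, (T (y i))⁺ ≤ ∑ i, ∑ j, (T (z i j))⁺ := by
  refine Finset.sum_le_sum fun i _ => ?_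
  rw [← hrow i, map_sum]
  exact kv_sum_posPart_le _ _

lemma kv_directedOn (x : E) : DirectedOn (· ≤ ·) (kvSet T x) := by
  rintro z1 ⟨n, y, hy, hsum, rfl⟩ z2 ⟨m, y', hy', hsum', rfl⟩
  obtain ⟨z, hz, hrow, hcol⟩ := kv_rieszMatrix y y' hy hy' (by rw [hsum, hsum'])
  set e : Fin n × Fin m ≃ Fin (n * m) := finProdFinEquiv
  set w : Fin (n * m) → E := fun k => z (e.symm k).1 (e.symm k).2 with hw
  have hsum_w : (∑ k, w k) = x := by
    rw [hw]
    rw [Equiv.sum_comp e.symm (fun p : Fin n × Fin m => z p.1 p.2)]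
    rw [Fintype.sum_prod_type]
    rw [Finset.sum_congr rfl fun i _ => hrow i, hsum]
  have hmem : (∑ k, (T (w k))⁺) ∈ kvSet T x :=
    ⟨n * m, w, fun k => hz _ _, hsum_w, rfl⟩
  have hval : (∑ k, (T (w k))⁺) = ∑ p : Fin n × Fin m, (T (z p.1 p.2))⁺ :=
    Equiv.sum_comp e.symm fun p : Fin n × Fin m => (T (z p.1 p.2))⁺
  refine ⟨∑ k, (T (w k))⁺, hmem, ?_, ?_⟩
  · rw [hval, Fintype.sum_prod_type]
    exact kv_le_of_refine T y z hrow
  · rw [hval, Fintype.sum_prod_type_right]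
    refine Finset.sum_le_sum fun j _ => ?_
    rw [← hcol j, map_sum]
    exact kv_sum_posPart_le _ _

lemma kv_add_mem {u v : E} {a b : F} (ha : a ∈ kvSet T u) (hb : b ∈ kvSet T v) :
    a + b ∈ kvSet T (u + v) := by
  obtain ⟨n, y, hy, hsum, rfl⟩ := ha
  obtain ⟨m, y', hy', hsum', rfl⟩ := hb
  refine ⟨n + m, Fin.append y y', ?_, ?_, ?_⟩
  · refine Fin.addCases (fun i => ?_) (fun i => ?_)
    · rw [Fin.append_left]; exact hy i
    · rw [Fin.append_right]; exact hy' i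
  · rw [Fin.sum_univ_add]
    simp only [Fin.append_left, Fin.append_right]
    rw [hsum, hsum']
  · rw [Fin.sum_univ_add]
    simp only [Fin.append_left, Fin.append_right]

lemma kv_le_add_of_mem {u v : E} (hu : 0 ≤ u) (hv : 0 ≤ v) {z : F}
    (hz : z ∈ kvSet T (u + v)) :
    ∃ a ∈ kvSet T u, ∃ b ∈ kvSet T v, z ≤ a + b := by
  obtain ⟨n, y, hy, hsum, rfl⟩ := hz
  obtain ⟨a, b, ha, hb, hab, hsa, hsb⟩ := kv_rieszFin y hy u v hu hv hsum
  refine ⟨∑ i, (T (a i))⁺, ⟨n, a, ha, hsa, rfl⟩, ∑ i, (T (b i))⁺, ⟨n, b, hb, hsb, rfl⟩, ?_⟩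
  rw [← Finset.sum_add_distrib]
  refine Finset.sum_le_sum fun i _ => ?_
  rw [← hab i, map_add]
  exact kv_posPart_add_le _ _

end KVSet

lemma kv_norm_negPart_le {E : Type*} [NormedAddCommGroup E] [Lattice E] [HasSolidNorm E] [IsOrderedAddMonoid E] (a : E) : ‖a⁻‖ ≤ ‖a‖ := by
  rw [← posPart_neg]
  simpa using kv_norm_posPart_le (-a)

/-- **Kantorovich–Vulikh.** If `E` is an L-space and `F` is a Banach lattice with a
Levi norm, then every continuous linear operator `T : E → F` is regular. -/
theorem kantorovich_vulikh_regular
    {E F : Type*}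
    [NormedAddCommGroup E] [Lattice E] [IsOrderedAddMonoid E] [HasSolidNorm E] [NormedSpace ℝ E] [CompleteSpace E]
    [NormedAddCommGroup F] [Lattice F] [IsOrderedAddMonoid F] [HasSolidNorm F] [NormedSpace ℝ F] [CompleteSpace F]
    (hLspace : ∀ x y : E, 0 ≤ x → 0 ≤ y → ‖x + y‖ = ‖x‖ + ‖y‖)
    (hLevi : HasLeviNorm F)
    (T : E →L[ℝ] F) :
    IsRegularOp T := by
  classical
  have hex : ∀ x : E, ∃ s : F, 0 ≤ x → IsLUB (kvSet T x) s := by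
    intro x
    by_cases hx : 0 ≤ x
    · obtain ⟨s, hs⟩ := hLevi (kvSet T x) ⟨_, kv_mem_posPart T hx⟩
        (fun z hz => kv_nonneg_of_mem T hz) (kv_directedOn T x)
        ⟨‖T‖ * ‖x‖, fun z hz => kv_bdd_of_mem T hLspace hz⟩
      exact ⟨s, fun _ => hs⟩
    · exact ⟨0, fun h => absurd h hx⟩
  choose p hp using hex
  -- additivity on the positive cone
  have padd : ∀ u v : E, 0 ≤ u → 0 ≤ v → p (u + v) = p u + p v := by
    intro u v hu hv
    have huv : 0 ≤ u + v := add_nonneg hu hv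
    refine (hp (u + v) huv).unique ⟨?_, ?_⟩
    · intro z hz
      obtain ⟨a, haA, b, hbA, hzab⟩ := kv_le_add_of_mem T hu hv hz
      exact hzab.trans (add_le_add ((hp u hu).1 haA) ((hp v hv).1 hbA))
    · intro c hc
      refine (kv_isLUB_add (hp u hu) (hp v hv)).2 ?_
      rintro z ⟨a, haA, b, hbA, rfl⟩
      exact hc (kv_add_mem T haA hbA)
  have hpnn : ∀ x, 0 ≤ x → 0 ≤ p x := fun x hx =>
    (posPart_nonneg (T x)).trans ((hp x hx).1 (kv_mem_posPart T hx))
  have hTle : ∀ x, 0 ≤ x → T x ≤ p x := fun x hx =>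
    (le_posPart _).trans ((hp x hx).1 (kv_mem_posPart T hx))
  have hp0 : p 0 = 0 := by
    have h := padd 0 0 le_rfl le_rfl
    rw [add_zero] at h
    exact (left_eq_add.1 h)
  have pmono : ∀ u v : E, 0 ≤ u → u ≤ v → p u ≤ p v := by
    intro u v hu huv
    have h := padd u (v - u) hu (sub_nonneg.2 huv)
    rw [add_sub_cancel] at h
    rw [h]
    exact le_add_of_nonneg_right (hpnn _ (sub_nonneg.2 huv))
  have pnsmul : ∀ (k : ℕ) (x : E), 0 ≤ x → p (k • x) = k • p x := by
    intro k
    induction k with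
    | zero => intro x hx; simpa using hp0
    | succ k ih =>
      intro x hx
      rw [succ_nsmul, padd _ _ (nsmul_nonneg hx k) hx, ih x hx, succ_nsmul]
  -- dyadic homogeneity
  have pdy : ∀ (k m : ℕ) (x : E), 0 ≤ x →
      p (((k : ℝ) * ((2:ℝ) ^ m)⁻¹) • x) = ((k : ℝ) * ((2:ℝ) ^ m)⁻¹) • p x := by
    intro k m x hx
    set w : E := ((2:ℝ) ^ m)⁻¹ • x with hwdef
    have hw : 0 ≤ w := kv_dyadic_nonneg m x hx
    have h2m : ((2:ℝ) ^ m) ≠ 0 := by positivity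
    have hxw : x = (2 ^ m : ℕ) • w := by
      rw [hwdef, ← Nat.cast_smul_eq_nsmul ℝ, smul_smul]
      push_cast
      rw [mul_inv_cancel₀ h2m, one_smul]
    have hpw : p x = (2 ^ m : ℕ) • p w := by
      conv_lhs => rw [hxw]
      exact pnsmul _ _ hw
    have hwp : p w = ((2:ℝ) ^ m)⁻¹ • p x := by
      rw [hpw, ← Nat.cast_smul_eq_nsmul ℝ, smul_smul]
      push_cast
      rw [inv_mul_cancel₀ h2m, one_smul]
    calc p (((k : ℝ) * ((2:ℝ) ^ m)⁻¹) • x) = p ((k : ℕ) • w) := by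
          rw [← Nat.cast_smul_eq_nsmul ℝ, hwdef, smul_smul]
      _ = (k : ℕ) • p w := pnsmul _ _ hw
      _ = ((k : ℝ) * ((2:ℝ) ^ m)⁻¹) • p x := by
          rw [hwp, ← Nat.cast_smul_eq_nsmul ℝ, smul_smul]
  -- real nonneg homogeneity
  have psmul : ∀ (c : ℝ), 0 ≤ c → ∀ x : E, 0 ≤ x → p (c • x) = c • p x := by
    intro c hc x hx
    have key : ∀ m : ℕ, |p (c • x) - c • p x| ≤ ((2:ℝ) ^ m)⁻¹ • p x := by
      intro m
      set q : ℝ := (⌊c * 2 ^ m⌋₊ : ℝ) * ((2:ℝ) ^ m)⁻¹ with hqdef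
      set q' : ℝ := ((⌊c * 2 ^ m⌋₊ + 1 : ℕ) : ℝ) * ((2:ℝ) ^ m)⁻¹ with hq'def
      have h2 : (0:ℝ) < 2 ^ m := by positivity
      have hi : (2:ℝ) ^ m * ((2:ℝ) ^ m)⁻¹ = 1 := mul_inv_cancel₀ (ne_of_gt h2)
      have hq0 : 0 ≤ q := by positivity
      have hqc : q ≤ c := by
        rw [hqdef, mul_inv_le_iff₀ h2]
        exact Nat.floor_le (by positivity)
      have hq' : q' = q + ((2:ℝ) ^ m)⁻¹ := by
        rw [hq'def, hqdef]; push_cast; ring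
      have hcq' : c ≤ q' := by
        have h3 := Nat.lt_floor_add_one (c * 2 ^ m)
        rw [hq', hqdef]
        nlinarith [h3, hi, h2]
      -- lower bound
      have h5 : q • p x ≤ p (c • x) := by
        have h3 : c • x = q • x + (c - q) • x := by rw [← add_smul]; ring_nf
        have h4 : p (c • x) = p (q • x) + p ((c - q) • x) := by
          rw [h3]
          exact padd _ _ (kv_smul_nonneg hq0 hx) (kv_smul_nonneg (sub_nonneg.2 hqc) hx)
        rw [h4, pdy _ m x hx]
        exact le_add_of_nonneg_right (hpnn _ (kv_smul_nonneg (sub_nonneg.2 hqc) hx))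
      -- upper bound
      have h6 : p (c • x) ≤ q' • p x := by
        have h3 : q' • x = c • x + (q' - c) • x := by rw [← add_smul]; ring_nf
        have h4 : p (q' • x) = p (c • x) + p ((q' - c) • x) := by
          rw [h3]
          exact padd _ _ (kv_smul_nonneg hc hx) (kv_smul_nonneg (sub_nonneg.2 hcq') hx)
        have h7 : p (q' • x) = q' • p x := pdy _ m x hx
        rw [← h7, h4]
        exact le_add_of_nonneg_right (hpnn _ (kv_smul_nonneg (sub_nonneg.2 hcq') hx))
      rw [abs_le']
      constructor
      · have h8 : p (c • x) - c • p x ≤ (q' - c) • p x := by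
          rw [sub_smul]
          exact sub_le_sub_right h6 _
        have h9 : (q' - c) • p x ≤ ((2:ℝ) ^ m)⁻¹ • p x := by
          refine kv_smul_le_smul ?_ (hpnn x hx)
          rw [hq']
          linarith [hqc]
        exact h8.trans h9
      · rw [neg_sub]
        have h8 : c • p x - p (c • x) ≤ (c - q) • p x := by
          rw [sub_smul]
          exact sub_le_sub_left h5 _
        have h9 : (c - q) • p x ≤ ((2:ℝ) ^ m)⁻¹ • p x := by
          refine kv_smul_le_smul ?_ (hpnn x hx)
          rw [hq'] at hcq'
          linarith
        exact h8.trans h9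
    by_contra hne
    have hne' : p (c • x) - c • p x ≠ 0 := sub_ne_zero.2 hne
    have hpos : 0 < ‖p (c • x) - c • p x‖ := norm_pos_iff.2 hne'
    obtain ⟨m, hm⟩ := pow_unbounded_of_one_lt (‖p x‖ / ‖p (c • x) - c • p x‖) (one_lt_two (α := ℝ))
    have hDn : ‖p (c • x) - c • p x‖ ≤ ((2:ℝ) ^ m)⁻¹ * ‖p x‖ := by
      have h1 := key m
      have habs : |p (c • x) - c • p x| ≤ |((2:ℝ) ^ m)⁻¹ • p x| := by
        rwa [abs_of_nonneg (kv_smul_nonneg (by positivity) (hpnn x hx))]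
      calc ‖p (c • x) - c • p x‖ ≤ ‖((2:ℝ) ^ m)⁻¹ • p x‖ := norm_le_norm_of_abs_le_abs habs
        _ = ((2:ℝ) ^ m)⁻¹ * ‖p x‖ := by
            rw [norm_smul, Real.norm_eq_abs, abs_of_pos (by positivity)]
    have h2 : (0:ℝ) < 2 ^ m := by positivity
    rw [div_lt_iff₀ hpos] at hm
    have := mul_le_mul_of_nonneg_left hDn (le_of_lt h2)
    rw [← mul_assoc, mul_inv_cancel₀ (ne_of_gt h2), one_mul] at this
    nlinarith
  -- build the linear map
  set f : E → F := fun x => p x⁺ - p x⁻ with hf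
  have hkey : ∀ a b u v : E, 0 ≤ a → 0 ≤ b → 0 ≤ u → 0 ≤ v → a - b = u - v →
      p a - p b = p u - p v := by
    intro a b u v ha hb hu hv h
    rw [sub_eq_sub_iff_add_eq_add] at h ⊢
    rw [← padd _ _ ha hv, ← padd _ _ hu hb, h]
  have fadd : ∀ x y, f (x + y) = f x + f y := by
    intro x y
    have hxy : (x + y)⁺ - (x + y)⁻ = (x⁺ + y⁺) - (x⁻ + y⁻) := by
      have hr : (x⁺ + y⁺) - (x⁻ + y⁻) = (x⁺ - x⁻) + (y⁺ - y⁻) := by abel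
      rw [posPart_sub_negPart, hr, posPart_sub_negPart, posPart_sub_negPart]
    have h3 := hkey (x + y)⁺ (x + y)⁻ (x⁺ + y⁺) (x⁻ + y⁻) (posPart_nonneg _)
      (negPart_nonneg _) (add_nonneg (posPart_nonneg _) (posPart_nonneg _))
      (add_nonneg (negPart_nonneg _) (negPart_nonneg _)) hxy
    show p (x + y)⁺ - p (x + y)⁻ = (p x⁺ - p x⁻) + (p y⁺ - p y⁻)
    rw [h3, padd _ _ (posPart_nonneg _) (posPart_nonneg _),
      padd _ _ (negPart_nonneg _) (negPart_nonneg _)]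
    abel
  have fsmul : ∀ (c : ℝ) (x : E), f (c • x) = c • f x := by
    intro c x
    rcases le_or_gt 0 c with hc | hc
    · show p (c • x)⁺ - p (c • x)⁻ = c • (p x⁺ - p x⁻)
      rw [kv_posPart_smul hc, kv_negPart_smul hc, psmul c hc _ (posPart_nonneg x),
        psmul c hc _ (negPart_nonneg x), smul_sub]
    · have hc' : c ≤ 0 := hc.le
      show p (c • x)⁺ - p (c • x)⁻ = c • (p x⁺ - p x⁻)
      rw [kv_posPart_smul_neg hc', kv_negPart_smul_neg hc',
        psmul _ (neg_nonneg.2 hc') _ (negPart_nonneg x),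
        psmul _ (neg_nonneg.2 hc') _ (posPart_nonneg x), neg_smul, neg_smul, smul_sub]
      abel
  -- boundedness on the positive cone
  have hbd : ∃ C : ℝ, ∀ x : E, 0 ≤ x → ‖p x‖ ≤ C * ‖x‖ := by
    by_contra hcon
    push_neg at hcon
    choose g hg1 hg2 using fun n : ℕ => hcon ((n : ℝ) * 2 ^ n)
    have hgne : ∀ n, g n ≠ 0 := by
      intro n h0
      have h1 := hg2 n
      rw [h0, hp0] at h1
      simp at h1
    set u : ℕ → E := fun n => ((2 ^ n : ℝ) * ‖g n‖)⁻¹ • g n with hu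
    have hupos : ∀ n, 0 ≤ u n := fun n => kv_smul_nonneg (by positivity) (hg1 n)
    have hgn : ∀ n, (0:ℝ) < ‖g n‖ := fun n => norm_pos_iff.2 (hgne n)
    have hinvpos : ∀ n : ℕ, (0:ℝ) < ((2 ^ n : ℝ) * ‖g n‖)⁻¹ :=
      fun n => inv_pos.2 (mul_pos (by positivity) (hgn n))
    have hunorm : ∀ n, ‖u n‖ = (2 ^ n : ℝ)⁻¹ := by
      intro n
      have h1 : ‖u n‖ = ‖((2 ^ n : ℝ) * ‖g n‖)⁻¹‖ * ‖g n‖ := norm_smul _ _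
      rw [h1, Real.norm_eq_abs, abs_of_pos (hinvpos n)]
      have h2 := hgn n
      have h3 : (0:ℝ) < 2 ^ n := by positivity
      field_simp
    have hpu : ∀ n : ℕ, (n : ℝ) < ‖p (u n)‖ := by
      intro n
      have h4 : p (u n) = ((2 ^ n : ℝ) * ‖g n‖)⁻¹ • p (g n) :=
        psmul _ (le_of_lt (hinvpos n)) _ (hg1 n)
      rw [h4, norm_smul, Real.norm_eq_abs, abs_of_pos (hinvpos n)]
      have h1 := hgn n
      have h2 := hg2 n
      have h3 : (0:ℝ) < 2 ^ n := by positivity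
      calc (n:ℝ) = ((2 ^ n : ℝ) * ‖g n‖)⁻¹ * ((n : ℝ) * 2 ^ n * ‖g n‖) := by
            field_simp
        _ < ((2 ^ n : ℝ) * ‖g n‖)⁻¹ * ‖p (g n)‖ :=
            mul_lt_mul_of_pos_left h2 (hinvpos n)
    have hsummable : Summable u := by
      apply Summable.of_norm
      have : (fun n => ‖u n‖) = fun n : ℕ => ((2:ℝ)⁻¹) ^ n := by
        funext n; rw [hunorm n, inv_pow]
      rw [this]
      exact summable_geometric_of_lt_one (by norm_num) (by norm_num)
    set U : E := ∑' n, u n with hU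
    have hle : ∀ n, u n ≤ U := fun n => Summable.le_tsum hsummable n fun j _ => hupos j
    have hUnn : 0 ≤ U := tsum_nonneg hupos
    obtain ⟨n, hn⟩ := exists_nat_gt ‖p U‖
    have h1 : p (u n) ≤ p U := pmono _ _ (hupos n) (hle n)
    have h2 : ‖p (u n)‖ ≤ ‖p U‖ := by
      apply norm_le_norm_of_abs_le_abs
      rwa [abs_of_nonneg (hpnn _ (hupos n)), abs_of_nonneg (hpnn _ hUnn)]
    exact absurd ((hpu n).trans_le h2) (not_lt.2 hn.le)
  obtain ⟨C, hC⟩ := hbd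
  have hC' : ∀ x : E, ‖f x‖ ≤ max C 0 * 2 * ‖x‖ := by
    intro x
    have h1 : ‖f x‖ ≤ ‖p x⁺‖ + ‖p x⁻‖ := norm_sub_le _ _
    have h2 : ‖p x⁺‖ ≤ max C 0 * ‖x‖ :=
      calc ‖p x⁺‖ ≤ C * ‖x⁺‖ := hC _ (posPart_nonneg x)
        _ ≤ max C 0 * ‖x⁺‖ := mul_le_mul_of_nonneg_right (le_max_left _ _) (norm_nonneg _)
        _ ≤ max C 0 * ‖x‖ := mul_le_mul_of_nonneg_left (kv_norm_posPart_le x) (le_max_right _ _)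
    have h3 : ‖p x⁻‖ ≤ max C 0 * ‖x‖ :=
      calc ‖p x⁻‖ ≤ C * ‖x⁻‖ := hC _ (negPart_nonneg x)
        _ ≤ max C 0 * ‖x⁻‖ := mul_le_mul_of_nonneg_right (le_max_left _ _) (norm_nonneg _)
        _ ≤ max C 0 * ‖x‖ := mul_le_mul_of_nonneg_left (kv_norm_negPart_le x) (le_max_right _ _)
    linarith
  set P₀ : E →ₗ[ℝ] F :=
    { toFun := f, map_add' := fadd, map_smul' := fsmul } with hP₀
  set P : E →L[ℝ] F := LinearMap.mkContinuous P₀ (max C 0 * 2) hC' with hP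
  have hfx : ∀ x : E, 0 ≤ x → P x = p x := by
    intro x hx
    show f x = p x
    rw [hf]
    simp only
    rw [posPart_of_nonneg hx, negPart_of_nonneg hx, hp0, sub_zero]
  refine ⟨P, P - T, ?_, ?_, ?_⟩
  · intro x hx
    rw [hfx x hx]
    exact hpnn x hx
  · intro x hx
    rw [ContinuousLinearMap.sub_apply, sub_nonneg, hfx x hx]
    exact hTle x hx
  · rw [sub_sub_cancel]
end

section
/- A Dedekind complete vector lattice E is universally complete if and only if every laterally increasing subset of the positive cone E₊ has a supremum in E. -/
set_option linter.unusedSectionVars false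

section Aux
variable {E : Type*} [Lattice E] [AddCommGroup E]
  [CovariantClass E E (· + ·) (· ≤ ·)]

/-- subadditivity of inf over sums of nonnegatives -/
lemma my_inf_add_le {x y z : E} (hx : 0 ≤ x) (hy : 0 ≤ y) (hz : 0 ≤ z) :
    x ⊓ (y + z) ≤ x ⊓ y + x ⊓ z := by
  have h1 : x ⊓ (y + z) - x ⊓ y = (x ⊓ (y + z) - x) ⊔ (x ⊓ (y + z) - y) := by
    rw [sub_inf]
  have h2 : x ⊓ (y + z) - x ≤ x ⊓ z := by
    have : x ⊓ (y + z) - x ≤ 0 := sub_nonpos.2 inf_le_left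
    exact this.trans (le_inf hx hz)
  have h3 : x ⊓ (y + z) - y ≤ x ⊓ z := by
    refine le_inf ?_ ?_
    · calc x ⊓ (y + z) - y ≤ x - y := sub_le_sub_right inf_le_left y
      _ ≤ x := sub_le_self x hy
    · calc x ⊓ (y + z) - y ≤ (y + z) - y := sub_le_sub_right inf_le_right y
      _ = z := add_sub_cancel_left y z
  have h4 : x ⊓ (y + z) - x ⊓ y ≤ x ⊓ z := by rw [h1]; exact sup_le h2 h3
  exact (sub_le_iff_le_add.1 h4).trans_eq (add_comm _ _)

lemma my_sum_nonneg {ι : Type*} (F : Finset ι) (f : ι → E)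
    (hf : ∀ i ∈ F, 0 ≤ f i) : 0 ≤ ∑ i ∈ F, f i := by
  classical
  induction F using Finset.induction_on with
  | empty => simp
  | @insert a Fs hnot ih =>
    rw [Finset.sum_insert hnot]
    exact add_nonneg (hf a (Finset.mem_insert_self a Fs))
      (ih fun i hi => hf i (Finset.mem_insert_of_mem hi))

lemma my_inf_sum_le {x : E} (hx : 0 ≤ x) {ι : Type*} (F : Finset ι) (f : ι → E)
    (hf : ∀ i ∈ F, 0 ≤ f i) : x ⊓ (∑ i ∈ F, f i) ≤ ∑ i ∈ F, x ⊓ f i := by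
  classical
  induction F using Finset.induction_on with
  | empty => simp
  | @insert a Fs hnot ih =>
    rw [Finset.sum_insert hnot, Finset.sum_insert hnot]
    have hsum0 : (0:E) ≤ ∑ i ∈ Fs, f i :=
      my_sum_nonneg Fs f fun i hi => hf i (Finset.mem_insert_of_mem hi)
    have h1 : x ⊓ (f a + ∑ i ∈ Fs, f i) ≤ x ⊓ f a + x ⊓ (∑ i ∈ Fs, f i) :=
      my_inf_add_le hx (hf a (Finset.mem_insert_self a Fs)) hsum0
    exact h1.trans (add_le_add_right (ih fun i hi => hf i (Finset.mem_insert_of_mem hi)) _)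

/-- a LUB of a set of elements disjoint from d is disjoint from d -/
lemma my_lub_disjoint {S : Set E} {s d : E} (hS : S.Nonempty) (hlub : IsLUB S s)
    (hpos : ∀ x ∈ S, 0 ≤ x) (hd : 0 ≤ d) (hdisj : ∀ x ∈ S, x ⊓ d = 0) : s ⊓ d = 0 := by
  obtain ⟨x₀, hx₀⟩ := hS
  have hs0 : 0 ≤ s := (hpos x₀ hx₀).trans (hlub.1 hx₀)
  set t := s ⊓ d with ht
  have ht0 : 0 ≤ t := le_inf hs0 hd
  have key : ∀ x ∈ S, x ≤ s - t := by
    intro x hx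
    have hxt : x ⊓ t = 0 := le_antisymm (by
      calc x ⊓ t ≤ x ⊓ d := inf_le_inf_left x inf_le_right
        _ = 0 := hdisj x hx) (le_inf (hpos x hx) ht0)
    have hsum : x + t = x ⊔ t := by
      have h5 := inf_add_sup x t
      rw [hxt, zero_add] at h5
      exact h5.symm
    have h6 : x + t ≤ s := by
      rw [hsum]; exact sup_le (hlub.1 hx) inf_le_left
    rw [le_sub_iff_add_le]
    exact h6
  have h7 : s ≤ s - t := hlub.2 key
  rw [le_sub_iff_add_le, add_comm] at h7
  exact le_antisymm ((add_le_iff_nonpos_left).1 h7) ht0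

lemma my_disj_add_eq_sup {x y : E} (h : x ⊓ y = 0) : x + y = x ⊔ y := by
  have h5 := inf_add_sup x y
  rw [h, zero_add] at h5
  exact h5.symm

end Aux

section Aux2
variable {E : Type*} [Lattice E] [AddCommGroup E] [Module ℝ E]
  [CovariantClass E E (· + ·) (· ≤ ·)] [PosSMulMono ℝ E]

lemma my_smul_inf {c : ℝ} (hc : 0 < c) (x y : E) : c • (x ⊓ y) = (c • x) ⊓ (c • y) := by
  refine le_antisymm (le_inf (smul_le_smul_of_nonneg_left inf_le_left hc.le)
    (smul_le_smul_of_nonneg_left inf_le_right hc.le)) ?_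
  have h1 : c⁻¹ • ((c • x) ⊓ (c • y)) ≤ x ⊓ y := by
    refine le_inf ?_ ?_
    · have := smul_le_smul_of_nonneg_left (inf_le_left : (c • x) ⊓ (c • y) ≤ c • x)
        (inv_nonneg.2 hc.le)
      rwa [inv_smul_smul₀ hc.ne'] at this
    · have := smul_le_smul_of_nonneg_left (inf_le_right : (c • x) ⊓ (c • y) ≤ c • y)
        (inv_nonneg.2 hc.le)
      rwa [inv_smul_smul₀ hc.ne'] at this
  have := smul_le_smul_of_nonneg_left h1 hc.le
  rwa [smul_inv_smul₀ hc.ne'] at this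

lemma my_le_nat_smul {d : E} (hd : 0 ≤ d) {n : ℕ} (hn : 1 ≤ n) : d ≤ (n : ℝ) • d := by
  have h : (0:ℝ) ≤ (n : ℝ) - 1 := by
    have : (1:ℝ) ≤ n := by exact_mod_cast hn
    linarith
  have h2 := smul_nonneg h hd
  rw [sub_smul, one_smul] at h2
  exact sub_nonneg.1 h2

/-- Archimedean property from Dedekind completeness -/
lemma my_arch (hDC : ∀ A : Set E, A.Nonempty → BddAbove A → ∃ s : E, IsLUB A s)
    {w a : E} (hw : 0 ≤ w) (h : ∀ n : ℕ, (n : ℝ) • w ≤ a) : w = 0 := by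
  obtain ⟨σ, hσ⟩ := hDC (Set.range fun n : ℕ => (n : ℝ) • w) ⟨0, 0, by simp⟩
    ⟨a, by rintro x ⟨n, rfl⟩; exact h n⟩
  have key : ∀ n : ℕ, (n : ℝ) • w ≤ σ - w := by
    intro n
    have h1 : ((n+1 : ℕ) : ℝ) • w ≤ σ := hσ.1 ⟨n+1, rfl⟩
    have h2 : ((n+1 : ℕ) : ℝ) • w = (n : ℝ) • w + w := by
      push_cast
      rw [add_smul, one_smul]
    rw [h2] at h1
    exact le_sub_iff_add_le.2 h1
  have h7 : σ ≤ σ - w := hσ.2 (by rintro x ⟨n, rfl⟩; exact key n)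
  rw [le_sub_iff_add_le, add_comm] at h7
  exact le_antisymm ((add_le_iff_nonpos_left).1 h7) hw

end Aux2

lemma my_nat_smul_disj {E : Type*} [Lattice E] [AddCommGroup E] [Module ℝ E]
    [CovariantClass E E (· + ·) (· ≤ ·)] [PosSMulMono ℝ E]
    {x d : E} (hx : 0 ≤ x) (hd : 0 ≤ d) (hxd : x ⊓ d = 0) (n : ℕ) :
    ((n : ℝ) • x) ⊓ d = 0 := by
  cases n with
  | zero => simp only [Nat.cast_zero, zero_smul]; exact inf_eq_left.2 hd
  | succ m =>
    have hn : (0:ℝ) < ((m+1 : ℕ) : ℝ) := by positivity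
    refine le_antisymm ?_ (le_inf (smul_nonneg hn.le hx) hd)
    calc ((m+1 : ℕ):ℝ) • x ⊓ d ≤ ((m+1 : ℕ):ℝ) • x ⊓ ((m+1 : ℕ):ℝ) • d :=
        inf_le_inf_left _ (my_le_nat_smul hd (Nat.le_add_left 1 m))
      _ = ((m+1 : ℕ):ℝ) • (x ⊓ d) := (my_smul_inf hn x d).symm
      _ = 0 := by rw [hxd, smul_zero]


theorem universallyComplete_iff_laterallyIncreasing_sup
    {E : Type*} [Lattice E] [AddCommGroup E] [Module ℝ E]
    [CovariantClass E E (· + ·) (· ≤ ·)] [PosSMulMono ℝ E]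
    (hDC : ∀ A : Set E, A.Nonempty → BddAbove A → ∃ s : E, IsLUB A s) :
    (∀ A : Set E, A.Nonempty → (∀ x ∈ A, 0 ≤ x) →
        A.Pairwise (fun a b => a ⊓ b = 0) → ∃ s : E, IsLUB A s) ↔
      (∀ A : Set E, A.Nonempty → (∀ x ∈ A, 0 ≤ x) → DirectedOn (· ≤ ·) A →
        (∀ a ∈ A, ∀ b ∈ A, b ≤ a → (a - b) ⊓ b = 0) → ∃ s : E, IsLUB A s) := by
  constructor
  · -- disjoint sups ⇒ lateral sups
    intro h A hA hApos hAdir hAlat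
    classical
    obtain ⟨a₀, ha₀⟩ := hA
    set P : Set (Set E) := {D | (∀ d ∈ D, 0 ≤ d ∧ ∃ a ∈ A, d ≤ a ∧ d ⊓ (a - d) = 0) ∧
      D.Pairwise (fun x y => x ⊓ y = 0)} with hPdef
    obtain ⟨D, hDmax⟩ := zorn_subset P (by
      intro c hc hchain
      refine ⟨⋃₀ c, ⟨?_, ?_⟩, fun t ht => Set.subset_sUnion_of_mem ht⟩
      · rintro d ⟨S, hS, hdS⟩
        exact (hc hS).1 d hdS
      · rintro x ⟨S, hS, hxS⟩ y ⟨T, hT, hyT⟩ hxy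
        rcases hchain.total hS hT with hST | hTS
        · exact (hc hT).2 (hST hxS) hyT hxy
        · exact (hc hS).2 hxS (hTS hyT) hxy)
    have hDne : D.Nonempty := by
      by_contra hne
      rw [Set.not_nonempty_iff_eq_empty] at hne
      have hmem : {a₀} ∈ P := by
        constructor
        · intro d hd
          rw [Set.mem_singleton_iff] at hd
          subst hd
          exact ⟨hApos d ha₀, d, ha₀, le_refl _,
            by rw [sub_self]; exact inf_eq_right.2 (hApos d ha₀)⟩
        · exact Set.pairwise_singleton _ _
      have hsub := hDmax.2 hmem (by rw [hne]; exact Set.empty_subset _)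
      rw [hne] at hsub
      exact hsub (Set.mem_singleton a₀)
    have hDpos : ∀ d ∈ D, 0 ≤ d := fun d hd => (hDmax.1.1 d hd).1
    obtain ⟨s, hs⟩ := h D hDne hDpos hDmax.1.2
    obtain ⟨d₀, hd₀⟩ := hDne
    have hs0 : 0 ≤ s := (hDpos d₀ hd₀).trans (hs.1 hd₀)
    have claim : ∀ a ∈ A, a ≤ s := by
      intro a ha
      by_contra hnas
      set p : E := (a - s) ⊔ 0 with hpdef
      have hp0 : 0 ≤ p := le_sup_right
      have hpa : p ≤ a := sup_le (sub_le_self a hs0) (hApos a ha)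
      have hpne : p ≠ 0 := by
        intro hp
        exact hnas (sub_nonpos.1 (le_sup_left.trans_eq hp))
      -- p is disjoint from every element of D
      have hpd : ∀ d ∈ D, p ⊓ d = 0 := by
        intro d hd
        obtain ⟨hd0, a', ha', hda', hcomp⟩ := hDmax.1.1 d hd
        obtain ⟨c, hc, hac, ha'c⟩ := hAdir a ha a' ha'
        have hlat := hAlat c hc a' ha' ha'c
        have h1 : d ⊓ (c - a') = 0 := by
          refine le_antisymm ?_ (le_inf hd0 (sub_nonneg.2 ha'c))
          calc d ⊓ (c - a') ≤ a' ⊓ (c - a') := inf_le_inf_right _ hda'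
            _ = 0 := by rw [inf_comm]; exact hlat
        have hdc : d ⊓ (c - d) = 0 := by
          refine le_antisymm ?_ (le_inf hd0 (sub_nonneg.2 (hda'.trans ha'c)))
          have heq : c - d = (c - a') + (a' - d) := by abel
          rw [heq]
          calc d ⊓ ((c - a') + (a' - d)) ≤ d ⊓ (c - a') + d ⊓ (a' - d) :=
              my_inf_add_le hd0 (sub_nonneg.2 ha'c) (sub_nonneg.2 hda')
            _ = 0 := by rw [h1, hcomp, add_zero]
        have hds : d ≤ s := hs.1 hd
        have hple : p ≤ c - d :=
          sup_le (sub_le_sub hac hds) (sub_nonneg.2 (hda'.trans ha'c))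
        refine le_antisymm ?_ (le_inf hp0 hd0)
        calc p ⊓ d ≤ (c - d) ⊓ d := inf_le_inf_right d hple
          _ = 0 := by rw [inf_comm]; exact hdc
      -- the "band projection" u of a onto the band generated by p
      set T : Set E := Set.range (fun n : ℕ => a ⊓ ((n:ℝ) • p)) with hTdef
      have hTne : T.Nonempty := ⟨_, ⟨0, rfl⟩⟩
      have hTpos : ∀ x ∈ T, 0 ≤ x := by
        rintro x ⟨n, rfl⟩
        exact le_inf (hApos a ha) (smul_nonneg (Nat.cast_nonneg n) hp0)
      obtain ⟨u, hu⟩ := hDC T hTne ⟨a, by rintro x ⟨n, rfl⟩; exact inf_le_left⟩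
      have hpu : p ≤ u := by
        have h1 : a ⊓ (((1:ℕ):ℝ) • p) ∈ T := ⟨1, rfl⟩
        have h2 : a ⊓ (((1:ℕ):ℝ) • p) = p := by
          rw [Nat.cast_one, one_smul]
          exact inf_eq_right.2 hpa
        exact h2 ▸ hu.1 h1
      have hu0 : 0 ≤ u := hp0.trans hpu
      have hua : u ≤ a := hu.2 (by rintro x ⟨n, rfl⟩; exact inf_le_left)
      -- u is disjoint from every element of D
      have hud : ∀ d ∈ D, u ⊓ d = 0 := by
        intro d hd
        refine my_lub_disjoint hTne hu hTpos (hDpos d hd) ?_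
        rintro x ⟨n, rfl⟩
        refine le_antisymm ?_ (le_inf (hTpos _ ⟨n, rfl⟩) (hDpos d hd))
        calc a ⊓ ((n:ℝ) • p) ⊓ d ≤ ((n:ℝ) • p) ⊓ d :=
            inf_le_inf_right d inf_le_right
          _ = 0 := my_nat_smul_disj hp0 (hDpos d hd) (hpd d hd) n
      -- (a - u) is disjoint from p (Archimedean argument)
      have hw : (a - u) ⊓ p = 0 := by
        refine my_arch (a := a) hDC (le_inf (sub_nonneg.2 hua) hp0) ?_
        intro n
        cases n with
        | zero =>
          rw [Nat.cast_zero, zero_smul]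
          exact hApos a ha
        | succ m =>
          set n : ℕ := m + 1 with hndef
          have hn : (0:ℝ) < (n : ℝ) := by positivity
          set q : E := a - a ⊓ ((n:ℝ) • p) with hqdef
          have hq0 : 0 ≤ q := sub_nonneg.2 inf_le_left
          have hvq : a - u ≤ q := sub_le_sub_left (hu.1 ⟨n, rfl⟩) a
          have hwqp : (a - u) ⊓ p ≤ q ⊓ p := inf_le_inf_right p hvq
          have hqalt : q = (a - (n:ℝ) • p) ⊔ 0 := by
            rw [hqdef, sub_inf, sub_self, sup_comm]
          set r : E := ((n:ℝ) • p - a) ⊔ 0 with hrdef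
          have hr0 : 0 ≤ r := le_sup_right
          have hqr : q ⊓ r = 0 := by
            have hpp := posPart_inf_negPart_eq_zero (a - (n:ℝ) • p)
            rw [posPart_def, negPart_def, neg_sub] at hpp
            rw [hqalt, hrdef]
            exact hpp
          have hnple : (n:ℝ) • p ≤ r + a := by
            have h3 : (n:ℝ) • p - a ≤ r := le_sup_left
            exact sub_le_iff_le_add.1 h3
          have main : (n:ℝ) • (q ⊓ p) ≤ a := by
            rw [my_smul_inf hn]
            calc ((n:ℝ) • q) ⊓ ((n:ℝ) • p) ≤ ((n:ℝ) • q) ⊓ (r + a) :=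
                inf_le_inf_left _ hnple
              _ ≤ ((n:ℝ) • q) ⊓ r + ((n:ℝ) • q) ⊓ a :=
                my_inf_add_le (smul_nonneg hn.le hq0) hr0 (hApos a ha)
              _ ≤ 0 + a := add_le_add (le_of_eq (my_nat_smul_disj hq0 hr0 hqr n))
                inf_le_right
              _ = a := zero_add a
          calc (n:ℝ) • ((a - u) ⊓ p) ≤ (n:ℝ) • (q ⊓ p) :=
              smul_le_smul_of_nonneg_left hwqp hn.le
            _ ≤ a := main
      -- u is a component of a
      have hvu : u ⊓ (a - u) = 0 := by
        refine my_lub_disjoint hTne hu hTpos (sub_nonneg.2 hua) ?_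
        rintro x ⟨n, rfl⟩
        refine le_antisymm ?_ (le_inf (hTpos _ ⟨n, rfl⟩) (sub_nonneg.2 hua))
        calc a ⊓ ((n:ℝ) • p) ⊓ (a - u) ≤ ((n:ℝ) • p) ⊓ (a - u) :=
            inf_le_inf_right _ inf_le_right
          _ = 0 := my_nat_smul_disj hp0 (sub_nonneg.2 hua)
              (by rw [inf_comm]; exact hw) n
      -- contradiction with maximality
      have hD'P : insert u D ∈ P := by
        constructor
        · intro d hd
          rcases Set.mem_insert_iff.1 hd with rfl | hdD
          · exact ⟨hu0, a, ha, hua, hvu⟩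
          · exact hDmax.1.1 d hdD
        · rw [Set.pairwise_insert]
          refine ⟨hDmax.1.2, ?_⟩
          intro d hd _
          exact ⟨hud d hd, by rw [inf_comm]; exact hud d hd⟩
      have hsub := hDmax.2 hD'P (Set.subset_insert u D)
      have huD : u ∈ D := hsub (Set.mem_insert u D)
      have hu00 : u ⊓ u = 0 := hud u huD
      rw [inf_idem] at hu00
      exact hpne (le_antisymm (hu00 ▸ hpu) hp0)
    exact hDC A ⟨a₀, ha₀⟩ ⟨s, fun a ha => claim a ha⟩
  · -- lateral sups ⇒ disjoint sups
    intro h A hA hApos hApair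
    classical
    obtain ⟨a₀, ha₀⟩ := hA
    set B : Set E := {x | ∃ F : Finset E, ↑F ⊆ A ∧ F.Nonempty ∧ x = ∑ y ∈ F, y} with hBdef
    have hsubpos : ∀ F : Finset E, ↑F ⊆ A → (0:E) ≤ ∑ y ∈ F, y := fun F hF =>
      my_sum_nonneg F id (fun i hi => hApos i (hF (Finset.mem_coe.2 hi)))
    have hdisjsum : ∀ g ∈ A, ∀ F : Finset E, ↑F ⊆ A → g ∉ F →
        g ⊓ (∑ y ∈ F, y) = 0 := by
      intro g hg F hF hgF
      refine le_antisymm ?_ (le_inf (hApos g hg) (hsubpos F hF))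
      calc g ⊓ ∑ y ∈ F, y ≤ ∑ y ∈ F, g ⊓ y :=
            my_inf_sum_le (hApos g hg) F id (fun i hi => hApos i (hF (Finset.mem_coe.2 hi)))
        _ = 0 := Finset.sum_eq_zero (fun y hy =>
            hApair hg (hF (Finset.mem_coe.2 hy)) (fun hgy => hgF (by rw [hgy]; exact hy)))
    have key0 : ∀ F G : Finset E, ↑F ⊆ A → ↑G ⊆ A → (∑ y ∈ G, y) ≤ ∑ y ∈ F, y →
        ((∑ y ∈ F, y) - ∑ y ∈ G, y) ⊓ (∑ y ∈ G, y) = 0 := by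
      intro F G hF hG hle
      have hzero : ∀ g ∈ G, g ∉ F → g = 0 := by
        intro g hgG hgF
        have h1 : g ≤ ∑ y ∈ G, y := by
          have h5 := Finset.sum_sdiff (f := id) (Finset.singleton_subset_iff.2 hgG)
          simp only [id] at h5
          rw [← h5, Finset.sum_singleton]
          exact le_add_of_nonneg_left (my_sum_nonneg _ _ (fun i hi =>
            hApos i (hG (Finset.mem_coe.2 (Finset.mem_sdiff.1 hi).1))))
        have h2 : g ⊓ (∑ y ∈ F, y) = 0 := hdisjsum g (hG (Finset.mem_coe.2 hgG)) F hF hgF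
        have h3 : g ≤ ∑ y ∈ F, y := h1.trans hle
        rw [← h2, inf_eq_left.2 h3]
      have hGsum : ∑ y ∈ G, y = ∑ y ∈ G ∩ F, y := by
        refine (Finset.sum_subset Finset.inter_subset_left ?_).symm
        intro x hxG hxGF
        exact hzero x hxG (fun hxF => hxGF (Finset.mem_inter.2 ⟨hxG, hxF⟩))
      have hsd : F \ (G ∩ F) = F \ G := by
        ext x; simp only [Finset.mem_sdiff, Finset.mem_inter]; tauto
      have hFsplit : (∑ y ∈ F, y) - ∑ y ∈ G ∩ F, y = ∑ y ∈ F \ G, y := by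
        have h5 := Finset.sum_sdiff (f := id) (Finset.inter_subset_right (s₁ := G) (s₂ := F))
        rw [hsd] at h5
        simp only [id] at h5
        rw [← h5]
        abel
      have hGFsub : ↑(G ∩ F) ⊆ A := fun x hx =>
        hG (Finset.mem_coe.2 (Finset.mem_inter.1 (Finset.mem_coe.1 hx)).1)
      have hFGsub : ↑(F \ G) ⊆ A := fun x hx =>
        hF (Finset.mem_coe.2 (Finset.mem_sdiff.1 (Finset.mem_coe.1 hx)).1)
      have hdisj2 : (∑ y ∈ F \ G, y) ⊓ (∑ y ∈ G ∩ F, y) = 0 := by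
        refine le_antisymm ?_ (le_inf (hsubpos _ hFGsub) (hsubpos _ hGFsub))
        calc (∑ y ∈ F \ G, y) ⊓ (∑ y ∈ G ∩ F, y)
            ≤ ∑ y ∈ G ∩ F, (∑ z ∈ F \ G, z) ⊓ y :=
              my_inf_sum_le (hsubpos _ hFGsub) _ id
                (fun i hi => hApos i (hGFsub (Finset.mem_coe.2 hi)))
          _ = 0 := Finset.sum_eq_zero (by
              intro y hy
              rw [inf_comm]
              exact hdisjsum y (hGFsub (Finset.mem_coe.2 hy)) (F \ G) hFGsub
                (fun hyF => (Finset.mem_sdiff.1 hyF).2 (Finset.mem_inter.1 hy).1))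
      rw [hGsum, hFsplit]
      exact hdisj2
    have hBne : B.Nonempty := ⟨a₀, {a₀}, by simpa using ha₀, ⟨a₀, Finset.mem_singleton_self a₀⟩,
      by simp⟩
    have hBpos : ∀ x ∈ B, 0 ≤ x := by
      rintro x ⟨F, hF, _, rfl⟩
      exact hsubpos F hF
    have hBdir : DirectedOn (· ≤ ·) B := by
      rintro x ⟨F, hF, hFne, rfl⟩ y ⟨G, hG, hGne, rfl⟩
      have hsub : ↑(F ∪ G) ⊆ A := by
        rw [Finset.coe_union]
        exact Set.union_subset hF hG
      have hle : ∀ H : Finset E, H ⊆ F ∪ G → (∑ y ∈ H, y) ≤ ∑ y ∈ F ∪ G, y := by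
        intro H hH
        have h5 := Finset.sum_sdiff (f := id) hH
        simp only [id] at h5
        rw [← h5]
        exact le_add_of_nonneg_left (hsubpos _ (fun i hi =>
          hsub (Finset.mem_coe.2 (Finset.mem_sdiff.1 (Finset.mem_coe.1 hi)).1)))
      exact ⟨∑ y ∈ F ∪ G, y, ⟨F ∪ G, hsub, hFne.inl, rfl⟩, hle F Finset.subset_union_left,
        hle G Finset.subset_union_right⟩
    have hBlat : ∀ a ∈ B, ∀ b ∈ B, b ≤ a → (a - b) ⊓ b = 0 := by
      rintro x ⟨F, hF, _, rfl⟩ y ⟨G, hG, _, rfl⟩ hle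
      exact key0 F G hF hG hle
    obtain ⟨s, hs⟩ := h B hBne hBpos hBdir hBlat
    refine ⟨s, ?_, ?_⟩
    · intro a ha
      exact hs.1 ⟨{a}, by simpa using ha, ⟨a, Finset.mem_singleton_self a⟩, by simp⟩
    · intro t ht
      have ht0 : (0:E) ≤ t := (hApos a₀ ha₀).trans (ht ha₀)
      have hsum_le : ∀ F : Finset E, ↑F ⊆ A → (∑ y ∈ F, y) ≤ t := by
        intro F
        induction F using Finset.induction_on with
        | empty => intro _; simpa using ht0
        | @insert f Fs hnot ih =>
          intro hF
          have hfA : f ∈ A := hF (by simp)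
          have hFs : ↑Fs ⊆ A := fun i hi => hF (by simp [Finset.mem_coe.1 hi])
          rw [Finset.sum_insert hnot,
            my_disj_add_eq_sup (hdisjsum f hfA Fs hFs hnot)]
          exact sup_le (ht hfA) (ih hFs)
      refine hs.2 ?_
      rintro x ⟨F, hF, _, rfl⟩
      exact hsum_le F hF
end

section
/- Let X be a Dedekind σ-complete Banach lattice in which every set of pairwise disjoint nonzero positive elements is countable. Then X has a Levi norm if and only if X has a sequentially Levi norm. -/
/-- A lattice is *Dedekind σ-complete* if every increasing sequence bounded
above has a least upper bound. -/
def DedekindSigmaComplete (E : Type*) [Lattice E] : Prop :=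
  ∀ x : ℕ → E, Monotone x → BddAbove (Set.range x) → ∃ s : E, IsLUB (Set.range x) s

namespace LeviAux

open Set

variable {X : Type*} [NormedAddCommGroup X] [Lattice X] [IsOrderedAddMonoid X] [HasSolidNorm X]

/-! ### Elementary lattice-group lemmas -/

lemma inf_add_le {a b c : X} (ha : 0 ≤ a) (hb : 0 ≤ b) (hc : 0 ≤ c) :
    (a + b) ⊓ c ≤ a ⊓ c + b ⊓ c := by
  rw [← sub_le_iff_le_add']
  rw [sub_inf]
  apply sup_le
  · have h1 : (a + b) ⊓ c - a = b ⊓ (c - a) := by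
      rw [inf_sub]; congr 1; abel
    rw [h1]
    exact inf_le_inf_left b (sub_le_self c ha)
  · calc (a + b) ⊓ c - c ≤ 0 := sub_nonpos.2 inf_le_right
      _ ≤ b ⊓ c := le_inf hb hc

lemma inf_add_le' {a b c : X} (ha : 0 ≤ a) (hb : 0 ≤ b) (hc : 0 ≤ c) :
    c ⊓ (a + b) ≤ c ⊓ a + c ⊓ b := by
  simpa [inf_comm] using inf_add_le ha hb hc

lemma inf_sum_le {s : Finset ℕ} {f : ℕ → X} {z : X} (hz : 0 ≤ z)
    (hf : ∀ i ∈ s, 0 ≤ f i) :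
    z ⊓ (∑ i ∈ s, f i) ≤ ∑ i ∈ s, z ⊓ f i := by
  classical
  induction s using Finset.induction_on with
  | empty => simp
  | @insert a s hnot ih =>
    rw [Finset.sum_insert hnot, Finset.sum_insert hnot]
    calc z ⊓ (f a + ∑ i ∈ s, f i) ≤ z ⊓ f a + z ⊓ (∑ i ∈ s, f i) :=
          inf_add_le' (hf a (Finset.mem_insert_self a s))
            (Finset.sum_nonneg fun i hi => hf i (Finset.mem_insert_of_mem hi)) hz
      _ ≤ z ⊓ f a + ∑ i ∈ s, z ⊓ f i := by
          gcongr
          exact ih fun i hi => hf i (Finset.mem_insert_of_mem hi)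

lemma disjoint_nsmul_right {a b : X} (ha : 0 ≤ a) (hb : 0 ≤ b) (hab : a ⊓ b = 0)
    (n : ℕ) : a ⊓ n • b = 0 := by
  induction n with
  | zero => simpa using inf_eq_right.2 ha
  | succ n ih =>
    refine le_antisymm ?_ (le_inf ha (nsmul_nonneg hb _))
    · calc a ⊓ (n+1) • b = a ⊓ (n • b + b) := by rw [succ_nsmul]
        _ ≤ a ⊓ n • b + a ⊓ b := inf_add_le' (nsmul_nonneg hb n) hb ha
        _ = 0 := by rw [ih, hab, add_zero]

lemma disjoint_nsmul {a b : X} (ha : 0 ≤ a) (hb : 0 ≤ b) (hab : a ⊓ b = 0)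
    (n m : ℕ) : n • a ⊓ m • b = 0 := by
  have h1 : a ⊓ m • b = 0 := disjoint_nsmul_right ha hb hab m
  have := disjoint_nsmul_right (nsmul_nonneg hb m) ha (by rw [inf_comm]; exact h1) n
  rw [inf_comm]; exact this

lemma posPart_add_le (a b : X) : (a + b)⁺ ≤ a⁺ + b⁺ := by
  refine sup_le ?_ (by positivity)
  exact add_le_add (le_posPart a) (le_posPart b)

lemma posPart_decomp {a b : X} (ha : 0 ≤ a) (hb : 0 ≤ b) (hab : a ⊓ b = 0) :
    (a - b)⁺ = a := by
  have hsup : a ⊔ b = a + b := by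
    have := inf_add_sup a b
    rw [hab, zero_add] at this
    exact this
  have : (a - b)⁺ = (a ⊔ b) - b := by
    rw [sup_sub, sub_self, posPart_def]
  rw [this, hsup]; abel

lemma nsmul_posPart (a : X) (n : ℕ) : (n • a)⁺ = n • a⁺ := by
  have hd : n • a⁺ ⊓ n • a⁻ = 0 :=
    disjoint_nsmul (posPart_nonneg a) (negPart_nonneg a) (posPart_inf_negPart_eq_zero a) n n
  have : n • a = n • a⁺ - n • a⁻ := by
    rw [← smul_sub, posPart_sub_negPart]
  rw [this, posPart_decomp (nsmul_nonneg (posPart_nonneg a) n)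
    (nsmul_nonneg (negPart_nonneg a) n) hd]

lemma nonneg_of_nsmul_nonneg {a : X} {n : ℕ} (hn : 0 < n) (h : 0 ≤ n • a) : 0 ≤ a := by
  have h1 : (n • a)⁻ = 0 := negPart_eq_zero.2 h
  have h2 : n • a⁻ = 0 := by
    have : (n • a)⁻ = n • a⁻ := by
      rw [← posPart_neg, ← posPart_neg, ← smul_neg, nsmul_posPart]
    rw [← this, h1]
  have h3 : a⁻ ≤ n • a⁻ := by
    calc a⁻ = 1 • a⁻ := (one_nsmul _).symm
      _ ≤ n • a⁻ := nsmul_le_nsmul_left (negPart_nonneg a) hn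
  have : a⁻ = 0 := le_antisymm (h2 ▸ h3) (negPart_nonneg a)
  exact negPart_eq_zero.1 this

/-- sum of pairwise-disjoint positive elements each below `t` is below `t` -/
lemma sum_le_of_disjoint {s : Finset ℕ} {f : ℕ → X} {t : X} (ht : 0 ≤ t)
    (h0 : ∀ i ∈ s, 0 ≤ f i) (hle : ∀ i ∈ s, f i ≤ t)
    (hd : ∀ i ∈ s, ∀ j ∈ s, i ≠ j → f i ⊓ f j = 0) :
    ∑ i ∈ s, f i ≤ t := by
  classical
  induction s using Finset.induction_on with
  | empty => simpa using ht
  | @insert a s hnot ih =>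
    rw [Finset.sum_insert hnot]
    have hmem : ∀ i ∈ s, i ∈ insert a s := fun i hi => Finset.mem_insert_of_mem hi
    have hPS : 0 ≤ ∑ i ∈ s, f i := Finset.sum_nonneg fun i hi => h0 i (hmem i hi)
    have hfa : 0 ≤ f a := h0 a (Finset.mem_insert_self a s)
    have hdisj : f a ⊓ (∑ i ∈ s, f i) = 0 := by
      refine le_antisymm ?_ (le_inf hfa hPS)
      calc f a ⊓ (∑ i ∈ s, f i) ≤ ∑ i ∈ s, f a ⊓ f i :=
            inf_sum_le hfa (fun i hi => h0 i (hmem i hi))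
        _ = 0 := by
            refine Finset.sum_eq_zero fun i hi => ?_
            exact hd a (Finset.mem_insert_self a s) i (hmem i hi)
              (fun h => hnot (h ▸ hi))
    have hsum : f a + (∑ i ∈ s, f i) = f a ⊔ (∑ i ∈ s, f i) := by
      have := inf_add_sup (f a) (∑ i ∈ s, f i)
      rw [hdisj, zero_add] at this
      exact this.symm
    rw [hsum]
    exact sup_le (hle a (Finset.mem_insert_self a s))
      (ih (fun i hi => h0 i (hmem i hi)) (fun i hi => hle i (hmem i hi))
        (fun i hi j hj hij => hd i (hmem i hi) j (hmem j hj) hij))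


/-! ### IsLUB lemmas -/

lemma isLUB_add {w1 w2 : ℕ → X} {a b : X} (h1 : Monotone w1) (h2 : Monotone w2)
    (ha : IsLUB (Set.range w1) a) (hb : IsLUB (Set.range w2) b) :
    IsLUB (Set.range fun j => w1 j + w2 j) (a + b) := by
  constructor
  · rintro _ ⟨j, rfl⟩
    exact add_le_add (ha.1 ⟨j, rfl⟩) (hb.1 ⟨j, rfl⟩)
  · intro u hu
    have key : ∀ i j, w1 i + w2 j ≤ u := fun i j =>
      le_trans (add_le_add (h1 (le_max_left i j)) (h2 (le_max_right i j)))
        (hu ⟨max i j, rfl⟩)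
    have h3 : ∀ j, a ≤ u - w2 j := fun j =>
      ha.2 (by rintro _ ⟨i, rfl⟩; exact le_sub_iff_add_le.2 (key i j))
    have h4 : b ≤ u - a := by
      refine hb.2 ?_
      rintro _ ⟨j, rfl⟩
      rw [le_sub_iff_add_le, add_comm]
      exact le_sub_iff_add_le.1 (h3 j)
    calc a + b ≤ a + (u - a) := add_le_add_right h4 a
      _ = u := by abel

lemma isLUB_nsmul {w : ℕ → X} {a : X} (hm : Monotone w)
    (ha : IsLUB (Set.range w) a) (n : ℕ) :
    IsLUB (Set.range fun j => n • w j) (n • a) := by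
  constructor
  · rintro _ ⟨j, rfl⟩
    exact nsmul_le_nsmul_right (ha.1 ⟨j, rfl⟩) n
  · have key : ∀ m : ℕ, ∀ u : X, (∀ j, m • w j ≤ u) → m • a ≤ u := by
      intro m
      induction m with
      | zero => intro u h; simpa using h 0
      | succ m ih =>
        intro u h
        have h1 : ∀ i, m • a ≤ u - w i := by
          intro i
          refine ih _ fun j => ?_
          rw [le_sub_iff_add_le]
          calc m • w j + w i ≤ m • w (max j i) + w (max j i) := by
                exact add_le_add (nsmul_le_nsmul_right (hm (le_max_left j i)) m)
                  (hm (le_max_right j i))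
            _ = (m + 1) • w (max j i) := (succ_nsmul _ m).symm
            _ ≤ u := h (max j i)
        have h2 : ∀ i, w i ≤ u - m • a := fun i => by
          have := h1 i
          rw [le_sub_iff_add_le] at this ⊢
          rwa [add_comm] at this
        have h3 : a ≤ u - m • a := ha.2 (by rintro _ ⟨i, rfl⟩; exact h2 i)
        rw [succ_nsmul]
        calc m • a + a ≤ m • a + (u - m • a) := add_le_add_right h3 _
          _ = u := by abel
    intro u hu
    exact key n u fun j => hu ⟨j, rfl⟩

lemma isLUB_sum {w : ℕ → ℕ → X} {b : ℕ → X}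
    (hm : ∀ k, Monotone (w k)) (hb : ∀ k, IsLUB (Set.range (w k)) (b k)) (N : ℕ) :
    IsLUB (Set.range fun j => ∑ k ∈ Finset.range N, w k j)
      (∑ k ∈ Finset.range N, b k) := by
  induction N with
  | zero =>
    simp only [Finset.range_zero, Finset.sum_empty]
    constructor
    · rintro _ ⟨j, rfl⟩; exact le_rfl
    · intro u hu; exact hu ⟨0, rfl⟩
  | succ N ih =>
    have := isLUB_add (w1 := fun j => ∑ k ∈ Finset.range N, w k j) (w2 := w N)
      (fun i j hij => Finset.sum_le_sum fun k _ => hm k hij) (hm N) ih (hb N)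
    simp only [Finset.sum_range_succ]
    convert this using 2

/-- `z ⊓ ·` sends sups to sups (infinite distributivity in Riesz spaces). -/
lemma inf_le_of_isLUB {s : Set X} {a z u : X} (hne : s.Nonempty)
    (ha : IsLUB s a) (hu : ∀ w ∈ s, z ⊓ w ≤ u) : z ⊓ a ≤ u := by
  -- t = z⊓t + z⊔t - z ≤ u + z⊔a - z for t ∈ s
  have h1 : ∀ t ∈ s, t ≤ u + (z ⊔ a) - z := by
    intro t ht
    have e1 : t = z ⊓ t + (z ⊔ t) - z := by
      have := inf_add_sup z t
      rw [eq_sub_iff_add_eq, this]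
      abel
    rw [e1]
    have : z ⊔ t ≤ z ⊔ a := sup_le_sup_left (ha.1 ht) z
    have := add_le_add (hu t ht) this
    exact sub_le_sub_right this z
  have h2 : a ≤ u + (z ⊔ a) - z := ha.2 h1
  -- z ⊓ a = z + a - z ⊔ a ≤ u
  have e2 : z ⊓ a = z + a - (z ⊔ a) := by
    rw [eq_sub_iff_add_eq, inf_add_sup]
  rw [e2]
  have := sub_le_sub_right (add_le_add_right h2 z) (z ⊔ a)
  calc z + a - (z ⊔ a) ≤ z + (u + (z ⊔ a) - z) - (z ⊔ a) := this
    _ = u := by abel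

/-! ### The pseudo band projection -/

noncomputable def lvProj (x v : X) : X :=
  letI := Classical.propDecidable (∃ p, IsLUB (Set.range fun j : ℕ => v ⊓ j • x) p)
  if h : ∃ p, IsLUB (Set.range fun j : ℕ => v ⊓ j • x) p then h.choose else 0

lemma lvProj_isLUB (hsc : DedekindSigmaComplete X) {x v : X} (hx : 0 ≤ x) (hv : 0 ≤ v) :
    IsLUB (Set.range fun j : ℕ => v ⊓ j • x) (lvProj x v) := by
  have hmono : Monotone fun j : ℕ => v ⊓ j • x :=
    fun i j hij => inf_le_inf_left v (nsmul_le_nsmul_left hx hij)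
  have hbdd : BddAbove (Set.range fun j : ℕ => v ⊓ j • x) :=
    ⟨v, by rintro _ ⟨j, rfl⟩; exact inf_le_left⟩
  have h : ∃ p, IsLUB (Set.range fun j : ℕ => v ⊓ j • x) p := hsc _ hmono hbdd
  unfold lvProj
  split
  · next h' => exact h'.choose_spec
  · next h' => exact absurd h h'

section Proj
variable (hsc : DedekindSigmaComplete X)
include hsc
section ProjBasic
variable {x v : X} (hx : 0 ≤ x) (hv : 0 ≤ v)
include hx hv

lemma lvProj_le : lvProj x v ≤ v :=
  (lvProj_isLUB hsc hx hv).2 (by rintro _ ⟨j, rfl⟩; exact inf_le_left)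

lemma lvProj_nonneg : 0 ≤ lvProj x v := by
  have := (lvProj_isLUB hsc hx hv).1 ⟨0, rfl⟩
  simpa [inf_eq_right.2 hv] using this

lemma le_lvProj (hxv : x ≤ v) : x ≤ lvProj x v := by
  have := (lvProj_isLUB hsc hx hv).1 ⟨1, rfl⟩
  simpa [inf_eq_right.2 hxv] using this

lemma lvProj_sub_inf : (v - lvProj x v) ⊓ x = 0 := by
  set p := lvProj x v with hp
  have hlub := lvProj_isLUB hsc hx hv
  set z := (v - p) ⊓ x with hz
  have hple : p ≤ v := lvProj_le hsc hx hv
  have hz0 : 0 ≤ z := le_inf (sub_nonneg.2 hple) hx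
  have key : ∀ j : ℕ, v ⊓ j • x ≤ p - z := by
    intro j
    have h1 : v ⊓ j • x + z ≤ v := by
      have : z ≤ v - (v ⊓ j • x) := by
        refine le_trans inf_le_left (sub_le_sub_left ?_ v)
        exact hlub.1 ⟨j, rfl⟩
      rw [← le_sub_iff_add_le']
      exact this
    have h2 : v ⊓ j • x + z ≤ (j + 1) • x := by
      rw [succ_nsmul]
      exact add_le_add inf_le_right inf_le_right
    have h3 : v ⊓ j • x + z ≤ v ⊓ (j+1) • x := le_inf h1 h2
    have h4 : v ⊓ (j+1) • x ≤ p := hlub.1 ⟨j+1, rfl⟩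
    rw [le_sub_iff_add_le]
    exact le_trans h3 h4
  have : p ≤ p - z := hlub.2 (by rintro _ ⟨j, rfl⟩; exact key j)
  have hzneg : z ≤ 0 := by
    have h5 : p + z ≤ p := le_sub_iff_add_le.1 this
    exact (add_le_iff_nonpos_right p).1 h5
  exact le_antisymm hzneg hz0

lemma lvProj_inf_eq_zero {z : X} (hz : 0 ≤ z) (hzx : z ⊓ x = 0) :
    z ⊓ lvProj x v = 0 := by
  have hlub := lvProj_isLUB hsc hx hv
  refine le_antisymm ?_ (le_inf hz (lvProj_nonneg hsc hx hv))
  refine inf_le_of_isLUB (Set.range_nonempty _) hlub ?_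
  rintro _ ⟨j, rfl⟩
  calc z ⊓ (v ⊓ j • x) ≤ z ⊓ j • x := inf_le_inf_left z inf_le_right
    _ = 0 := disjoint_nsmul_right hz hx hzx j

lemma lvProj_comp : lvProj x v ⊓ (v - lvProj x v) = 0 := by
  rw [inf_comm]
  refine lvProj_inf_eq_zero hsc hx hv (sub_nonneg.2 (lvProj_le hsc hx hv)) ?_
  exact lvProj_sub_inf hsc hx hv

end ProjBasic

lemma lvProj_mono {x x' v : X} (hx : 0 ≤ x) (hx' : 0 ≤ x') (hv : 0 ≤ v)
    (h : x ≤ x') : lvProj x v ≤ lvProj x' v := by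
  refine (lvProj_isLUB hsc hx hv).2 ?_
  rintro _ ⟨j, rfl⟩
  exact le_trans (inf_le_inf_left v (nsmul_le_nsmul_right h j))
    ((lvProj_isLUB hsc hx' hv).1 ⟨j, rfl⟩)

lemma lvProj_zero {v : X} (hv : 0 ≤ v) : lvProj (0 : X) v = 0 := by
  have hlub := lvProj_isLUB hsc le_rfl hv
  refine le_antisymm (hlub.2 ?_) (lvProj_nonneg hsc le_rfl hv)
  rintro _ ⟨j, rfl⟩
  simp [inf_eq_right.2 hv]

end Proj


lemma inf_eq_zero_of_le {a b x y : X} (hx : 0 ≤ x) (hy : 0 ≤ y)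
    (hxa : x ≤ a) (hyb : y ≤ b) (hab : a ⊓ b = 0) : x ⊓ y = 0 :=
  le_antisymm (le_trans (inf_le_inf hxa hyb) hab.le) (le_inf hx hy)

lemma sum_telescope_nsmul (c : ℕ → X) (N : ℕ) :
    ∑ k ∈ Finset.range N, c (k+1) =
      (∑ j ∈ Finset.range N, (j+1) • (c (j+1) - c (j+2))) + N • c (N+1) := by
  induction N with
  | zero => simp
  | succ N ih =>
    rw [Finset.sum_range_succ, ih, Finset.sum_range_succ]
    simp only [smul_sub, succ_nsmul]
    abel

section Sandwich

variable (hsc : DedekindSigmaComplete X)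
include hsc
variable {v t : X} (hv : 0 ≤ v) (ht : 0 ≤ t) (htv : t ≤ v) {N : ℕ}
include hv ht

/-- the level estimate : `k • c k ≤ N • t`. -/
lemma lv_level (k : ℕ) : k • lvProj ((N • t - k • v)⁺) v ≤ N • t := by
  set w := (N • t - k • v)⁺ with hwdef
  have hw : 0 ≤ w := posPart_nonneg _
  have hlub := lvProj_isLUB hsc hw hv
  have hmono : Monotone fun j : ℕ => v ⊓ j • w :=
    fun i j hij => inf_le_inf_left v (nsmul_le_nsmul_left hw hij)
  have hsm := isLUB_nsmul hmono hlub k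
  refine hsm.2 ?_
  rintro _ ⟨j, rfl⟩
  have h1 : k • (v ⊓ j • w) ≤ k • v := nsmul_le_nsmul_right inf_le_left k
  have h2 : k • (v ⊓ j • w) ≤ k • (j • w) := nsmul_le_nsmul_right inf_le_right k
  have h3 : k • (v ⊓ j • w) ≤ k • v ⊓ k • (j • w) := le_inf h1 h2
  have hjw : (0:X) ≤ k • (j • w) := nsmul_nonneg (nsmul_nonneg hw j) k
  have hv_le : k • v ≤ N • t + (k • v - N • t)⁺ := by
    rw [← sub_le_iff_le_add']
    exact le_posPart _
  have hdisj : (k • v - N • t)⁺ ⊓ k • (j • w) = 0 := by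
    have hpn : (k • v - N • t)⁺ ⊓ w = 0 := by
      have h6 : (k • v - N • t)⁺ = (N • t - k • v)⁻ := by
        rw [← posPart_neg, neg_sub]
      rw [hwdef, h6, inf_comm]
      exact posPart_inf_negPart_eq_zero _
    have := disjoint_nsmul_right (posPart_nonneg _) hw hpn j
    exact disjoint_nsmul_right (posPart_nonneg _) (nsmul_nonneg hw j) this k
  calc k • (v ⊓ j • w) ≤ k • v ⊓ k • (j • w) := h3
    _ ≤ (N • t + (k • v - N • t)⁺) ⊓ k • (j • w) := inf_le_inf_right _ hv_le
    _ ≤ N • t ⊓ k • (j • w) + (k • v - N • t)⁺ ⊓ k • (j • w) :=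
        inf_add_le (nsmul_nonneg ht N) (posPart_nonneg _) hjw
    _ ≤ N • t + 0 := add_le_add inf_le_left hdisj.le
    _ = N • t := add_zero _

include htv

lemma lv_basic {c : ℕ → X} (hc : ∀ k, c k = lvProj ((N • t - k • v)⁺) v) :
    (∀ k, 0 ≤ c k) ∧ (∀ k, c k ≤ v) ∧ (∀ k k', k ≤ k' → c k' ≤ c k) ∧
    (∀ k, (v - c k) ⊓ (N • t - k • v)⁺ = 0) ∧ (∀ k, c k ⊓ (v - c k) = 0) ∧
    c (N + 1) = 0 := by
  have hx : ∀ k : ℕ, (0:X) ≤ (N • t - k • v)⁺ := fun k => posPart_nonneg _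
  refine ⟨fun k => (hc k) ▸ lvProj_nonneg hsc (hx k) hv,
    fun k => (hc k) ▸ lvProj_le hsc (hx k) hv, ?_, 
    fun k => (hc k) ▸ lvProj_sub_inf hsc (hx k) hv,
    fun k => (hc k) ▸ lvProj_comp hsc (hx k) hv, ?_⟩
  · intro k k' hkk'
    rw [hc k, hc k']
    refine lvProj_mono hsc (hx k') (hx k) hv (posPart_mono ?_)
    have : k • v ≤ k' • v := nsmul_le_nsmul_left hv hkk'
    exact sub_le_sub_left this _
  · have hz : (N • t - (N+1) • v)⁺ = 0 := by
      refine posPart_eq_zero.2 (sub_nonpos.2 ?_)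
      calc N • t ≤ N • v := nsmul_le_nsmul_right htv N
        _ ≤ (N+1) • v := nsmul_le_nsmul_left hv (Nat.le_succ N)
    rw [hc (N+1), hz]
    exact lvProj_zero hsc hv

/-- Lower sandwich estimate. -/
lemma lv_lower {c : ℕ → X} (hc : ∀ k, c k = lvProj ((N • t - k • v)⁺) v) :
    ∑ k ∈ Finset.range N, c (k+1) ≤ N • t := by
  obtain ⟨hc0, hcv, hcanti, hsubdisj, hcomp, hcN1⟩ := lv_basic hsc hv ht htv hc
  rw [sum_telescope_nsmul c N, hcN1, smul_zero, add_zero]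
  refine sum_le_of_disjoint (nsmul_nonneg ht N) ?_ ?_ ?_
  · intro j _
    exact nsmul_nonneg (sub_nonneg.2 (hcanti _ _ (Nat.le_succ _))) _
  · intro j _
    calc (j+1) • (c (j+1) - c (j+2)) ≤ (j+1) • c (j+1) :=
          nsmul_le_nsmul_right (sub_le_self _ (hc0 _)) _
      _ ≤ N • t := by rw [hc (j+1)]; exact lv_level hsc hv ht (j+1)
  · intro i _ j _ hij
    have key : ∀ i j : ℕ, i < j →
        (c (i+1) - c (i+2)) ⊓ (c (j+1) - c (j+2)) = 0 := by
      intro i j hlt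
      refine inf_eq_zero_of_le (sub_nonneg.2 (hcanti _ _ (Nat.le_succ _)))
        (sub_nonneg.2 (hcanti _ _ (Nat.le_succ _)))
        (sub_le_sub_right (hcv (i+1)) _)
        (le_trans (sub_le_self _ (hc0 _)) (hcanti (i+2) (j+1) (by omega)))
        (by rw [inf_comm]; exact hcomp (i+2))
    rcases lt_or_gt_of_ne hij with h | h
    · exact disjoint_nsmul (sub_nonneg.2 (hcanti _ _ (Nat.le_succ _)))
        (sub_nonneg.2 (hcanti _ _ (Nat.le_succ _))) (key i j h) _ _
    · rw [inf_comm]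
      exact disjoint_nsmul (sub_nonneg.2 (hcanti _ _ (Nat.le_succ _)))
        (sub_nonneg.2 (hcanti _ _ (Nat.le_succ _))) (key j i h) _ _

/-- Upper sandwich estimate. -/
lemma lv_upper {c : ℕ → X} (hc : ∀ k, c k = lvProj ((N • t - k • v)⁺) v) :
    N • t ≤ v + ∑ k ∈ Finset.range N, c (k+1) := by
  obtain ⟨hc0, hcv, hcanti, hsubdisj, hcomp, hcN1⟩ := lv_basic hsc hv ht htv hc
  classical
  -- the "components" D j, j = 0, ..., N
  set g : ℕ → X := fun j => if j = 0 then v else c j with hg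
  set D : ℕ → X := fun j => g j - c (j+1) with hD
  have hgv : ∀ j, g j ≤ v := by
    intro j; by_cases h : j = 0 <;> simp [hg, h, hcv j]
  have hgc : ∀ j, c (j+1) ≤ g j := by
    intro j
    by_cases h : j = 0
    · simp [hg, h, hcv 1]
    · simp [hg, h]; exact hcanti j (j+1) (Nat.le_succ j)
  have hD0 : ∀ j, 0 ≤ D j := fun j => sub_nonneg.2 (hgc j)
  have hDv : ∀ j, D j ≤ v := fun j =>
    le_trans (sub_le_self _ (hc0 _)) (hgv j)
  have hDle : ∀ j, D j ≤ v - c (j+1) := fun j =>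
    sub_le_sub_right (hgv j) _
  have hsumD : ∑ j ∈ Finset.range (N+1), D j = v := by
    have h1 : ∀ j ∈ Finset.range (N+1), D j = g j - g (j+1) := by
      intro j _
      have : g (j+1) = c (j+1) := by simp [hg]
      rw [hD]; simp only []; rw [this]
    rw [Finset.sum_congr rfl h1, Finset.sum_range_sub' g (N+1)]
    simp [hg, hcN1]
  set w := v + ∑ k ∈ Finset.range N, c (k+1) with hw
  have hwD : ∀ j ∈ Finset.range (N+1), (j+1) • D j ≤ w := by
    intro j hj
    have hjN : j ≤ N := Nat.lt_succ_iff.1 (Finset.mem_range.1 hj)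
    have hsum_nonneg : (0:X) ≤ ∑ k ∈ Finset.range N, c (k+1) :=
      Finset.sum_nonneg fun k _ => hc0 _
    have hDj_le_sum : j • D j ≤ ∑ k ∈ Finset.range N, c (k+1) := by
      have h2 : j • D j ≤ ∑ k ∈ Finset.range j, c (k+1) := by
        have h3 : ∀ k ∈ Finset.range j, D j ≤ c (k+1) := by
          intro k hk
          have hkj : k + 1 ≤ j := Finset.mem_range.1 hk
          calc D j ≤ g j := sub_le_self _ (hc0 _)
            _ ≤ c (k+1) := by
              by_cases h : j = 0
              · omega
              · simp only [hg, if_neg h]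
                exact hcanti (k+1) j hkj
        calc j • D j = (Finset.range j).card • D j := by rw [Finset.card_range]
          _ ≤ ∑ k ∈ Finset.range j, c (k+1) := Finset.card_nsmul_le_sum _ _ _ h3
      refine le_trans h2 (Finset.sum_le_sum_of_subset_of_nonneg ?_ ?_)
      · exact Finset.range_subset_range.2 hjN
      · intro k _ _; exact hc0 _
    calc (j+1) • D j = j • D j + D j := succ_nsmul _ j
      _ ≤ (∑ k ∈ Finset.range N, c (k+1)) + v := add_le_add hDj_le_sum (hDv j)
      _ = w := by rw [hw]; abel
  set z := (N • t - w)⁺ with hz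
  have hz0 : (0:X) ≤ z := posPart_nonneg _
  have hzD : ∀ j ∈ Finset.range (N+1), z ⊓ D j = 0 := by
    intro j hj
    have hvD : (0:X) ≤ v - D j := sub_nonneg.2 (hDv j)
    have hzle : z ≤ (N • t - (j+1) • v)⁺ + (j+1) • (v - D j) := by
      have h1 : N • t - w ≤ N • t - (j+1) • D j :=
        sub_le_sub_left (hwD j hj) _
      have h2 : N • t - (j+1) • D j =
          (N • t - (j+1) • v) + (j+1) • (v - D j) := by
        rw [smul_sub (j+1) v (D j)]; abel
      calc z ≤ (N • t - (j+1) • D j)⁺ := posPart_mono h1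
        _ = ((N • t - (j+1) • v) + (j+1) • (v - D j))⁺ := by rw [h2]
        _ ≤ (N • t - (j+1) • v)⁺ + ((j+1) • (v - D j))⁺ := posPart_add_le _ _
        _ = (N • t - (j+1) • v)⁺ + (j+1) • (v - D j) := by
            rw [posPart_eq_self.2 (nsmul_nonneg hvD _)]
    have hterm1 : (N • t - (j+1) • v)⁺ ⊓ D j = 0 := by
      refine inf_eq_zero_of_le (posPart_nonneg _) (hD0 j) le_rfl (hDle j) ?_
      rw [inf_comm]
      exact hsubdisj (j+1)
    have hterm2 : ((j+1) • (v - D j)) ⊓ D j = 0 := by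
      have hbase : (v - D j) ⊓ D j = 0 := by
        have hsplit : v - D j = (v - g j) + c (j+1) := by rw [hD]; show v - (g j - c (j+1)) = (v - g j) + c (j+1); abel
        have hvg : (0:X) ≤ v - g j := sub_nonneg.2 (hgv j)
        have hpart1 : (v - g j) ⊓ D j = 0 := by
          by_cases h : j = 0
          · subst h
            have : v - g 0 = 0 := by simp [hg]
            rw [this]
            exact le_antisymm inf_le_left (le_inf le_rfl (hD0 0))
          · refine inf_eq_zero_of_le hvg (hD0 j) (le_rfl : v - g j ≤ v - g j)
              (le_trans (sub_le_self _ (hc0 _)) le_rfl) ?_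
            have : v - g j = v - c j := by simp [hg, h]
            rw [this, inf_comm]
            have := hcomp j
            rw [inf_comm] at this
            -- (v - c j) ⊓ g j = (v - c j) ⊓ c j
            simp only [hg, if_neg h]
            rwa [inf_comm]
        have hpart2 : c (j+1) ⊓ D j = 0 :=
          inf_eq_zero_of_le (hc0 _) (hD0 j) le_rfl (hDle j)
            (by rw [inf_comm]; exact (by rw [inf_comm]; exact hcomp (j+1)))
        refine le_antisymm ?_ (le_inf hvD (hD0 j))
        calc (v - D j) ⊓ D j = ((v - g j) + c (j+1)) ⊓ D j := by rw [hsplit]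
          _ ≤ (v - g j) ⊓ D j + c (j+1) ⊓ D j := inf_add_le hvg (hc0 _) (hD0 j)
          _ = 0 := by rw [hpart1, hpart2, add_zero]
      rw [inf_comm]
      exact disjoint_nsmul_right (hD0 j) hvD (by rw [inf_comm]; exact hbase) (j+1)
    refine le_antisymm ?_ (le_inf hz0 (hD0 j))
    calc z ⊓ D j ≤ ((N • t - (j+1) • v)⁺ + (j+1) • (v - D j)) ⊓ D j :=
          inf_le_inf_right _ hzle
      _ ≤ (N • t - (j+1) • v)⁺ ⊓ D j + ((j+1) • (v - D j)) ⊓ D j :=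
          inf_add_le (posPart_nonneg _) (nsmul_nonneg hvD _) (hD0 j)
      _ = 0 := by rw [hterm1, hterm2, add_zero]
  -- conclude z = 0
  have hzNv : z ≤ N • v := by
    calc z ≤ (N • t)⁺ := posPart_mono (sub_le_self _ (by
        rw [hw]
        exact add_nonneg hv (Finset.sum_nonneg fun k _ => hc0 _)))
      _ = N • t := posPart_eq_self.2 (nsmul_nonneg ht N)
      _ ≤ N • v := nsmul_le_nsmul_right htv N
  have hzero : z ≤ 0 := by
    have hNv : N • v = ∑ j ∈ Finset.range (N+1), N • D j := by
      rw [← Finset.smul_sum, hsumD]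
    have h1 : z = z ⊓ N • v := (inf_eq_left.2 hzNv).symm
    calc z = z ⊓ N • v := h1
      _ = z ⊓ ∑ j ∈ Finset.range (N+1), N • D j := by rw [hNv]
      _ ≤ ∑ j ∈ Finset.range (N+1), z ⊓ N • D j :=
          inf_sum_le hz0 (fun j _ => nsmul_nonneg (hD0 j) N)
      _ = 0 := Finset.sum_eq_zero fun j hj =>
          disjoint_nsmul_right hz0 (hD0 j) (hzD j hj) N
  have : z = 0 := le_antisymm hzero hz0
  rw [← sub_nonpos]
  exact posPart_eq_zero.1 this

end Sandwich

/-! ### Chains of components -/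

/-- Every chain of "components of `v`" has a countable subset whose upper bounds
bound the whole chain. Key use of countability of disjoint families. -/
lemma comp_chain
    (hcount : ∀ A : Set X, (∀ x ∈ A, 0 ≤ x) → (∀ x ∈ A, x ≠ 0) →
        A.Pairwise (fun a b => a ⊓ b = 0) → A.Countable)
    {v : X} (K : Set X) (hchain : IsChain (· ≤ ·) K)
    (hmem : ∀ k ∈ K, 0 ≤ k ∧ k ≤ v ∧ k ⊓ (v - k) = 0) :
    ∃ K₀ ⊆ K, K₀.Countable ∧ ∀ m : X, (∀ x ∈ K₀, x ≤ m) → ∀ k ∈ K, k ≤ m := by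
  rcases K.eq_empty_or_nonempty with rfl | ⟨k₁, hk₁⟩
  · exact ⟨∅, by simp, Set.countable_empty, by simp⟩
  set S : Set (Set X) :=
    {F | (∀ z ∈ F, 0 ≤ z ∧ z ≠ 0 ∧ ∃ a ∈ K, ∃ b ∈ K, a ≤ b ∧ z ≤ b - a) ∧
      F.Pairwise fun x y => x ⊓ y = 0} with hS
  have hchains : ∀ c ⊆ S, IsChain (· ⊆ ·) c → ∃ ub ∈ S, ∀ s ∈ c, s ⊆ ub := by
    intro c hcS hc
    refine ⟨⋃₀ c, ⟨?_, ?_⟩, fun s hs => Set.subset_sUnion_of_mem hs⟩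
    · rintro z ⟨F, hF, hzF⟩
      exact (hcS hF).1 z hzF
    · intro x hx y hy hxy
      obtain ⟨F, hF, hxF⟩ := hx
      obtain ⟨G, hG, hyG⟩ := hy
      rcases hc.total hF hG with h | h
      · exact (hcS hG).2 (h hxF) hyG hxy
      · exact (hcS hF).2 hxF (h hyG) hxy
  obtain ⟨D, hmax⟩ := zorn_subset S hchains
  have hDS := hmax.1
  have hDc : D.Countable :=
    hcount D (fun z hz => (hDS.1 z hz).1) (fun z hz => (hDS.1 z hz).2.1) hDS.2
  have hwit : ∀ z : D, ∃ a, a ∈ K ∧ ∃ b, b ∈ K ∧ a ≤ b ∧ (z : X) ≤ b - a := by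
    rintro ⟨z, hz⟩
    obtain ⟨a, ha, b, hb, hab, hzab⟩ := (hDS.1 z hz).2.2
    exact ⟨a, ha, b, hb, hab, hzab⟩
  choose fa hfa fb hfb hab hzle using hwit
  haveI : Countable ↥D := hDc.to_subtype
  refine ⟨{k₁} ∪ (Set.range fa ∪ Set.range fb), ?_, ?_, ?_⟩
  · rintro x (rfl | ⟨⟨z, rfl⟩ | ⟨z, rfl⟩⟩)
    · exact hk₁
    · exact hfa z
    · exact hfb z
  · exact (Set.countable_singleton k₁).union
      ((Set.countable_range fa).union (Set.countable_range fb))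
  · intro m hm k hk
    by_contra hkm
    set z := (k - m)⁺ with hzdef
    have hz0 : 0 ≤ z := posPart_nonneg _
    have hzne : z ≠ 0 := fun h => hkm (sub_nonpos.1 (posPart_eq_zero.1 h))
    have hk₁m : k₁ ≤ m := hm k₁ (Or.inl rfl)
    have hk₁k : k₁ ≤ k := by
      rcases eq_or_ne k k₁ with rfl | hne
      · exact le_rfl
      · rcases hchain hk hk₁ hne with h | h
        · exact absurd (h.trans hk₁m) hkm
        · exact h
    have hz_wit : z ≤ k - k₁ := by
      calc z ≤ (k - k₁)⁺ := posPart_mono (sub_le_sub_left hk₁m k)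
        _ = k - k₁ := posPart_eq_self.2 (sub_nonneg.2 hk₁k)
    have hdisj : ∀ d ∈ D, z ⊓ d = 0 := by
      intro d hd
      have hbm : fb ⟨d, hd⟩ ≤ m := hm _ (Or.inr (Or.inr ⟨⟨d, hd⟩, rfl⟩))
      have hbk : fb ⟨d, hd⟩ ≤ k := by
        rcases eq_or_ne k (fb ⟨d, hd⟩) with h | hne
        · exact h.ge
        · rcases hchain hk (hfb ⟨d, hd⟩) hne with h | h
          · exact absurd (h.trans hbm) hkm
          · exact h
      have hzk : z ≤ v - fb ⟨d, hd⟩ := by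
        calc z ≤ (k - fb ⟨d, hd⟩)⁺ := posPart_mono (sub_le_sub_left hbm k)
          _ = k - fb ⟨d, hd⟩ := posPart_eq_self.2 (sub_nonneg.2 hbk)
          _ ≤ v - fb ⟨d, hd⟩ := sub_le_sub_right (hmem k hk).2.1 _
      have hd_le : d ≤ fb ⟨d, hd⟩ := by
        calc d ≤ fb ⟨d, hd⟩ - fa ⟨d, hd⟩ := hzle ⟨d, hd⟩
          _ ≤ fb ⟨d, hd⟩ := sub_le_self _ (hmem _ (hfa ⟨d, hd⟩)).1
      refine inf_eq_zero_of_le hz0 (hDS.1 d hd).1 hzk hd_le ?_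
      rw [inf_comm]
      exact (hmem _ (hfb ⟨d, hd⟩)).2.2
    have hins : insert z D ∈ S := by
      constructor
      · rintro y (rfl | hy)
        · exact ⟨hz0, hzne, k₁, hk₁, k, hk, hk₁k, hz_wit⟩
        · exact hDS.1 y hy
      · refine hDS.2.insert ?_
        intro d hd _
        exact ⟨hdisj d hd, by rw [inf_comm]; exact hdisj d hd⟩
    have : insert z D ⊆ D := hmax.2 hins (Set.subset_insert z D)
    have hzD : z ∈ D := this (Set.mem_insert z D)
    exact hzne (by rw [← inf_idem z]; exact hdisj z hzD)

/-! ### Weak unit -/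

lemma exists_weak_unit [NormedSpace ℝ X] [CompleteSpace X]
    (hcount : ∀ A : Set X, (∀ x ∈ A, 0 ≤ x) → (∀ x ∈ A, x ≠ 0) →
        A.Pairwise (fun a b => a ⊓ b = 0) → A.Countable) :
    ∃ e : X, 0 ≤ e ∧ ∀ x : X, 0 ≤ x → x ⊓ e = 0 → x = 0 := by
  set S : Set (Set X) :=
    {F | (∀ z ∈ F, 0 ≤ z ∧ z ≠ 0) ∧ F.Pairwise fun a b => a ⊓ b = 0} with hS
  have hchains : ∀ c ⊆ S, IsChain (· ⊆ ·) c → ∃ ub ∈ S, ∀ s ∈ c, s ⊆ ub := by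
    intro c hcS hc
    refine ⟨⋃₀ c, ⟨?_, ?_⟩, fun s hs => Set.subset_sUnion_of_mem hs⟩
    · rintro z ⟨F, hF, hzF⟩
      exact (hcS hF).1 z hzF
    · intro x hx y hy hxy
      obtain ⟨F, hF, hxF⟩ := hx
      obtain ⟨G, hG, hyG⟩ := hy
      rcases hc.total hF hG with h | h
      · exact (hcS hG).2 (h hxF) hyG hxy
      · exact (hcS hF).2 hxF (h hyG) hxy
  obtain ⟨D, hmax⟩ := zorn_subset S hchains
  have hDS := hmax.1
  have hDc : D.Countable :=
    hcount D (fun z hz => (hDS.1 z hz).1) (fun z hz => (hDS.1 z hz).2) hDS.2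
  have hmaxD : ∀ x : X, 0 ≤ x → x ≠ 0 → (∀ d ∈ D, x ⊓ d = 0) → False := by
    intro x hx hxne hxd
    have hins : insert x D ∈ S := by
      constructor
      · rintro y (rfl | hy)
        · exact ⟨hx, hxne⟩
        · exact hDS.1 y hy
      · refine hDS.2.insert fun d hd _ => ⟨hxd d hd, by rw [inf_comm]; exact hxd d hd⟩
    have hsub : insert x D ⊆ D := hmax.2 hins (Set.subset_insert x D)
    have hxD : x ∈ D := hsub (Set.mem_insert x D)
    exact hxne (by rw [← inf_idem x]; exact hxd x hxD)
  rcases D.eq_empty_or_nonempty with rfl | hne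
  · refine ⟨0, le_rfl, fun x hx _ => ?_⟩
    by_contra hxne
    exact hmaxD x hx hxne (by simp)
  obtain ⟨f, hf⟩ := hDc.exists_eq_range hne
  have hfD : ∀ n, f n ∈ D := fun n => hf ▸ Set.mem_range_self n
  have hf0 : ∀ n, 0 ≤ f n := fun n => (hDS.1 _ (hfD n)).1
  have hmn : ∀ n : ℕ, ∃ m : ℕ, 0 < m ∧ (2:ℝ)^n * (1 + ‖f n‖) ≤ m := by
    intro n
    obtain ⟨m, hm⟩ := exists_nat_ge ((2:ℝ)^n * (1 + ‖f n‖))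
    exact ⟨m + 1, Nat.succ_pos m, hm.trans (by push_cast; linarith)⟩
  choose mf hmf0 hmf using hmn
  set u : ℕ → X := fun n => ((mf n : ℝ))⁻¹ • f n with hu
  have hmu : ∀ n, (mf n) • u n = f n := by
    intro n
    rw [hu]
    rw [← Nat.cast_smul_eq_nsmul ℝ, smul_smul,
      mul_inv_cancel₀ (by exact_mod_cast (hmf0 n).ne'), one_smul]
  have hu0 : ∀ n, 0 ≤ u n := by
    intro n
    refine nonneg_of_nsmul_nonneg (hmf0 n) ?_
    rw [hmu n]; exact hf0 n
  have hnorm : ∀ n, ‖u n‖ ≤ (1/2)^n := by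
    intro n
    have hpos : (0:ℝ) < 2^n * (1 + ‖f n‖) := by positivity
    have hmpos : (0:ℝ) < mf n := by exact_mod_cast hmf0 n
    rw [hu]
    rw [norm_smul, norm_inv, Real.norm_natCast]
    rw [inv_mul_le_iff₀ hmpos]
    have hhalf : (0:ℝ) < (1/2:ℝ)^n := by positivity
    have h2 : (2:ℝ)^n * (1/2:ℝ)^n = 1 := by
      rw [← mul_pow]; norm_num
    calc ‖f n‖ ≤ 1 + ‖f n‖ := by linarith
      _ = (2:ℝ)^n * (1 + ‖f n‖) * (1/2:ℝ)^n := by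
          rw [mul_right_comm, h2, one_mul]
      _ ≤ (mf n : ℝ) * (1/2:ℝ)^n :=
          mul_le_mul_of_nonneg_right (hmf n) hhalf.le
  have hsummable : Summable u :=
    Summable.of_norm (Summable.of_nonneg_of_le (fun n => norm_nonneg _) hnorm
      summable_geometric_two)
  refine ⟨∑' n, u n, tsum_nonneg hu0, ?_⟩
  intro x hx hxe
  by_contra hxne
  refine hmaxD x hx hxne ?_
  intro d hd
  obtain ⟨n, rfl⟩ : ∃ n, f n = d := by
    rw [hf] at hd; exact hd
  have hue : u n ≤ ∑' k, u k := Summable.le_tsum hsummable n fun j _ => hu0 j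
  have hxu : x ⊓ u n = 0 := by
    refine le_antisymm ?_ (le_inf hx (hu0 n))
    calc x ⊓ u n ≤ x ⊓ ∑' k, u k := inf_le_inf_left x hue
      _ = 0 := hxe
  rw [← hmu n]
  exact disjoint_nsmul_right hx (hu0 n) hxu (mf n)

/-! ### The set of suprema of increasing sequences from `A` -/

def lvS (A : Set X) : Set X :=
  {s | ∃ c : ℕ → X, (∀ n, c n ∈ A) ∧ Monotone c ∧ IsLUB (Set.range c) s}

lemma mem_lvS_of_mem {A : Set X} {a : X} (ha : a ∈ A) : a ∈ lvS A := by
  refine ⟨fun _ => a, fun _ => ha, monotone_const, ?_⟩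
  rw [Set.range_const]
  exact isLUB_singleton

lemma lvS_nonneg {A : Set X} (hApos : ∀ x ∈ A, 0 ≤ x) {s : X} (hs : s ∈ lvS A) :
    0 ≤ s := by
  obtain ⟨c, hcA, _, hlub⟩ := hs
  exact le_trans (hApos _ (hcA 0)) (hlub.1 ⟨0, rfl⟩)

lemma lvS_le_of_upperBound {A : Set X} {s u : X} (hs : s ∈ lvS A)
    (hu : ∀ a ∈ A, a ≤ u) : s ≤ u := by
  obtain ⟨c, hcA, _, hlub⟩ := hs
  exact hlub.2 (by rintro _ ⟨n, rfl⟩; exact hu _ (hcA n))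

/-- Lemma D : any countable subset of `lvS A` has an upper bound in `lvS A`. -/
lemma lvS_countable_bound (hseq : HasSeqLeviNorm X) {A : Set X}
    (hApos : ∀ x ∈ A, 0 ≤ x) (hAdir : DirectedOn (· ≤ ·) A)
    {M : ℝ} (hM : ∀ x ∈ A, ‖x‖ ≤ M) {a₀ : X} (ha₀ : a₀ ∈ A)
    (T : Set X) (hT : T.Countable) (hTS : T ⊆ lvS A) :
    ∃ s ∈ lvS A, ∀ t ∈ T, t ≤ s := by
  rcases T.eq_empty_or_nonempty with rfl | hTne
  · exact ⟨a₀, mem_lvS_of_mem ha₀, by simp⟩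
  obtain ⟨f, hfT⟩ := hT.exists_eq_range hTne
  have hmem : ∀ i, f i ∈ lvS A := fun i => hTS (hfT ▸ Set.mem_range_self i)
  choose F hFA hFmono hFlub using hmem
  choose pk hpkA hpk1 hpk2 using fun (a b : X) (ha : a ∈ A) (hb : b ∈ A) =>
    hAdir a ha b hb
  -- note : hpkA : pk a b ha hb ∈ A, hpk1 : a ≤ pk .., hpk2 : b ≤ pk ..
  let E : ℕ → {x : X // x ∈ A} := fun n =>
    Nat.rec ⟨a₀, ha₀⟩
      (fun n prev =>
        ⟨pk prev.1 (F (Nat.unpair n).1 (Nat.unpair n).2) prev.2 (hFA _ _),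
          hpkA _ _ _ _⟩) n
  have hEA : ∀ n, (E n).1 ∈ A := fun n => (E n).2
  have hEmono : Monotone fun n => (E n).1 := by
    refine monotone_nat_of_le_succ fun n => ?_
    exact hpk1 _ _ _ _
  have hEF : ∀ i j, F i j ≤ (E (Nat.pair i j + 1)).1 := by
    intro i j
    have h1 : (E (Nat.pair i j + 1)).1 =
        pk (E (Nat.pair i j)).1 (F (Nat.unpair (Nat.pair i j)).1
          (Nat.unpair (Nat.pair i j)).2) (E (Nat.pair i j)).2 (hFA _ _) := rfl
    rw [h1]
    have h2 := hpk2 (E (Nat.pair i j)).1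
      (F (Nat.unpair (Nat.pair i j)).1 (Nat.unpair (Nat.pair i j)).2)
      (E (Nat.pair i j)).2 (hFA _ _)
    simpa [Nat.unpair_pair] using h2
  obtain ⟨s, hslub⟩ := hseq (fun n => (E n).1) (fun n => hApos _ (hEA n))
    hEmono ⟨M, fun n => hM _ (hEA n)⟩
  refine ⟨s, ⟨fun n => (E n).1, hEA, hEmono, hslub⟩, ?_⟩
  intro t ht
  obtain ⟨i, rfl⟩ : ∃ i, f i = t := by rw [hfT] at ht; exact ht
  refine (hFlub i).2 ?_
  rintro _ ⟨j, rfl⟩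
  exact le_trans (hEF i j) (hslub.1 ⟨Nat.pair i j + 1, rfl⟩)

/-- decomposition along a weak unit -/
lemma weakUnit_decomp (hsc : DedekindSigmaComplete X) {e x : X} (he : 0 ≤ e)
    (hwu : ∀ y : X, 0 ≤ y → y ⊓ e = 0 → y = 0) (hx : 0 ≤ x) :
    IsLUB (Set.range fun n : ℕ => x ⊓ n • e) x := by
  have hlub := lvProj_isLUB hsc he hx
  have hdisj := lvProj_sub_inf hsc he hx
  have hple := lvProj_le hsc he hx
  have : x - lvProj e x = 0 := hwu _ (sub_nonneg.2 hple) hdisj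
  have hpe : lvProj e x = x := by
    have := sub_eq_zero.1 this
    exact this.symm
  rw [hpe] at hlub
  exact hlub

/-- Key lemma: every chain in `lvS A` is dominated by an element of `lvS A`. -/
lemma chain_bound [NormedSpace ℝ X] [CompleteSpace X] (hsc : DedekindSigmaComplete X)
    (hcount : ∀ A : Set X, (∀ x ∈ A, 0 ≤ x) → (∀ x ∈ A, x ≠ 0) →
        A.Pairwise (fun a b => a ⊓ b = 0) → A.Countable)
    (hseq : HasSeqLeviNorm X) {A : Set X}
    (hApos : ∀ x ∈ A, 0 ≤ x) (hAdir : DirectedOn (· ≤ ·) A)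
    {M : ℝ} (hM : ∀ x ∈ A, ‖x‖ ≤ M) {a₀ : X} (ha₀ : a₀ ∈ A)
    {e : X} (he : 0 ≤ e) (hwu : ∀ y : X, 0 ≤ y → y ⊓ e = 0 → y = 0)
    (C : Set X) (hCS : C ⊆ lvS A) (hchain : IsChain (· ≤ ·) C) :
    ∃ s ∈ lvS A, ∀ c ∈ C, c ≤ s := by
  classical
  rcases C.eq_empty_or_nonempty with rfl | ⟨cb, hcb⟩
  · exact ⟨a₀, mem_lvS_of_mem ha₀, by simp⟩
  have hC0 : ∀ c ∈ C, 0 ≤ c := fun c hc => lvS_nonneg hApos (hCS hc)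
  set comp : X → ℕ → ℕ → ℕ → X :=
    fun c n N k => lvProj ((N • (c ⊓ n • e) - k • (n • e))⁺) (n • e) with hcompdef
  have hne0 : ∀ n : ℕ, (0:X) ≤ n • e := fun n => nsmul_nonneg he n
  have hcompMono : ∀ n N k, ∀ c c', c ≤ c' → comp c n N k ≤ comp c' n N k := by
    intro n N k c c' hcc
    exact lvProj_mono hsc (posPart_nonneg _) (posPart_nonneg _) (hne0 n)
      (posPart_mono (sub_le_sub_right
        (nsmul_le_nsmul_right (inf_le_inf_right _ hcc) N) _))
  -- for each triple, a countable subset of C controlling the component chain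
  have big : ∀ p : ℕ × ℕ × ℕ, ∃ T0 : Set X, T0 ⊆ C ∧ T0.Countable ∧
      ∀ m : X, (∀ x ∈ T0, comp x p.1 p.2.1 p.2.2 ≤ m) →
        ∀ c ∈ C, comp c p.1 p.2.1 p.2.2 ≤ m := by
    rintro ⟨n, N, k⟩
    have hKchain : IsChain (· ≤ ·) ((fun c => comp c n N k) '' C) := by
      refine hchain.image_of_map_rel _ _ _ ?_
      intro x y hxy
      exact hcompMono n N k x y hxy
    have hKmem : ∀ y ∈ (fun c => comp c n N k) '' C,
        0 ≤ y ∧ y ≤ n • e ∧ y ⊓ (n • e - y) = 0 := by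
      rintro _ ⟨c', _, rfl⟩
      exact ⟨lvProj_nonneg hsc (posPart_nonneg _) (hne0 n),
        lvProj_le hsc (posPart_nonneg _) (hne0 n),
        lvProj_comp hsc (posPart_nonneg _) (hne0 n)⟩
    obtain ⟨K₀, hK₀sub, hK₀c, hK₀⟩ :=
      comp_chain hcount ((fun c => comp c n N k) '' C) hKchain hKmem
    have hpre : ∀ y : K₀, ∃ c, c ∈ C ∧ comp c n N k = y := by
      rintro ⟨y, hy⟩
      obtain ⟨c', hc', hcy⟩ := hK₀sub hy
      exact ⟨c', hc', hcy⟩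
    choose gpre hgpreC hgprey using hpre
    haveI : Countable ↥K₀ := hK₀c.to_subtype
    refine ⟨Set.range gpre, ?_, Set.countable_range gpre, ?_⟩
    · rintro _ ⟨y, rfl⟩; exact hgpreC y
    · intro m hm c hc
      refine hK₀ m ?_ (comp c n N k) ⟨c, hc, rfl⟩
      intro y hy
      have := hm (gpre ⟨y, hy⟩) ⟨⟨y, hy⟩, rfl⟩
      rwa [hgprey ⟨y, hy⟩] at this
  choose T0 hT0sub hT0c hT0 using big
  set C₀ : Set X := {cb} ∪ ⋃ p : ℕ × ℕ × ℕ, T0 p with hC₀def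
  have hC₀sub : C₀ ⊆ C := by
    rintro x (rfl | hx)
    · exact hcb
    · obtain ⟨p, hp⟩ := Set.mem_iUnion.1 hx
      exact hT0sub p hp
  have hC₀c : C₀.Countable :=
    (Set.countable_singleton cb).union (Set.countable_iUnion fun p => hT0c p)
  obtain ⟨g, hg⟩ := hC₀c.exists_eq_range ⟨cb, Or.inl rfl⟩
  have hgC₀ : ∀ i, g i ∈ C₀ := fun i => hg ▸ Set.mem_range_self i
  have hgC : ∀ i, g i ∈ C := fun i => hC₀sub (hgC₀ i)
  -- running maxima of g
  let gm : ℕ → X := fun n =>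
    Nat.rec (g 0) (fun n prev => prev ⊔ g (n+1)) n
  have hgm_def : ∀ n, gm (n+1) = gm n ⊔ g (n+1) := fun n => rfl
  have hgmC₀ : ∀ n, gm n ∈ C₀ := by
    intro n
    induction n with
    | zero => exact hgC₀ 0
    | succ n ih =>
      rw [hgm_def]
      rcases eq_or_ne (g (n+1)) (gm n) with heq | hne
      · rw [heq, sup_idem]; exact ih
      · rcases hchain (hgC (n+1)) (hC₀sub ih) hne with h1 | h1
        · rw [sup_eq_left.2 h1]; exact ih
        · rw [sup_eq_right.2 h1]; exact hgC₀ (n+1)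
  have hgmC : ∀ n, gm n ∈ C := fun n => hC₀sub (hgmC₀ n)
  have hgmmono : Monotone gm := by
    refine monotone_nat_of_le_succ fun n => ?_
    rw [hgm_def]
    exact le_sup_left
  have hgge : ∀ i, g i ≤ gm i := by
    intro i
    induction i with
    | zero => exact le_rfl
    | succ n _ =>
      rw [hgm_def]
      exact le_sup_right
  obtain ⟨s, hsS, hs⟩ := lvS_countable_bound hseq hApos hAdir hM ha₀ C₀ hC₀c
    (hC₀sub.trans hCS)
  refine ⟨s, hsS, ?_⟩
  intro c hc
  have key : ∀ n : ℕ, c ⊓ n • e ≤ s := by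
    intro n
    have hngoal : ∀ N : ℕ, N • (c ⊓ n • e) ≤ n • e + N • s := by
      intro N
      have hmono_j : ∀ k, Monotone fun j => comp (gm j) n N k := fun k i j hij =>
        hcompMono n N k _ _ (hgmmono hij)
      have hex : ∀ k, ∃ mB, IsLUB (Set.range fun j => comp (gm j) n N k) mB := by
        intro k
        refine hsc _ (hmono_j k) ⟨n • e, ?_⟩
        rintro _ ⟨j, rfl⟩
        exact lvProj_le hsc (posPart_nonneg _) (hne0 n)
      choose mB hmB using hex
      have halpha : ∀ k, ∀ c' ∈ C, comp c' n N k ≤ mB k := by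
        intro k c' hc'
        refine hT0 (n, N, k) (mB k) ?_ c' hc'
        intro x hx
        have hxC₀ : x ∈ C₀ := Or.inr (Set.mem_iUnion.2 ⟨(n, N, k), hx⟩)
        obtain ⟨i, rfl⟩ : ∃ i, g i = x := by rw [hg] at hxC₀; exact hxC₀
        exact le_trans (hcompMono n N k _ _ (hgge i)) ((hmB k).1 ⟨i, rfl⟩)
      have hsum_lub : IsLUB
          (Set.range fun j => ∑ k ∈ Finset.range N, comp (gm j) n N (k+1))
          (∑ k ∈ Finset.range N, mB (k+1)) :=
        isLUB_sum (w := fun k j => comp (gm j) n N (k+1))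
          (fun k => hmono_j (k+1)) (fun k => hmB (k+1)) N
      have hgamma : ∑ k ∈ Finset.range N, mB (k+1) ≤ N • s := by
        refine hsum_lub.2 ?_
        rintro _ ⟨j, rfl⟩
        have ht' : (0:X) ≤ gm j ⊓ n • e := le_inf (hC0 _ (hgmC j)) (hne0 n)
        have htv' : gm j ⊓ n • e ≤ n • e := inf_le_right
        have hlow := lv_lower hsc (hne0 n) ht' htv' (N := N)
          (c := fun k => comp (gm j) n N k) (fun k => rfl)
        refine le_trans hlow ?_
        have hgms : gm j ≤ s := hs _ (hgmC₀ j)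
        exact nsmul_le_nsmul_right (le_trans inf_le_left hgms) N
      have htc : (0:X) ≤ c ⊓ n • e := le_inf (hC0 c hc) (hne0 n)
      have htcv : c ⊓ n • e ≤ n • e := inf_le_right
      have hup := lv_upper hsc (hne0 n) htc htcv (N := N)
        (c := fun k => comp c n N k) (fun k => rfl)
      refine le_trans hup (add_le_add_right ?_ _)
      calc ∑ k ∈ Finset.range N, comp c n N (k+1)
          ≤ ∑ k ∈ Finset.range N, mB (k+1) :=
            Finset.sum_le_sum fun k _ => halpha (k+1) c hc
        _ ≤ N • s := hgamma
    set y := (c ⊓ n • e - s)⁺ with hy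
    have hyN : ∀ N : ℕ, N • y ≤ n • e := by
      intro N
      have h1 : N • (c ⊓ n • e - s) ≤ n • e := by
        rw [smul_sub, sub_le_iff_le_add]
        exact hngoal N
      calc N • y = (N • (c ⊓ n • e - s))⁺ := (nsmul_posPart _ N).symm
        _ ≤ (n • e)⁺ := posPart_mono h1
        _ = n • e := posPart_eq_self.2 (hne0 n)
    have hy0 : y = 0 := by
      by_contra hyne
      have hynorm : 0 < ‖y‖ := norm_pos_iff.2 hyne
      obtain ⟨N, hN⟩ := exists_nat_gt (‖n • e‖ / ‖y‖)
      have hNy : ‖N • y‖ ≤ ‖n • e‖ := by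
        refine HasSolidNorm.solid ?_
        rw [abs_of_nonneg (nsmul_nonneg (posPart_nonneg _) N),
          abs_of_nonneg (hne0 n)]
        exact hyN N
      have heq : ‖N • y‖ = N * ‖y‖ := by
        rw [← Nat.cast_smul_eq_nsmul ℝ, norm_smul, Real.norm_natCast]
      rw [div_lt_iff₀ hynorm] at hN
      rw [heq] at hNy
      linarith
    have := posPart_eq_zero.1 hy0
    exact sub_nonpos.1 this
  have hdec := weakUnit_decomp hsc he hwu (hC0 c hc)
  exact hdec.2 (by rintro _ ⟨n, rfl⟩; exact key n)

end LeviAux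

theorem hasLeviNorm_iff_hasSeqLeviNorm_of_countable_disjoint_families
    {X : Type*} [NormedAddCommGroup X] [Lattice X] [IsOrderedAddMonoid X] [HasSolidNorm X] [NormedSpace ℝ X] [CompleteSpace X]
    (hsc : DedekindSigmaComplete X)
    (hcount : ∀ A : Set X, (∀ x ∈ A, 0 ≤ x) → (∀ x ∈ A, x ≠ 0) →
        A.Pairwise (fun a b => a ⊓ b = 0) → A.Countable) :
    HasLeviNorm X ↔ HasSeqLeviNorm X := by
  constructor
  · intro hL x hx hmono hbd
    refine hL (Set.range x) (Set.range_nonempty x)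
      (by rintro _ ⟨n, rfl⟩; exact hx n) ?_ ?_
    · rintro _ ⟨i, rfl⟩ _ ⟨j, rfl⟩
      exact ⟨x (max i j), ⟨max i j, rfl⟩, hmono (le_max_left i j),
        hmono (le_max_right i j)⟩
    · obtain ⟨M, hM⟩ := hbd
      exact ⟨M, by rintro _ ⟨n, rfl⟩; exact hM n⟩
  · intro hseq A hAne hApos hAdir hbd
    obtain ⟨M, hM⟩ := hbd
    obtain ⟨a₀, ha₀⟩ := hAne
    obtain ⟨e, he, hwu⟩ := LeviAux.exists_weak_unit hcount
    obtain ⟨s, hmax⟩ := zorn_le₀ (LeviAux.lvS A) (fun C hCS hchain =>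
      LeviAux.chain_bound hsc hcount hseq hApos hAdir hM ha₀ he hwu C hCS hchain)
    refine ⟨s, ?_, ?_⟩
    · intro a ha
      by_contra hna
      obtain ⟨s', hs'S, hs'⟩ := LeviAux.lvS_countable_bound hseq hApos hAdir hM ha₀
        {s, a} (((Set.finite_singleton a).insert s).countable)
        (by
          rintro x (rfl | rfl)
          · exact hmax.1
          · exact LeviAux.mem_lvS_of_mem ha)
      have hss' : s ≤ s' := hs' s (Set.mem_insert s _)
      have hs's : s' ≤ s := hmax.2 hs'S hss'
      exact hna ((hs' a (by simp)).trans hs's)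
    · intro u hu
      exact LeviAux.lvS_le_of_upperBound hmax.1 fun a ha => hu ha
end

section
/- Let E be a separable L-space and let F be a Banach lattice with a sequentially Levi norm. Then every continuous linear operator T : E → F is regular. -/
open TopologicalSpace

section AuxLattice
variable {G : Type*} [NormedAddCommGroup G] [Lattice G] [IsOrderedAddMonoid G] [HasSolidNorm G]

variable {G : Type*} [NormedAddCommGroup G] [Lattice G] [IsOrderedAddMonoid G] [HasSolidNorm G]

lemma aux_add_inf_le {a b c : G} (ha : 0 ≤ a) (hb : 0 ≤ b) (hc : 0 ≤ c) :
    (a + c) ⊓ b ≤ (a ⊓ b) + (c ⊓ b) := by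
  rw [inf_add]
  refine le_inf ?_ ?_
  · calc (a + c) ⊓ b ≤ (a + c) ⊓ (a + b) :=
          inf_le_inf_left _ (le_add_of_nonneg_left ha)
    _ = a + (c ⊓ b) := (add_inf _ _ _).symm
  · exact inf_le_right.trans (le_add_of_nonneg_right (le_inf hc hb))

lemma aux_nsmul_inf_le {a b : G} (ha : 0 ≤ a) (hb : 0 ≤ b) :
    ∀ n : ℕ, (n • a) ⊓ b ≤ n • (a ⊓ b)
  | 0 => by simpa using hb
  | (n + 1) => by
    have h1 : ((n • a) + a) ⊓ b ≤ ((n • a) ⊓ b) + (a ⊓ b) :=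
      aux_add_inf_le (nsmul_nonneg ha n) hb ha
    calc ((n+1) • a) ⊓ b = ((n • a) + a) ⊓ b := by rw [succ_nsmul]
    _ ≤ ((n • a) ⊓ b) + (a ⊓ b) := h1
    _ ≤ n • (a ⊓ b) + (a ⊓ b) := add_le_add_left (aux_nsmul_inf_le ha hb n) _
    _ = (n+1) • (a ⊓ b) := (succ_nsmul _ _).symm

lemma aux_nonneg_of_nsmul_nonneg {y : G} {n : ℕ} (hn : n ≠ 0) (h : 0 ≤ n • y) : 0 ≤ y := by
  obtain ⟨m, rfl⟩ : ∃ m, n = m + 1 := ⟨n - 1, by omega⟩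
  have hy1 : y⁻ + y = y⁺ := by
    have h0 := posPart_sub_negPart y
    have : y⁻ + y = y⁻ + (y⁺ - y⁻) := by rw [h0]
    rw [this]; abel
  have h1 : y⁻ ≤ (m+1) • y⁺ := by
    calc y⁻ ≤ (m+1) • y⁻ := by
          rw [succ_nsmul]
          exact le_add_of_nonneg_left (nsmul_nonneg (negPart_nonneg y) m)
    _ = (m+1) • y⁺ - (m+1) • y := by rw [← smul_sub]; congr 1; rw [← hy1]; abel
    _ ≤ (m+1) • y⁺ := sub_le_self _ h
  have h2 : ((m+1) • y⁺) ⊓ y⁻ ≤ (m+1) • (y⁺ ⊓ y⁻) :=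
    aux_nsmul_inf_le (posPart_nonneg y) (negPart_nonneg y) (m+1)
  have h3 : y⁻ ≤ 0 := by
    have := inf_eq_right.mpr h1  -- ((m+1)•y⁺) ⊓ y⁻ = y⁻
    rw [this] at h2
    simpa [posPart_inf_negPart_eq_zero] using h2
  have : y⁻ = 0 := le_antisymm h3 (negPart_nonneg y)
  have h4 := posPart_sub_negPart y
  rw [‹y⁻ = 0›] at h4
  simp only [sub_zero] at h4
  rw [← h4]
  exact posPart_nonneg y




lemma aux_ratsmul_nonneg [NormedSpace ℝ G] {q : ℚ} (hq : 0 ≤ q) {x : G} (hx : 0 ≤ x) :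
    0 ≤ (q : ℝ) • x := by
  refine aux_nonneg_of_nsmul_nonneg (n := q.den) q.den_nz ?_
  have h1 : (q.den : ℕ) • ((q : ℝ) • x) = ((q.den : ℝ) * (q : ℝ)) • x := by
    rw [← Nat.cast_smul_eq_nsmul ℝ, smul_smul]
  have h2 : ((q.den : ℝ) * (q : ℝ)) = (q.num : ℝ) := by
    rw [Rat.cast_def]; field_simp
  rw [h1, h2]
  have h3 : (q.num : ℝ) • x = q.num • x := (Int.cast_smul_eq_zsmul ℝ _ _)
  rw [h3]
  have : 0 ≤ q.num := Rat.num_nonneg.mpr hq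
  obtain ⟨k, hk⟩ := Int.eq_ofNat_of_zero_le this
  rw [hk, natCast_zsmul]
  exact nsmul_nonneg hx k

lemma aux_riesz_list :
    ∀ (m : List G), (∀ y ∈ m, 0 ≤ y) → ∀ a b : G, 0 ≤ a → 0 ≤ b → a + b = m.sum →
    ∃ m1 m2 : List G, (∀ y ∈ m1, 0 ≤ y) ∧ (∀ y ∈ m2, 0 ≤ y) ∧
      m1.sum = a ∧ m2.sum = b ∧ m1.length = m2.length ∧ m = List.zipWith (· + ·) m1 m2
  | [], _, a, b, ha, hb, hab => by
    have ha0 : a = 0 := le_antisymm (by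
      have : a + b = 0 := by simpa using hab
      calc a ≤ a + b := le_add_of_nonneg_right hb
      _ = 0 := this) ha
    have hb0 : b = 0 := by
      have : a + b = 0 := by simpa using hab
      rw [ha0, zero_add] at this; exact this
    exact ⟨[], [], by simp, by simp, by simp [ha0], by simp [hb0], rfl, rfl⟩
  | (c :: m'), hm, a, b, ha, hb, hab => by
    have hc : 0 ≤ c := hm c List.mem_cons_self
    have hm' : ∀ y ∈ m', 0 ≤ y := fun y hy => hm y (List.mem_cons_of_mem _ hy)
    set a1 := a ⊓ c with ha1def
    have ha1 : 0 ≤ a1 := le_inf ha hc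
    have ha1c : a1 ≤ c := inf_le_right
    have ha1a : a1 ≤ a := inf_le_left
    set b1 := c - a1 with hb1def
    have hb1 : 0 ≤ b1 := sub_nonneg.mpr ha1c
    have hb1b : b1 ≤ b := by
      have h1 : c - a ≤ b := by
        have : c ≤ a + b := by rw [hab]; exact le_add_of_nonneg_right (List.sum_nonneg hm')
        exact sub_le_iff_le_add'.mpr this
      have h2 : b1 = (c - a) ⊔ (c - c) := by rw [hb1def, ha1def, sub_inf]
      rw [h2, sub_self]
      exact sup_le h1 hb
    set a2 := a - a1 with ha2def
    set b2 := b - b1 with hb2def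
    have ha2 : 0 ≤ a2 := sub_nonneg.mpr ha1a
    have hb2 : 0 ≤ b2 := sub_nonneg.mpr hb1b
    have hsum : a2 + b2 = m'.sum := by
      have hc' : a1 + b1 = c := by rw [hb1def]; abel
      have : a + b = c + m'.sum := by simpa [List.sum_cons] using hab
      rw [ha2def, hb2def]
      have : a + b - c = m'.sum := by rw [this]; abel
      calc a - a1 + (b - b1) = a + b - (a1 + b1) := by abel
      _ = a + b - c := by rw [hc']
      _ = m'.sum := this
    obtain ⟨m1', m2', hp1, hp2, hs1, hs2, hlen, hzip⟩ :=
      aux_riesz_list m' hm' a2 b2 ha2 hb2 hsum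
    refine ⟨a1 :: m1', b1 :: m2', ?_, ?_, ?_, ?_, ?_, ?_⟩
    · intro y hy; rcases List.mem_cons.mp hy with h | h
      · exact h ▸ ha1
      · exact hp1 y h
    · intro y hy; rcases List.mem_cons.mp hy with h | h
      · exact h ▸ hb1
      · exact hp2 y h
    · rw [List.sum_cons, hs1, ha2def]; abel
    · rw [List.sum_cons, hs2, hb2def]; abel
    · simp [hlen]
    · rw [List.zipWith_cons_cons, ← hzip]
      congr 1
      rw [hb1def]; abel

end AuxLattice

section Op
variable {E F : Type*} [NormedAddCommGroup E] [Lattice E] [IsOrderedAddMonoid E] [HasSolidNorm E] [NormedSpace ℝ E]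
  [NormedAddCommGroup F] [Lattice F] [IsOrderedAddMonoid F] [HasSolidNorm F] [NormedSpace ℝ F]

variable {E F : Type*} [NormedAddCommGroup E] [Lattice E] [IsOrderedAddMonoid E] [HasSolidNorm E] [NormedSpace ℝ E]
  [NormedAddCommGroup F] [Lattice F] [IsOrderedAddMonoid F] [HasSolidNorm F] [NormedSpace ℝ F]

lemma aux_sum_map_zipWith_le (f : E → F) (hf : ∀ a b : E, f (a + b) ≤ f a + f b) :
    ∀ m1 m2 : List E, m1.length = m2.length →
      ((List.zipWith (· + ·) m1 m2).map f).sum ≤ (m1.map f).sum + (m2.map f).sum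
  | [], [], _ => by simp
  | [], (b :: m2), h => by simp at h
  | (a :: m1), [], h => by simp at h
  | (a :: m1), (b :: m2), h => by
    simp only [List.zipWith_cons_cons, List.map_cons, List.sum_cons]
    have ih := aux_sum_map_zipWith_le f hf m1 m2 (by simpa using h)
    calc f (a + b) + ((List.zipWith (· + ·) m1 m2).map f).sum
        ≤ (f a + f b) + ((m1.map f).sum + (m2.map f).sum) := add_le_add (hf a b) ih
      _ = f a + (m1.map f).sum + (f b + (m2.map f).sum) := by abel

/-- the sum `∑ |T lᵢ|` over a list. -/
noncomputable def tAbsSum (T : E →L[ℝ] F) (l : List E) : F := (l.map (fun y => |T y|)).sum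

lemma tAbsSum_nonneg (T : E →L[ℝ] F) (l : List E) : 0 ≤ tAbsSum T l := by
  apply List.sum_nonneg
  intro x hx
  obtain ⟨y, _, rfl⟩ := List.mem_map.mp hx
  exact abs_nonneg _

lemma tAbsSum_cons (T : E →L[ℝ] F) (a : E) (l : List E) :
    tAbsSum T (a :: l) = |T a| + tAbsSum T l := by
  simp [tAbsSum]

lemma abs_apply_add_le (T : E →L[ℝ] F) (a b : E) : |T (a + b)| ≤ |T a| + |T b| := by
  rw [map_add]; exact abs_add_le _ _

lemma tAbsSum_append (T : E →L[ℝ] F) (l1 l2 : List E) :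
    tAbsSum T (l1 ++ l2) = tAbsSum T l1 + tAbsSum T l2 := by
  simp [tAbsSum]

lemma abs_apply_sum_le (T : E →L[ℝ] F) : ∀ l : List E, |T l.sum| ≤ tAbsSum T l
  | [] => by simp [tAbsSum]
  | (a :: l) => by
    simp only [List.sum_cons, tAbsSum, List.map_cons]
    calc |T (a + l.sum)| ≤ |T a| + |T l.sum| := abs_apply_add_le T a l.sum
      _ ≤ |T a| + tAbsSum T l := add_le_add_right (abs_apply_sum_le T l) _
      _ = (List.map (fun y => |T y|) (a :: l)).sum := by simp [tAbsSum]

lemma tAbsSum_zipWith_le (T : E →L[ℝ] F) (m1 m2 : List E) (h : m1.length = m2.length) :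
    tAbsSum T (List.zipWith (· + ·) m1 m2) ≤ tAbsSum T m1 + tAbsSum T m2 :=
  aux_sum_map_zipWith_le (fun y => |T y|) (fun a b => abs_apply_add_le T a b) m1 m2 h

/-- the key refinement lemma: common refinement dominating two decompositions. -/
lemma aux_refine (T : E →L[ℝ] F) :
    ∀ l m : List E, (∀ y ∈ l, 0 ≤ y) → (∀ y ∈ m, 0 ≤ y) → l.sum = m.sum →
    ∃ r : List E, (∀ y ∈ r, 0 ≤ y) ∧ r.sum = l.sum ∧
      tAbsSum T l ≤ tAbsSum T r ∧ tAbsSum T m ≤ tAbsSum T r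
  | [], m, hl, hm, h => by
    refine ⟨m, hm, by simp [← h], by simpa [tAbsSum] using tAbsSum_nonneg T m, le_rfl⟩
  | (a :: l'), m, hl, hm, h => by
    have ha : 0 ≤ a := hl a List.mem_cons_self
    have hl' : ∀ y ∈ l', 0 ≤ y := fun y hy => hl y (List.mem_cons_of_mem _ hy)
    have hsum : a + l'.sum = m.sum := by simpa [List.sum_cons] using h
    obtain ⟨m1, m2, hp1, hp2, hs1, hs2, hlen, hzip⟩ :=
      aux_riesz_list m hm a l'.sum ha (List.sum_nonneg hl') hsum
    obtain ⟨r', hr'pos, hr'sum, hr'1, hr'2⟩ := aux_refine T l' m2 hl' hp2 hs2.symm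
    refine ⟨m1 ++ r', ?_, ?_, ?_, ?_⟩
    · intro y hy; rcases List.mem_append.mp hy with h' | h'
      · exact hp1 y h'
      · exact hr'pos y h'
    · rw [List.sum_append, hs1, hr'sum, List.sum_cons]
    · rw [tAbsSum_append, tAbsSum_cons]
      refine add_le_add ?_ hr'1
      calc |T a| = |T m1.sum| := by rw [hs1]
        _ ≤ tAbsSum T m1 := abs_apply_sum_le T m1
    · rw [tAbsSum_append, hzip]
      calc tAbsSum T (List.zipWith (· + ·) m1 m2) ≤ tAbsSum T m1 + tAbsSum T m2 :=
            tAbsSum_zipWith_le T m1 m2 hlen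
        _ ≤ tAbsSum T m1 + tAbsSum T r' := add_le_add_right hr'2 _

/-- the set of sums `∑ |T lᵢ|` over positive decompositions of `x`. -/
def decompSums (T : E →L[ℝ] F) (x : E) : Set F :=
  {z | ∃ l : List E, (∀ y ∈ l, 0 ≤ y) ∧ l.sum = x ∧ z = tAbsSum T l}

lemma abs_mem_decompSums (T : E →L[ℝ] F) {x : E} (hx : 0 ≤ x) : |T x| ∈ decompSums T x :=
  ⟨[x], by simpa using hx, by simp, by simp [tAbsSum]⟩

lemma norm_sum_of_pos_list (hL : ∀ x y : E, 0 ≤ x → 0 ≤ y → ‖x + y‖ = ‖x‖ + ‖y‖) :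
    ∀ l : List E, (∀ y ∈ l, 0 ≤ y) → ‖l.sum‖ = (l.map norm).sum
  | [], _ => by simp
  | (a :: l), h => by
    have ha : 0 ≤ a := h a List.mem_cons_self
    have hl : ∀ y ∈ l, 0 ≤ y := fun y hy => h y (List.mem_cons_of_mem _ hy)
    rw [List.sum_cons, hL a l.sum ha (List.sum_nonneg hl), List.map_cons, List.sum_cons,
      norm_sum_of_pos_list hL l hl]

lemma tAbsSum_norm_le (T : E →L[ℝ] F) :
    ∀ l : List E, ‖tAbsSum T l‖ ≤ ‖T‖ * (l.map norm).sum
  | [] => by simp [tAbsSum]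
  | (a :: l) => by
    have h1 : tAbsSum T (a :: l) = |T a| + tAbsSum T l := by simp [tAbsSum]
    calc ‖tAbsSum T (a :: l)‖ ≤ ‖|T a|‖ + ‖tAbsSum T l‖ := by rw [h1]; exact norm_add_le _ _
      _ = ‖T a‖ + ‖tAbsSum T l‖ := by rw [norm_abs_eq_norm]
      _ ≤ ‖T‖ * ‖a‖ + ‖T‖ * (l.map norm).sum :=
          add_le_add (T.le_opNorm a) (tAbsSum_norm_le T l)
      _ = ‖T‖ * ((a :: l).map norm).sum := by rw [List.map_cons, List.sum_cons]; ring

lemma decompSums_norm_le (T : E →L[ℝ] F)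
    (hL : ∀ x y : E, 0 ≤ x → 0 ≤ y → ‖x + y‖ = ‖x‖ + ‖y‖) {x : E} {z : F}
    (hz : z ∈ decompSums T x) : ‖z‖ ≤ ‖T‖ * ‖x‖ := by
  obtain ⟨l, hpos, hsum, rfl⟩ := hz
  calc ‖tAbsSum T l‖ ≤ ‖T‖ * (l.map norm).sum := tAbsSum_norm_le T l
    _ = ‖T‖ * ‖x‖ := by rw [← norm_sum_of_pos_list hL l hpos, hsum]

lemma decompSums_nonneg (T : E →L[ℝ] F) {x : E} {z : F} (hz : z ∈ decompSums T x) : 0 ≤ z := by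
  obtain ⟨l, _, _, rfl⟩ := hz
  exact List.sum_nonneg (fun w hw => by
    obtain ⟨y, _, rfl⟩ := List.mem_map.mp hw; exact abs_nonneg _)

/-- decompSums is separable when `E` is separable. -/
lemma decompSums_isSeparable [SeparableSpace E] (T : E →L[ℝ] F) (x : E) :
    IsSeparable (decompSums T x) := by
  have hsc : ∀ n : ℕ, IsSeparable (Set.range (fun f : Fin n → E => ∑ i, |T (f i)|)) := by
    intro n
    refine isSeparable_range ?_
    refine continuous_finset_sum _ (fun i _ => ?_)
    have hTi : Continuous fun f : Fin n → E => T (f i) :=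
      T.continuous.comp (continuous_apply i)
    have : (fun f : Fin n → E => |T (f i)|) = fun f : Fin n → E => (T (f i)) ⊔ (-(T (f i))) := rfl
    rw [this]
    exact hTi.sup hTi.neg
  refine IsSeparable.mono (IsSeparable.iUnion hsc) ?_
  rintro z ⟨l, hpos, hsum, rfl⟩
  refine Set.mem_iUnion.mpr ⟨l.length, ⟨l.get, ?_⟩⟩
  have : tAbsSum T l = ∑ i : Fin l.length, |T (l.get i)| := by
    conv_lhs => rw [← List.ofFn_get l]
    rw [tAbsSum, List.map_ofFn, List.sum_ofFn]
    rfl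
  rw [this]


lemma decompSums_directedOn (T : E →L[ℝ] F) (x : E) :
    DirectedOn (· ≤ ·) (decompSums T x) := by
  rintro z1 ⟨l, hl, hls, rfl⟩ z2 ⟨m, hm, hms, rfl⟩
  obtain ⟨r, hr, hrs, h1, h2⟩ := aux_refine T l m hl hm (by rw [hls, hms])
  exact ⟨tAbsSum T r, ⟨r, hr, by rw [hrs, hls], rfl⟩, h1, h2⟩


end Op

section LUB
variable {F : Type*} [NormedAddCommGroup F] [Lattice F] [IsOrderedAddMonoid F] [HasSolidNorm F]

/-- a norm-bounded, separable, upward-directed set of positive elements has a LUB,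
given a sequentially Levi norm. -/
lemma exists_isLUB_of_separable
    (hLevi : ∀ x : ℕ → F, (∀ n, 0 ≤ x n) → Monotone x → (∃ M : ℝ, ∀ n, ‖x n‖ ≤ M) →
      ∃ s : F, IsLUB (Set.range x) s)
    (D : Set F) (hne : D.Nonempty) (hpos : ∀ z ∈ D, 0 ≤ z)
    (hdir : DirectedOn (· ≤ ·) D) (hbdd : ∃ M : ℝ, ∀ z ∈ D, ‖z‖ ≤ M)
    (hsep : IsSeparable D) : ∃ s : F, IsLUB D s := by
  obtain ⟨t, htD, htc, htcl⟩ := hsep.exists_countable_dense_subset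
  have htne : t.Nonempty := by
    rcases hne with ⟨d, hd⟩
    by_contra h
    rw [Set.not_nonempty_iff_eq_empty] at h
    have := htcl hd
    simp [h] at this
  obtain ⟨c, hc⟩ := htc.exists_eq_range htne
  have hcD : ∀ n, c n ∈ D := fun n => htD (hc ▸ Set.mem_range_self n)
  have step : ∀ (n : ℕ) (z : {w // w ∈ D}), ∃ z' : {w // w ∈ D},
      z.1 ≤ z'.1 ∧ c (n + 1) ≤ z'.1 := by
    intro n z
    obtain ⟨w, hwD, h1, h2⟩ := hdir z.1 z.2 (c (n + 1)) (hcD (n + 1))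
    exact ⟨⟨w, hwD⟩, h1, h2⟩
  choose step' hstep1 hstep2 using step
  set e : ℕ → {w // w ∈ D} := fun n => Nat.rec ⟨c 0, hcD 0⟩ step' n with he
  have he_succ : ∀ n, e (n + 1) = step' n (e n) := fun n => rfl
  have hemono : Monotone fun n => (e n).1 := by
    apply monotone_nat_of_le_succ
    intro n
    rw [he_succ]
    exact hstep1 n (e n)
  have hce : ∀ n, c n ≤ (e n).1 := by
    intro n
    cases n with
    | zero => exact le_rfl
    | succ m => rw [he_succ]; exact hstep2 m (e m)
  obtain ⟨M, hM⟩ := hbdd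
  obtain ⟨s, hs⟩ := hLevi (fun n => (e n).1) (fun n => hpos _ (e n).2) hemono
    ⟨M, fun n => hM _ (e n).2⟩
  refine ⟨s, ?_, ?_⟩
  · -- upper bound
    intro d hd
    have hd' : d ∈ closure t := htcl hd
    have hsub : t ⊆ {y : F | y ≤ s} := by
      rw [hc]
      rintro y ⟨n, rfl⟩
      exact (hce n).trans (hs.1 (Set.mem_range_self n))
    have hclosed : IsClosed {y : F | y ≤ s} := isClosed_Iic
    exact (hclosed.closure_subset_iff.mpr hsub) hd'
  · -- least
    intro b hb
    refine hs.2 ?_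
    rintro y ⟨n, rfl⟩
    exact hb (e n).2

end LUB

theorem continuous_operator_regular_of_separable_Lspace_seqLevi
    {E F : Type*}
    [NormedAddCommGroup E] [Lattice E] [IsOrderedAddMonoid E] [HasSolidNorm E] [NormedSpace ℝ E] [CompleteSpace E]
    [TopologicalSpace.SeparableSpace E]
    [NormedAddCommGroup F] [Lattice F] [IsOrderedAddMonoid F] [HasSolidNorm F] [NormedSpace ℝ F] [CompleteSpace F]
    (hLspace : ∀ x y : E, 0 ≤ x → 0 ≤ y → ‖x + y‖ = ‖x‖ + ‖y‖)
    (hLevi : HasSeqLeviNorm F)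
    (T : E →L[ℝ] F) :
    IsRegularOp T := by
  classical
  have hexists : ∀ x : E, 0 ≤ x → ∃ s, IsLUB (decompSums T x) s := by
    intro x hx
    exact exists_isLUB_of_separable hLevi _ ⟨|T x|, abs_mem_decompSums T hx⟩
      (fun z hz => decompSums_nonneg T hz) (decompSums_directedOn T x)
      ⟨‖T‖ * ‖x‖, fun z hz => decompSums_norm_le T hLspace hz⟩ (decompSums_isSeparable T x)
  choose p0 hp0 using hexists
  set p : E → F := fun x => if h : 0 ≤ x then p0 x h else 0 with hpdef
  have hp : ∀ {x : E}, 0 ≤ x → IsLUB (decompSums T x) (p x) := by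
    intro x hx
    simp only [hpdef, dif_pos hx]
    exact hp0 x hx
  have hTle : ∀ {x : E}, 0 ≤ x → |T x| ≤ p x := fun hx => (hp hx).1 (abs_mem_decompSums T hx)
  have hppos : ∀ {x : E}, 0 ≤ x → 0 ≤ p x := fun hx => le_trans (abs_nonneg _) (hTle hx)
  -- additivity on the cone
  have hadd : ∀ {x y : E}, 0 ≤ x → 0 ≤ y → p (x + y) = p x + p y := by
    intro x y hx hy
    have hxy : 0 ≤ x + y := add_nonneg hx hy
    have hlub : IsLUB (decompSums T (x + y)) (p x + p y) := by
      constructor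
      · rintro z ⟨l, hl, hls, rfl⟩
        obtain ⟨m1, m2, hq1, hq2, hs1, hs2, hlen, hzip⟩ :=
          aux_riesz_list l hl x y hx hy hls.symm
        have h1 : tAbsSum T m1 ≤ p x := (hp hx).1 ⟨m1, hq1, hs1, rfl⟩
        have h2 : tAbsSum T m2 ≤ p y := (hp hy).1 ⟨m2, hq2, hs2, rfl⟩
        calc tAbsSum T l ≤ tAbsSum T m1 + tAbsSum T m2 := by
              rw [hzip]; exact tAbsSum_zipWith_le T m1 m2 hlen
          _ ≤ p x + p y := add_le_add h1 h2
      · intro w hw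
        have key : ∀ z2 ∈ decompSums T y, ∀ z1 ∈ decompSums T x, z1 ≤ w - z2 := by
          rintro z2 ⟨m, hm, hms, rfl⟩ z1 ⟨l, hl, hls, rfl⟩
          have hmem : tAbsSum T l + tAbsSum T m ∈ decompSums T (x + y) := by
            refine ⟨l ++ m, ?_, ?_, (tAbsSum_append T l m).symm⟩
            · intro u hu
              rcases List.mem_append.mp hu with h | h
              · exact hl u h
              · exact hm u h
            · rw [List.sum_append, hls, hms]
          exact le_sub_iff_add_le.mpr (hw hmem)
        have key2 : ∀ z2 ∈ decompSums T y, z2 ≤ w - p x := by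
          intro z2 hz2
          have : p x ≤ w - z2 := (hp hx).2 (fun z1 hz1 => key z2 hz2 z1 hz1)
          exact le_sub_comm.mp this
        have : p y ≤ w - p x := (hp hy).2 key2
        exact add_le_of_le_sub_left this
    exact (hp hxy).unique hlub
  have hzero : p 0 = 0 := by
    have h := hadd (le_refl (0:E)) (le_refl (0:E))
    rw [add_zero] at h
    exact (left_eq_add.mp h)
  have hmono : ∀ {a b : E}, 0 ≤ a → a ≤ b → p a ≤ p b := by
    intro a b ha hab
    have h := hadd ha (sub_nonneg.mpr hab)
    rw [add_sub_cancel] at h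
    rw [h]
    exact le_add_of_nonneg_right (hppos (sub_nonneg.mpr hab))
  have hnsmul : ∀ (n : ℕ) {x : E}, 0 ≤ x → p (n • x) = n • p x := by
    intro n
    induction n with
    | zero => intro x hx; simp [hzero]
    | succ m ih =>
      intro x hx
      rw [succ_nsmul, hadd (nsmul_nonneg hx m) hx, ih hx, succ_nsmul]
  have hqsmul : ∀ (q : ℚ), 0 ≤ q → ∀ {x : E}, 0 ≤ x → p ((q:ℝ) • x) = (q:ℝ) • p x := by
    intro q hq x hx
    have hden : ((q.den : ℝ)) ≠ 0 := Nat.cast_ne_zero.mpr q.den_nz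
    have hnum : ((q.num.toNat : ℝ)) = ((q.num : ℝ)) := by
      exact_mod_cast congrArg (Int.cast : ℤ → ℝ) (Int.toNat_of_nonneg (Rat.num_nonneg.mpr hq))
    have h1 : (q.den : ℕ) • ((q:ℝ) • x) = q.num.toNat • x := by
      rw [← Nat.cast_smul_eq_nsmul ℝ, smul_smul, ← Nat.cast_smul_eq_nsmul ℝ q.num.toNat]
      congr 1
      rw [hnum, Rat.cast_def]
      field_simp
    have h2 : q.den • p ((q:ℝ) • x) = q.num.toNat • p x := by
      rw [← hnsmul q.den (aux_ratsmul_nonneg hq hx), h1, hnsmul q.num.toNat hx]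
    have h3 : ((q.den : ℝ)) • p ((q:ℝ) • x) = ((q.num : ℝ)) • p x := by
      rw [Nat.cast_smul_eq_nsmul, h2, ← hnum, Nat.cast_smul_eq_nsmul]
    calc p ((q:ℝ) • x) = ((q.den:ℝ)⁻¹ * (q.den:ℝ)) • p ((q:ℝ) • x) := by
          rw [inv_mul_cancel₀ hden, one_smul]
      _ = (q.den:ℝ)⁻¹ • (((q.den:ℝ)) • p ((q:ℝ) • x)) := by rw [mul_smul]
      _ = (q.den:ℝ)⁻¹ • (((q.num:ℝ)) • p x) := by rw [h3]
      _ = ((q.num:ℝ) / (q.den:ℝ)) • p x := by rw [← mul_smul, div_eq_inv_mul]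
      _ = (q:ℝ) • p x := by rw [← Rat.cast_def]
  -- boundedness on the cone
  have hbdd : ∃ C : ℝ, ∀ x : E, 0 ≤ x → ‖p x‖ ≤ C * ‖x‖ := by
    by_contra hcon
    push_neg at hcon
    have hchoice : ∀ n : ℕ, ∃ y : E, 0 ≤ y ∧ ((n:ℝ) * 2^n) * ‖y‖ < ‖p y‖ := fun n =>
      hcon ((n:ℝ) * 2^n)
    choose y hy hylt using hchoice
    have hynorm : ∀ n, 0 < ‖y n‖ := by
      intro n
      rcases eq_or_lt_of_le (norm_nonneg (y n)) with h | h
      · exfalso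
        have h0 : y n = 0 := norm_eq_zero.mp h.symm
        have := hylt n
        rw [h0, hzero] at this
        simp at this
      · exact h
    have hrpos : ∀ n : ℕ, (0:ℝ) < ((2:ℝ)^n * ‖y n‖)⁻¹ := by
      intro n
      exact inv_pos.mpr (mul_pos (pow_pos two_pos n) (hynorm n))
    have hqex : ∀ n : ℕ, ∃ q : ℚ, (((2:ℝ)^n * ‖y n‖)⁻¹/2) < (q:ℝ) ∧
        (q:ℝ) < ((2:ℝ)^n * ‖y n‖)⁻¹ := by
      intro n
      exact exists_rat_btwn (by linarith [hrpos n])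
    choose q hq1 hq2 using hqex
    have hqpos : ∀ n, (0:ℝ) < (q n : ℝ) := fun n => lt_trans (half_pos (hrpos n)) (hq1 n)
    set x : ℕ → E := fun n => ((q n : ℝ)) • y n with hxdef
    have hxpos : ∀ n, 0 ≤ x n := fun n =>
      aux_ratsmul_nonneg (by exact_mod_cast (hqpos n).le) (hy n)
    have hxnorm : ∀ n, ‖x n‖ ≤ (2:ℝ)⁻¹^n := by
      intro n
      have : ‖x n‖ = (q n : ℝ) * ‖y n‖ := by
        show ‖(q n : ℝ) • y n‖ = _
        rw [norm_smul, Real.norm_eq_abs, abs_of_pos (hqpos n)]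
      rw [this]
      have h2 : (q n : ℝ) * ‖y n‖ ≤ ((2:ℝ)^n * ‖y n‖)⁻¹ * ‖y n‖ :=
        mul_le_mul_of_nonneg_right (hq2 n).le (norm_nonneg _)
      have h3 : ((2:ℝ)^n * ‖y n‖)⁻¹ * ‖y n‖ = ((2:ℝ)^n)⁻¹ := by
        rw [mul_inv, mul_assoc, inv_mul_cancel₀ (ne_of_gt (hynorm n)), mul_one]
      rw [h3] at h2
      rw [inv_pow]
      exact h2
    have hpxnorm : ∀ n : ℕ, (n:ℝ)/2 < ‖p (x n)‖ := by
      intro n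
      have hp1 : p (x n) = (q n : ℝ) • p (y n) :=
        hqsmul (q n) (by exact_mod_cast (hqpos n).le) (hy n)
      have hp2 : ‖p (x n)‖ = (q n : ℝ) * ‖p (y n)‖ := by
        rw [hp1, norm_smul, Real.norm_eq_abs, abs_of_pos (hqpos n)]
      rw [hp2]
      have h4 : ((2:ℝ)^n * ‖y n‖)⁻¹/2 * ((n:ℝ) * 2^n * ‖y n‖) ≤
          (q n : ℝ) * ((n:ℝ) * 2^n * ‖y n‖) := by
        apply mul_le_mul_of_nonneg_right (hq1 n).le
        positivity
      have h5 : ((2:ℝ)^n * ‖y n‖)⁻¹/2 * ((n:ℝ) * 2^n * ‖y n‖) = (n:ℝ)/2 := by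
        have hne : ((2:ℝ)^n * ‖y n‖) ≠ 0 := ne_of_gt (mul_pos (pow_pos two_pos n) (hynorm n))
        have hne2 : ‖y n‖ ≠ 0 := ne_of_gt (hynorm n)
        field_simp
      have h6 : (q n : ℝ) * ((n:ℝ) * 2^n * ‖y n‖) < (q n : ℝ) * ‖p (y n)‖ :=
        mul_lt_mul_of_pos_left (hylt n) (hqpos n)
      calc (n:ℝ)/2 = ((2:ℝ)^n * ‖y n‖)⁻¹/2 * ((n:ℝ) * 2^n * ‖y n‖) := h5.symm
        _ ≤ (q n : ℝ) * ((n:ℝ) * 2^n * ‖y n‖) := h4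
        _ < (q n : ℝ) * ‖p (y n)‖ := h6
    have hsummable : Summable x := by
      refine Summable.of_norm_bounded ?_ hxnorm
      exact summable_geometric_of_lt_one (by norm_num) (by norm_num)
    set xs : E := ∑' n, x n with hxs
    have hxle : ∀ m, x m ≤ xs := by
      intro m
      exact Summable.le_tsum hsummable m (fun n _ => hxpos n)
    have hxs0 : 0 ≤ xs := tsum_nonneg hxpos
    have : ∀ n : ℕ, (n:ℝ)/2 < ‖p xs‖ := by
      intro n
      have h7 : p (x n) ≤ p xs := hmono (hxpos n) (hxle n)
      have h8 : ‖p (x n)‖ ≤ ‖p xs‖ := by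
        apply norm_le_norm_of_abs_le_abs
        rw [abs_of_nonneg (hppos (hxpos n)), abs_of_nonneg (hppos hxs0)]
        exact h7
      exact lt_of_lt_of_le (hpxnorm n) h8
    obtain ⟨n, hn⟩ := exists_nat_gt (2 * ‖p xs‖)
    have := this n
    linarith
  obtain ⟨C0, hC0⟩ := hbdd
  set C : ℝ := max C0 0 with hCdef
  have hCnn : 0 ≤ C := le_max_right _ _
  have hC : ∀ x : E, 0 ≤ x → ‖p x‖ ≤ C * ‖x‖ := fun x hx =>
    (hC0 x hx).trans (mul_le_mul_of_nonneg_right (le_max_left _ _) (norm_nonneg _))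
  -- the extension to the whole space
  set S0 : E → F := fun x => p (x⁺) - p (x⁻) with hS0def
  have hS0pos : ∀ {x : E}, 0 ≤ x → S0 x = p x := by
    intro x hx
    rw [hS0def]
    simp only [posPart_eq_self.mpr hx, negPart_eq_zero.mpr hx, hzero, sub_zero]
  have hkey : ∀ a b : E, 0 ≤ a → 0 ≤ b → S0 (a - b) = p a - p b := by
    intro a b ha hb
    have h1 : (a - b)⁺ + b = (a - b)⁻ + a := by
      have h0 : (a - b)⁺ = (a - b) + (a - b)⁻ :=
        sub_eq_iff_eq_add.mp (posPart_sub_negPart (a - b))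
      rw [h0]; abel
    have h2 : p ((a - b)⁺) + p b = p ((a - b)⁻) + p a := by
      rw [← hadd (posPart_nonneg _) hb, ← hadd (negPart_nonneg _) ha, h1]
    rw [hS0def]
    rw [sub_eq_sub_iff_add_eq_add, h2]
    exact add_comm _ _
  have hS0add : ∀ x y : E, S0 (x + y) = S0 x + S0 y := by
    intro x y
    have hxy : x + y = (x⁺ + y⁺) - (x⁻ + y⁻) := by
      calc x + y = (x⁺ - x⁻) + (y⁺ - y⁻) := by
            rw [posPart_sub_negPart, posPart_sub_negPart]
        _ = (x⁺ + y⁺) - (x⁻ + y⁻) := by abel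
    rw [hxy, hkey _ _ (add_nonneg (posPart_nonneg x) (posPart_nonneg y))
        (add_nonneg (negPart_nonneg x) (negPart_nonneg y)),
      hadd (posPart_nonneg x) (posPart_nonneg y), hadd (negPart_nonneg x) (negPart_nonneg y)]
    rw [hS0def]
    beta_reduce
    abel
  have hposle : ∀ z : E, ‖z⁺‖ ≤ ‖z‖ ∧ ‖z⁻‖ ≤ ‖z‖ := by
    intro z
    constructor
    · apply norm_le_norm_of_abs_le_abs
      rw [abs_of_nonneg (posPart_nonneg z)]
      rw [← posPart_add_negPart z]
      exact le_add_of_nonneg_right (negPart_nonneg z)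
    · apply norm_le_norm_of_abs_le_abs
      rw [abs_of_nonneg (negPart_nonneg z)]
      rw [← posPart_add_negPart z]
      exact le_add_of_nonneg_left (posPart_nonneg z)
  have hS0bound : ∀ x : E, ‖S0 x‖ ≤ (2*C) * ‖x‖ := by
    intro x
    rw [hS0def]
    calc ‖p (x⁺) - p (x⁻)‖ ≤ ‖p (x⁺)‖ + ‖p (x⁻)‖ := norm_sub_le _ _
      _ ≤ C * ‖x⁺‖ + C * ‖x⁻‖ :=
          add_le_add (hC _ (posPart_nonneg x)) (hC _ (negPart_nonneg x))
      _ ≤ C * ‖x‖ + C * ‖x‖ :=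
          add_le_add (mul_le_mul_of_nonneg_left (hposle x).1 hCnn)
            (mul_le_mul_of_nonneg_left (hposle x).2 hCnn)
      _ = (2*C) * ‖x‖ := by ring
  set S0hom : E →+ F := AddMonoidHom.mk' S0 hS0add with hS0hom
  have hS0cont : Continuous S0 := by
    have hlip : LipschitzWith (Real.toNNReal (2*C)) S0 := by
      apply LipschitzWith.of_dist_le_mul
      intro a b
      rw [dist_eq_norm, dist_eq_norm]
      have : S0 a - S0 b = S0 (a - b) := (map_sub S0hom a b).symm
      rw [this]
      calc ‖S0 (a-b)‖ ≤ (2*C) * ‖a - b‖ := hS0bound _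
        _ = (Real.toNNReal (2*C) : ℝ) * ‖a-b‖ := by
            rw [Real.coe_toNNReal _ (by linarith)]
    exact hlip.continuous
  have hS0q : ∀ (c : ℚ) (z : E), S0 ((c:ℝ) • z) = (c:ℝ) • S0 z := by
    intro c z
    have hden : ((c.den : ℝ)) ≠ 0 := Nat.cast_ne_zero.mpr c.den_nz
    have h1 : (c.den : ℕ) • ((c:ℝ) • z) = c.num • z := by
      rw [← Nat.cast_smul_eq_nsmul ℝ, smul_smul, ← Int.cast_smul_eq_zsmul ℝ]
      congr 1
      rw [Rat.cast_def]
      field_simp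
    have h2 : c.den • S0 ((c:ℝ) • z) = c.num • S0 z := by
      rw [show S0 = ⇑S0hom from rfl, ← map_nsmul S0hom, h1, map_zsmul S0hom]
    have h3 : ((c.den : ℝ)) • S0 ((c:ℝ) • z) = ((c.num : ℝ)) • S0 z := by
      rw [Nat.cast_smul_eq_nsmul, h2, Int.cast_smul_eq_zsmul]
    calc S0 ((c:ℝ) • z) = ((c.den:ℝ)⁻¹ * (c.den:ℝ)) • S0 ((c:ℝ) • z) := by
          rw [inv_mul_cancel₀ hden, one_smul]
      _ = (c.den:ℝ)⁻¹ • (((c.den:ℝ)) • S0 ((c:ℝ) • z)) := by rw [mul_smul]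
      _ = (c.den:ℝ)⁻¹ • (((c.num:ℝ)) • S0 z) := by rw [h3]
      _ = ((c.num:ℝ) / (c.den:ℝ)) • S0 z := by rw [← mul_smul, div_eq_inv_mul]
      _ = (c:ℝ) • S0 z := by rw [← Rat.cast_def]
  have hS0smul : ∀ (c : ℝ) (z : E), S0 (c • z) = c • S0 z := by
    intro c z
    have hfeq : (fun c : ℝ => S0 (c • z)) = fun c : ℝ => c • S0 z := by
      refine Continuous.ext_on (Rat.denseRange_cast (𝕜 := ℝ)) ?_ ?_ ?_
      · exact hS0cont.comp (continuous_id.smul continuous_const)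
      · exact continuous_id.smul continuous_const
      · rintro _ ⟨c', rfl⟩
        exact hS0q c' z
    exact congrFun hfeq c
  set S1 : E →ₗ[ℝ] F :=
    { toFun := S0, map_add' := hS0add, map_smul' := hS0smul } with hS1
  set S : E →L[ℝ] F := S1.mkContinuousOfExistsBound ⟨2*C, hS0bound⟩ with hS
  have hSapp : ∀ z : E, S z = S0 z := fun z => rfl
  refine ⟨S, S - T, ?_, ?_, ?_⟩
  · intro z hz
    rw [hSapp z, hS0pos hz]
    exact hppos hz
  · intro z hz
    have h1 : (S - T) z = S0 z - T z := by
      rw [ContinuousLinearMap.sub_apply, hSapp]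
    rw [h1, hS0pos hz]
    have h2 : T z ≤ |T z| := le_abs_self _
    have h3 : |T z| ≤ p z := hTle hz
    simpa [sub_nonneg] using h2.trans h3
  · ext z
    simp
end

section
/- Let F be a Banach lattice and let (e_n)_{n≥1} be a sequence of pairwise disjoint positive elements of F such that ‖Σ_{n∈σ} e_n‖ ≤ 1 for every finite subset σ ⊆ ℕ, but the set {e_n : n ∈ ℕ} is not bounded above in F. Then there exists a continuous linear operator S : L¹[0,2π] → F with ‖S‖ ≤ 1 (namely Sf = Σ_{n=1}^∞ (∫_0^{2π} f(t)cos(nt) dt) e_n, the series converging in norm) which is not regular. -/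
open MeasureTheory Real in
/-- The measure on `ℝ` giving the Banach lattice `L¹[0, 2π]` as `Lp ℝ 1 μ2π`. -/
noncomputable def μ2π : Measure ℝ := volume.restrict (Set.Icc (0 : ℝ) (2 * π))

open MeasureTheory Real Filter Topology FourierTransform

/-! ### Auxiliary facts about real scalar multiplication in normed lattice groups -/

section LatticeSmul
variable {G : Type*} [NormedAddCommGroup G] [Lattice G] [HasSolidNorm G] [IsOrderedAddMonoid G]
  [NormedSpace ℝ G]

omit [NormedSpace ℝ G] in
lemma aux_pow_two_nsmul_cancel : ∀ (k : ℕ) {y : G}, 0 ≤ (2^k) • y → 0 ≤ y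
  | 0, y, h => by simpa using h
  | (k+1), y, h => by
      rw [pow_succ, mul_nsmul] at h
      exact aux_pow_two_nsmul_cancel k (nsmul_two_semiclosed h)

lemma real_smul_nonneg' {r : ℝ} (hr : 0 ≤ r) {x : G} (hx : 0 ≤ x) : 0 ≤ r • x := by
  have key : ∀ k : ℕ, 0 ≤ ((⌊r * 2^k⌋₊ : ℝ) / 2^k) • x := by
    intro k
    apply aux_pow_two_nsmul_cancel k
    have h2 : (2:ℝ)^k ≠ 0 := by positivity
    have heq : (2^k : ℕ) • (((⌊r * 2^k⌋₊ : ℝ) / 2^k) • x) = (⌊r * 2^k⌋₊ : ℕ) • x := by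
      rw [← Nat.cast_smul_eq_nsmul ℝ ((2:ℕ)^k), ← Nat.cast_smul_eq_nsmul ℝ (⌊r * 2^k⌋₊), smul_smul]
      congr 1
      push_cast
      field_simp
    rw [heq]
    exact nsmul_nonneg hx _
  have h1 : Tendsto (fun k : ℕ => (⌊r * 2^k⌋₊ : ℝ) / 2^k) atTop (𝓝 r) := by
    have hlow : ∀ k : ℕ, r - (1/2:ℝ)^k ≤ (⌊r * 2^k⌋₊ : ℝ) / 2^k := by
      intro k
      have h2 : (0:ℝ) < 2^k := by positivity
      have hfl : r * 2^k - 1 ≤ (⌊r * 2^k⌋₊ : ℝ) := by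
        linarith [Nat.lt_floor_add_one (r * 2^k)]
      have h3 : (r * 2^k - 1) / 2^k ≤ (⌊r * 2^k⌋₊ : ℝ) / 2^k := by gcongr
      calc r - (1/2:ℝ)^k = (r * 2^k - 1) / 2^k := by field_simp; rw [sub_mul, ← mul_pow, one_div, inv_mul_cancel₀ two_ne_zero, one_pow]
        _ ≤ (⌊r * 2^k⌋₊ : ℝ) / 2^k := h3
    have hup : ∀ k : ℕ, (⌊r * 2^k⌋₊ : ℝ) / 2^k ≤ r := by
      intro k
      have h2 : (0:ℝ) < 2^k := by positivity
      rw [div_le_iff₀ h2]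
      exact Nat.floor_le (by positivity)
    have hl : Tendsto (fun k : ℕ => r - (1/2:ℝ)^k) atTop (𝓝 r) := by
      have := tendsto_pow_atTop_nhds_zero_of_lt_one (by norm_num : (0:ℝ) ≤ 1/2)
        (by norm_num : (1/2:ℝ) < 1)
      simpa using tendsto_const_nhds.sub this
    exact tendsto_of_tendsto_of_tendsto_of_le_of_le hl tendsto_const_nhds hlow hup
  exact isClosed_nonneg.mem_of_tendsto (h1.smul_const x) (Eventually.of_forall key)

lemma real_smul_le_smul {r : ℝ} (hr : 0 ≤ r) {x y : G} (h : x ≤ y) : r • x ≤ r • y :=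
  sub_nonneg.mp (by rw [← smul_sub]; exact real_smul_nonneg' hr (sub_nonneg.mpr h))

lemma key_norm_bound (e : ℕ → G) (hpos : ∀ n, 0 ≤ e n)
    (hsum : ∀ σ : Finset ℕ, ‖∑ n ∈ σ, e n‖ ≤ 1)
    (a : ℕ → ℝ) (σ : Finset ℕ) {M : ℝ} (hM : 0 ≤ M) (ha : ∀ n ∈ σ, |a n| ≤ M) :
    ‖∑ n ∈ σ, a n • e n‖ ≤ M := by
  have hS : 0 ≤ ∑ n ∈ σ, e n := Finset.sum_nonneg fun n _ => hpos n
  have hterm : ∀ n ∈ σ, ∀ b c : ℝ, b ≤ c → b • e n ≤ c • e n := by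
    intro n _ b c hbc
    exact sub_nonneg.mp (by rw [← sub_smul]; exact real_smul_nonneg' (by linarith) (hpos n))
  have hub : ∑ n ∈ σ, a n • e n ≤ M • ∑ n ∈ σ, e n := by
    rw [Finset.smul_sum]
    exact Finset.sum_le_sum fun n hn => hterm n hn _ _ (abs_le.mp (ha n hn)).2
  have hlb : (-M) • ∑ n ∈ σ, e n ≤ ∑ n ∈ σ, a n • e n := by
    rw [Finset.smul_sum]
    exact Finset.sum_le_sum fun n hn => hterm n hn _ _ (abs_le.mp (ha n hn)).1
  have habs : |∑ n ∈ σ, a n • e n| ≤ |M • ∑ n ∈ σ, e n| := by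
    rw [abs_of_nonneg (real_smul_nonneg' hM hS)]
    refine abs_le'.mpr ⟨hub, ?_⟩
    rw [neg_le]
    rwa [neg_smul] at hlb
  calc ‖∑ n ∈ σ, a n • e n‖ ≤ ‖M • ∑ n ∈ σ, e n‖ := HasSolidNorm.solid habs
    _ = M * ‖∑ n ∈ σ, e n‖ := by rw [norm_smul, Real.norm_of_nonneg hM]
    _ ≤ M * 1 := mul_le_mul_of_nonneg_left (hsum σ) hM
    _ = M := mul_one M

end LatticeSmul

/-! ### The Fourier coefficients as functions on `L¹[0,2π]` -/

noncomputable def coefI (n : ℕ) (f : Lp ℝ 1 μ2π) : ℝ :=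
  ∫ t, f t * cos (((n : ℝ) + 1) * t) ∂μ2π

lemma integrable_aux {g : ℝ → ℝ} (hg : Integrable g μ2π) (c : ℝ) :
    Integrable (fun t => g t * cos (c * t)) μ2π := by
  have h := hg.bdd_mul (f := fun t => cos (c * t))
    ((Real.continuous_cos.comp (continuous_const.mul continuous_id)).aestronglyMeasurable)
    (c := 1) (ae_of_all _ fun x => by simpa using Real.abs_cos_le_one _)
  exact h.congr (Eventually.of_forall fun t => mul_comm _ _)

lemma integrable_mul_cos (f : Lp ℝ 1 μ2π) (c : ℝ) :
    Integrable (fun t => f t * cos (c * t)) μ2π :=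
  integrable_aux (L1.integrable_coeFn f) c

lemma abs_coefI_le (n : ℕ) (f : Lp ℝ 1 μ2π) : |coefI n f| ≤ ‖f‖ := by
  rw [← Real.norm_eq_abs, L1.norm_eq_integral_norm, coefI]
  calc ‖∫ t, f t * cos (((n : ℝ) + 1) * t) ∂μ2π‖
      ≤ ∫ t, ‖f t * cos (((n : ℝ) + 1) * t)‖ ∂μ2π := norm_integral_le_integral_norm _
    _ ≤ ∫ t, ‖f t‖ ∂μ2π := by
        refine integral_mono (integrable_mul_cos f _).norm (L1.integrable_coeFn f).norm ?_
        intro t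
        simp only [norm_mul, Real.norm_eq_abs]
        exact mul_le_of_le_one_right (abs_nonneg _) (Real.abs_cos_le_one _)

lemma coefI_add (n : ℕ) (f g : Lp ℝ 1 μ2π) :
    coefI n (f + g) = coefI n f + coefI n g := by
  have h1 : (fun t => (↑↑(f + g) : ℝ → ℝ) t * cos (((n : ℝ) + 1) * t))
      =ᵐ[μ2π] fun t => f t * cos (((n : ℝ) + 1) * t) + g t * cos (((n : ℝ) + 1) * t) :=
    (Lp.coeFn_add f g).mono fun t ht => by
      rw [Pi.add_apply] at ht
      beta_reduce
      rw [ht, add_mul]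
  rw [coefI, coefI, coefI, integral_congr_ae h1]
  exact integral_add (integrable_mul_cos f ((n:ℝ)+1)) (integrable_mul_cos g ((n:ℝ)+1))

lemma coefI_smul (n : ℕ) (r : ℝ) (f : Lp ℝ 1 μ2π) :
    coefI n (r • f) = r * coefI n f := by
  have h1 : (fun t => (↑↑(r • f) : ℝ → ℝ) t * cos (((n : ℝ) + 1) * t))
      =ᵐ[μ2π] fun t => r * (f t * cos (((n : ℝ) + 1) * t)) :=
    (Lp.coeFn_smul r f).mono fun t ht => by
      rw [Pi.smul_apply, smul_eq_mul] at ht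
      beta_reduce
      rw [ht, mul_assoc]
  rw [coefI, coefI, integral_congr_ae h1]
  exact integral_const_mul r _

lemma coefI_tendsto (f : Lp ℝ 1 μ2π) : Tendsto (fun n : ℕ => coefI n f) atTop (𝓝 0) := by
  set s : Set ℝ := Set.Icc (0 : ℝ) (2 * π) with hs
  set g : ℝ → ℂ := fun t => ((s.indicator (fun u => f u) t : ℝ) : ℂ) with hgdef
  have hind : Integrable (s.indicator (fun u => f u)) volume := by
    have hio : IntegrableOn (fun u => f u) s volume := L1.integrable_coeFn f
    exact hio.integrable_indicator measurableSet_Icc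
  have hg_int : Integrable g volume := hind.ofReal
  have hw : Tendsto (fun n : ℕ => ((n:ℝ)+1)/(2*π)) atTop (cocompact ℝ) := by
    have hat : Tendsto (fun n : ℕ => ((n:ℝ)+1)/(2*π)) atTop atTop := by
      apply Tendsto.atTop_div_const (by positivity)
      exact tendsto_atTop_add_const_right _ _ tendsto_natCast_atTop_atTop
    exact hat.mono_right (by rw [cocompact_eq_atBot_atTop]; exact le_sup_right)
  have H2 := (Real.tendsto_integral_exp_smul_cocompact g).comp hw
  have H3 := (Complex.continuous_re.tendsto 0).comp H2
  simp only [Complex.zero_re] at H3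
  refine H3.congr fun n => ?_
  show (∫ v : ℝ, 𝐞 (-(v * (((n:ℝ)+1)/(2*π)))) • g v).re = coefI n f
  set w : ℝ := ((n:ℝ)+1)/(2*π) with hwdef
  have hmul : Integrable (fun v => ((𝐞 (-(v*w)) : Circle) : ℂ) * g v) volume := by
    refine hg_int.bdd_mul (c := 1) ?_ (ae_of_all _ fun x => (Circle.norm_coe _).le)
    exact (Real.continuous_fourierChar.comp
      (continuous_id.mul continuous_const).neg).subtype_val.aestronglyMeasurable
  have hsmul : (fun v : ℝ => 𝐞 (-(v * w)) • g v)
      = fun v => ((𝐞 (-(v*w)) : Circle) : ℂ) * g v := by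
    funext v; simp [Circle.smul_def, smul_eq_mul]
  rw [hsmul]
  have h4 := (integral_re hmul).symm
  simp only [RCLike.re_eq_complex_re] at h4
  rw [h4]
  have hre : ∀ v : ℝ, (((𝐞 (-(v*w)) : Circle) : ℂ) * g v).re
      = s.indicator (fun t => f t * cos (((n : ℝ) + 1) * t)) v := by
    intro v
    have h2pi : (2 * π) ≠ 0 := by positivity
    have harg : 2 * π * -(v * w) = -(((n:ℝ)+1) * v) := by
      rw [hwdef]; field_simp
    rw [Real.fourierChar_apply, harg]
    have hmulre : ∀ (z : ℂ) (r : ℝ), (z * (r : ℂ)).re = z.re * r := fun z r => by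
      simp [Complex.mul_re]
    have hcalc : (Complex.exp (↑(-(((n:ℝ)+1) * v)) * Complex.I) * g v).re
        = Real.cos (-(((n:ℝ)+1) * v)) * s.indicator (fun u => f u) v := by
      rw [hgdef, hmulre, Complex.exp_ofReal_mul_I_re]
    rw [hcalc, Real.cos_neg]
    by_cases hv : v ∈ s
    · simp [Set.indicator_of_mem hv, mul_comm]
    · simp [Set.indicator_of_notMem hv]
  rw [integral_congr_ae (Eventually.of_forall hre), integral_indicator measurableSet_Icc]
  rfl

/-! ### Construction of the operator -/

section Op
variable {F : Type*} [NormedAddCommGroup F] [Lattice F] [HasSolidNorm F] [IsOrderedAddMonoid F]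
  [NormedSpace ℝ F] [CompleteSpace F]

noncomputable def esum (e : ℕ → F) (f : Lp ℝ 1 μ2π) (N : ℕ) : F :=
  ∑ n ∈ Finset.range N, coefI n f • e n

lemma esum_norm_le (e : ℕ → F) (hpos : ∀ n, 0 ≤ e n)
    (hsum : ∀ σ : Finset ℕ, ‖∑ n ∈ σ, e n‖ ≤ 1) (f : Lp ℝ 1 μ2π) (N : ℕ) :
    ‖esum e f N‖ ≤ ‖f‖ :=
  key_norm_bound e hpos hsum _ _ (norm_nonneg f) (fun n _ => abs_coefI_le n f)

lemma esum_cauchy (e : ℕ → F) (hpos : ∀ n, 0 ≤ e n)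
    (hsum : ∀ σ : Finset ℕ, ‖∑ n ∈ σ, e n‖ ≤ 1) (f : Lp ℝ 1 μ2π) :
    CauchySeq (esum e f) := by
  rw [Metric.cauchySeq_iff']
  intro ε hε
  obtain ⟨N, hN⟩ := (Metric.tendsto_atTop.mp (coefI_tendsto f)) (ε/2) (by linarith)
  refine ⟨N, fun n hn => ?_⟩
  rw [dist_eq_norm, esum, esum, ← Finset.sum_Ico_eq_sub _ hn]
  have hb : ‖∑ k ∈ Finset.Ico N n, coefI k f • e k‖ ≤ ε/2 := by
    refine key_norm_bound e hpos hsum _ _ (by linarith) (fun k hk => ?_)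
    have := hN k (Finset.mem_Ico.mp hk).1
    rw [Real.dist_eq, sub_zero] at this
    exact this.le
  linarith

noncomputable def Sfun (e : ℕ → F) (hpos : ∀ n, 0 ≤ e n)
    (hsum : ∀ σ : Finset ℕ, ‖∑ n ∈ σ, e n‖ ≤ 1) (f : Lp ℝ 1 μ2π) : F :=
  (cauchySeq_tendsto_of_complete (esum_cauchy e hpos hsum f)).choose

lemma Sfun_tendsto (e : ℕ → F) (hpos : ∀ n, 0 ≤ e n)
    (hsum : ∀ σ : Finset ℕ, ‖∑ n ∈ σ, e n‖ ≤ 1) (f : Lp ℝ 1 μ2π) :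
    Tendsto (esum e f) atTop (𝓝 (Sfun e hpos hsum f)) :=
  (cauchySeq_tendsto_of_complete (esum_cauchy e hpos hsum f)).choose_spec

lemma Sfun_norm_le (e : ℕ → F) (hpos : ∀ n, 0 ≤ e n)
    (hsum : ∀ σ : Finset ℕ, ‖∑ n ∈ σ, e n‖ ≤ 1) (f : Lp ℝ 1 μ2π) :
    ‖Sfun e hpos hsum f‖ ≤ ‖f‖ :=
  le_of_tendsto' (Sfun_tendsto e hpos hsum f).norm (esum_norm_le e hpos hsum f)

noncomputable def Sop (e : ℕ → F) (hpos : ∀ n, 0 ≤ e n)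
    (hsum : ∀ σ : Finset ℕ, ‖∑ n ∈ σ, e n‖ ≤ 1) : Lp ℝ 1 μ2π →L[ℝ] F :=
  LinearMap.mkContinuous
    { toFun := Sfun e hpos hsum
      map_add' := fun f g => by
        have h1 : ∀ N, esum e (f + g) N = esum e f N + esum e g N := fun N => by
          rw [esum, esum, esum, ← Finset.sum_add_distrib]
          exact Finset.sum_congr rfl fun n _ => by rw [coefI_add, add_smul]
        refine tendsto_nhds_unique (Sfun_tendsto e hpos hsum (f + g)) ?_
        exact ((Sfun_tendsto e hpos hsum f).add (Sfun_tendsto e hpos hsum g)).congr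
          fun N => (h1 N).symm
      map_smul' := fun r f => by
        have h1 : ∀ N, esum e (r • f) N = r • esum e f N := fun N => by
          rw [esum, esum, Finset.smul_sum]
          exact Finset.sum_congr rfl fun n _ => by rw [coefI_smul, mul_smul]
        refine tendsto_nhds_unique (Sfun_tendsto e hpos hsum (r • f)) ?_
        exact ((Sfun_tendsto e hpos hsum f).const_smul r).congr fun N => (h1 N).symm }
    1 (fun f => by simpa using Sfun_norm_le e hpos hsum f)

lemma Sop_norm_le (e : ℕ → F) (hpos : ∀ n, 0 ≤ e n)
    (hsum : ∀ σ : Finset ℕ, ‖∑ n ∈ σ, e n‖ ≤ 1) : ‖Sop e hpos hsum‖ ≤ 1 :=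
  LinearMap.mkContinuous_norm_le _ zero_le_one _

lemma Sop_apply_tendsto (e : ℕ → F) (hpos : ∀ n, 0 ≤ e n)
    (hsum : ∀ σ : Finset ℕ, ‖∑ n ∈ σ, e n‖ ≤ 1) (f : Lp ℝ 1 μ2π) :
    Tendsto (esum e f) atTop (𝓝 (Sop e hpos hsum f)) :=
  Sfun_tendsto e hpos hsum f

end Op

/-! ### The test functions `1` and `cos ((k+1) t)` in `L¹[0,2π]` -/

instance : IsFiniteMeasure μ2π :=
  ⟨by rw [μ2π, Measure.restrict_apply_univ]; exact measure_Icc_lt_top⟩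

lemma memL_one : MemLp (fun _ : ℝ => (1:ℝ)) 1 μ2π := memLp_const 1

noncomputable def oneL : Lp ℝ 1 μ2π := memL_one.toLp _

lemma memL_cos (k : ℕ) : MemLp (fun t : ℝ => cos (((k:ℝ)+1) * t)) 1 μ2π :=
  MemLp.of_bound
    ((Real.continuous_cos.comp (continuous_const.mul continuous_id)).aestronglyMeasurable)
    1 (ae_of_all _ fun t => by simpa using Real.abs_cos_le_one _)

noncomputable def coskL (k : ℕ) : Lp ℝ 1 μ2π := (memL_cos k).toLp _

lemma oneL_coeFn : (↑↑oneL : ℝ → ℝ) =ᵐ[μ2π] fun _ => (1:ℝ) := memL_one.coeFn_toLp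

lemma coskL_coeFn (k : ℕ) :
    (↑↑(coskL k) : ℝ → ℝ) =ᵐ[μ2π] fun t => cos (((k:ℝ)+1) * t) := (memL_cos k).coeFn_toLp

lemma integral_cos_int_mul (m : ℝ) (hm : ∃ j : ℤ, m = j) :
    ∫ x in (0:ℝ)..(2*π), cos (m * x) = if m = 0 then 2*π else 0 := by
  by_cases h0 : m = 0
  · simp [h0]
  · rw [if_neg h0]
    rw [intervalIntegral.integral_comp_mul_left (fun x => cos x) h0]
    rw [integral_cos]
    obtain ⟨j, rfl⟩ := hm
    have h1 : (j:ℝ) * (2*π) = (2*j : ℤ) * π := by push_cast; ring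
    have h2 : (j:ℝ) * 0 = 0 := by ring
    rw [h1, h2, Real.sin_int_mul_pi, Real.sin_zero, sub_zero, smul_zero]

lemma integral_cos_mul_cos_orth (a b : ℕ) :
    (∫ x in (0:ℝ)..(2*π), cos (((a:ℝ)+1) * x) * cos (((b:ℝ)+1) * x))
      = if a = b then π else 0 := by
  have hprod : ∀ x : ℝ, cos (((a:ℝ)+1) * x) * cos (((b:ℝ)+1) * x)
      = cos ((((a:ℝ)) - b) * x) / 2 + cos ((((a:ℝ)) + b + 2) * x) / 2 := by
    intro x
    have e1 : (((a:ℝ)) - b) * x = ((a:ℝ)+1) * x - ((b:ℝ)+1) * x := by ring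
    have e2 : (((a:ℝ)) + b + 2) * x = ((a:ℝ)+1) * x + ((b:ℝ)+1) * x := by ring
    rw [e1, e2, Real.cos_sub, Real.cos_add]
    ring
  rw [intervalIntegral.integral_congr (g := fun x =>
      cos ((((a:ℝ)) - b) * x) / 2 + cos ((((a:ℝ)) + b + 2) * x) / 2)
    (fun x _ => hprod x)]
  have hint1 : IntervalIntegrable (fun x => cos ((((a:ℝ)) - b) * x) / 2) volume 0 (2*π) :=
    (Continuous.div_const (Real.continuous_cos.comp
      (continuous_const.mul continuous_id)) 2).intervalIntegrable _ _
  have hint2 : IntervalIntegrable (fun x => cos ((((a:ℝ)) + b + 2) * x) / 2) volume 0 (2*π) :=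
    (Continuous.div_const (Real.continuous_cos.comp
      (continuous_const.mul continuous_id)) 2).intervalIntegrable _ _
  rw [intervalIntegral.integral_add hint1 hint2,
    intervalIntegral.integral_div, intervalIntegral.integral_div,
    integral_cos_int_mul _ ⟨(a:ℤ) - b, by push_cast; ring⟩,
    integral_cos_int_mul _ ⟨(a:ℤ) + b + 2, by push_cast; ring⟩]
  have hne : ((a:ℝ)) + b + 2 ≠ 0 := by positivity
  rw [if_neg hne]
  by_cases hab : a = b
  · subst hab
    rw [if_pos (by ring), if_pos rfl]
    ring
  · rw [if_neg (by
      intro h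
      apply hab
      have : (a:ℝ) = b := by linarith [sub_eq_zero.mp h]
      exact_mod_cast this), if_neg hab]
    ring

lemma coefI_coskL (n k : ℕ) : coefI n (coskL k) = if k = n then π else 0 := by
  have h1 : (fun t => (↑↑(coskL k) : ℝ → ℝ) t * cos (((n : ℝ) + 1) * t))
      =ᵐ[μ2π] fun t => cos (((k:ℝ)+1) * t) * cos (((n : ℝ) + 1) * t) :=
    (coskL_coeFn k).mono fun t ht => by
      beta_reduce
      rw [ht]
  rw [coefI, integral_congr_ae h1]
  have h2 : (∫ t, cos (((k:ℝ)+1) * t) * cos (((n : ℝ) + 1) * t) ∂μ2π)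
      = ∫ x in (0:ℝ)..(2*π), cos (((k:ℝ)+1) * x) * cos (((n:ℝ)+1) * x) := by
    rw [μ2π, intervalIntegral.integral_of_le (by positivity)]
    exact integral_Icc_eq_integral_Ioc
  rw [h2, integral_cos_mul_cos_orth k n]

open Finset in
lemma Sop_coskL {F : Type*} [NormedAddCommGroup F] [Lattice F] [HasSolidNorm F]
    [IsOrderedAddMonoid F] [NormedSpace ℝ F] [CompleteSpace F]
    (e : ℕ → F) (hpos : ∀ n, 0 ≤ e n)
    (hsum : ∀ σ : Finset ℕ, ‖∑ n ∈ σ, e n‖ ≤ 1) (k : ℕ) :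
    Sop e hpos hsum (coskL k) = π • e k := by
  refine tendsto_nhds_unique (Sop_apply_tendsto e hpos hsum (coskL k)) ?_
  have hev : ∀ N ≥ k + 1, esum e (coskL k) N = π • e k := by
    intro N hN
    rw [esum]
    rw [Finset.sum_eq_single k]
    · rw [coefI_coskL, if_pos rfl]
    · intro n _ hnk
      rw [coefI_coskL, if_neg (fun h => hnk h.symm), zero_smul]
    · intro hk
      exact absurd (Finset.mem_range.mpr (by omega)) hk
  exact tendsto_atTop_of_eventually_const hev

open MeasureTheory Real Filter in
theorem exists_nonregular_operator_from_L1
    {F : Type*} [NormedAddCommGroup F] [Lattice F] [HasSolidNorm F] [IsOrderedAddMonoid F]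
    [NormedSpace ℝ F] [CompleteSpace F]
    (e : ℕ → F) (hpos : ∀ n, 0 ≤ e n)
    (hdisj : ∀ m n, m ≠ n → e m ⊓ e n = 0)
    (hsum : ∀ σ : Finset ℕ, ‖∑ n ∈ σ, e n‖ ≤ 1)
    (hnub : ¬ BddAbove (Set.range e)) :
    ∃ S : Lp ℝ 1 μ2π →L[ℝ] F, ‖S‖ ≤ 1 ∧
      (∀ f : Lp ℝ 1 μ2π,
        Tendsto (fun N : ℕ => ∑ n ∈ Finset.range N,
            (∫ t, f t * cos (((n : ℝ) + 1) * t) ∂μ2π) • e n)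
          atTop (nhds (S f))) ∧
      ¬ IsRegularOp S := by
  refine ⟨Sop e hpos hsum, Sop_norm_le e hpos hsum,
    fun f => Sop_apply_tendsto e hpos hsum f, ?_⟩
  rintro ⟨P, Q, hP, hQ, hPQ⟩
  -- order facts about the test functions
  have h1 : ∀ k, coskL k ≤ oneL := by
    intro k
    refine (Lp.coeFn_le _ _).mp ?_
    filter_upwards [coskL_coeFn k, oneL_coeFn] with t ha hb
    rw [ha, hb]
    exact Real.cos_le_one _
  have h2 : ∀ k, (0 : Lp ℝ 1 μ2π) ≤ oneL + coskL k := by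
    intro k
    refine (Lp.coeFn_le _ _).mp ?_
    filter_upwards [coskL_coeFn k, oneL_coeFn,
      Lp.coeFn_add oneL (coskL k), Lp.coeFn_zero (E := ℝ) (p := 1) (μ := μ2π)]
      with t ha hb hc hd
    rw [hd, hc, Pi.add_apply, ha, hb]
    simp only [Pi.zero_apply]
    linarith [Real.neg_one_le_cos (((k:ℝ)+1) * t)]
  have hub : ∀ k, e k ≤ π⁻¹ • (P oneL + Q oneL) := by
    intro k
    have hSc : Sop e hpos hsum (coskL k) = π • e k := Sop_coskL e hpos hsum k
    have e1 : P (coskL k) ≤ P oneL := by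
      have h := hP _ (sub_nonneg.mpr (h1 k))
      rw [map_sub] at h
      exact sub_nonneg.mp h
    have e2 : -(Q (coskL k)) ≤ Q oneL := by
      have h := hQ _ (h2 k)
      rw [map_add] at h
      exact sub_nonneg.mp (by rw [sub_neg_eq_add]; exact h)
    have hπ : π • e k ≤ P oneL + Q oneL := by
      calc π • e k = Sop e hpos hsum (coskL k) := hSc.symm
        _ = P (coskL k) - Q (coskL k) := by rw [hPQ]; rfl
        _ ≤ P oneL + Q oneL := by
            rw [sub_eq_add_neg]
            exact add_le_add e1 e2
    have h3 := real_smul_le_smul (inv_nonneg.mpr Real.pi_pos.le) hπ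
    rwa [smul_smul, inv_mul_cancel₀ Real.pi_ne_zero, one_smul] at h3
  exact hnub ⟨π⁻¹ • (P oneL + Q oneL), fun x hx => by
    obtain ⟨k, rfl⟩ := hx
    exact hub k⟩
end

section
/- For any index set Γ and any Banach lattice F, every continuous linear operator from ℓ¹(Γ) to F is regular. -/
open MeasureTheory Filter Topology
open scoped NNReal ENNReal

section SmulPos

variable {F : Type*} [NormedAddCommGroup F] [Lattice F] [HasSolidNorm F] [IsOrderedAddMonoid F] [NormedSpace ℝ F]

lemma aux_pow_smul_nonneg {v : F} (hv : 0 ≤ v) (m : ℕ) : 0 ≤ ((2 : ℝ) ^ m)⁻¹ • v := by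
  induction m with
  | zero => simpa using hv
  | succ n ih =>
    apply nsmul_two_semiclosed
    have : 2 • (((2 : ℝ) ^ (n + 1))⁻¹ • v) = ((2 : ℝ) ^ n)⁻¹ • v := by
      rw [← Nat.cast_smul_eq_nsmul ℝ, smul_smul]
      congr 1
      push_cast
      rw [pow_succ]
      field_simp
    rw [this]
    exact ih

lemma aux_dyadic_smul_nonneg {v : F} (hv : 0 ≤ v) (k m : ℕ) :
    0 ≤ ((k : ℝ) / 2 ^ m) • v := by
  have : ((k : ℝ) / 2 ^ m) • v = k • (((2 : ℝ) ^ m)⁻¹ • v) := by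
    rw [← Nat.cast_smul_eq_nsmul ℝ, smul_smul, div_eq_mul_inv]
  rw [this]
  exact nsmul_nonneg (aux_pow_smul_nonneg hv m) k

lemma real_smul_nonneg {c : ℝ} (hc : 0 ≤ c) {v : F} (hv : 0 ≤ v) : 0 ≤ c • v := by
  -- approximate `c` from above by dyadic rationals
  set d : ℕ → ℝ := fun n => (⌈c * 2 ^ n⌉₊ : ℝ) / 2 ^ n with hd
  have hdc : Tendsto d atTop (𝓝 c) := by
    have h1 : ∀ n : ℕ, c ≤ d n := by
      intro n
      rw [hd, le_div_iff₀ (by positivity)]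
      exact Nat.le_ceil _
    have h2 : ∀ n : ℕ, d n ≤ c + ((1 : ℝ) / 2) ^ n := by
      intro n
      rw [hd, div_le_iff₀ (by positivity)]
      have := (Nat.ceil_lt_add_one (by positivity : (0:ℝ) ≤ c * 2 ^ n)).le
      calc (⌈c * 2 ^ n⌉₊ : ℝ) ≤ c * 2 ^ n + 1 := this
        _ = (c + (1 / 2) ^ n) * 2 ^ n := by
            rw [add_mul, ← mul_pow, one_div, inv_mul_cancel₀ (two_ne_zero), one_pow]
          
    have hupper : Tendsto (fun n : ℕ => c + ((1 : ℝ) / 2) ^ n) atTop (𝓝 (c + 0)) :=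
      tendsto_const_nhds.add (tendsto_pow_atTop_nhds_zero_of_lt_one (by norm_num) (by norm_num))
    rw [add_zero] at hupper
    exact tendsto_of_tendsto_of_tendsto_of_le_of_le tendsto_const_nhds hupper h1 h2
  have hsm : Tendsto (fun n : ℕ => d n • v) atTop (𝓝 (c • v)) :=
    hdc.smul tendsto_const_nhds
  refine ge_of_tendsto hsm (Eventually.of_forall fun n => ?_)
  exact aux_dyadic_smul_nonneg hv _ _

end SmulPos

section L1

variable {Γ : Type*} [MeasurableSpace Γ] [MeasurableSingletonClass Γ]

lemma count_ae_all {p : Γ → Prop} (h : ∀ᵐ a ∂(Measure.count : Measure Γ), p a) : ∀ a, p a := by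
  rw [ae_iff, Measure.count_eq_zero_iff] at h
  intro a
  by_contra ha
  exact absurd h (Set.nonempty_iff_ne_empty.mp ⟨a, ha⟩)

lemma count_ae_eq {δ : Type*} {f g : Γ → δ} (h : f =ᵐ[(Measure.count : Measure Γ)] g) :
    f = g := funext (count_ae_all h)

/-- The canonical basis vectors of `ℓ¹(Γ)`. -/
noncomputable def l1Basis (γ : Γ) : Lp ℝ 1 (Measure.count : Measure Γ) :=
  indicatorConstLp 1 (measurableSet_singleton γ) (by simp) (1 : ℝ)

lemma l1Basis_coeFn (γ : Γ) :
    ⇑(l1Basis γ) = Set.indicator {γ} (fun _ => (1 : ℝ)) :=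
  count_ae_eq indicatorConstLp_coeFn

lemma l1Basis_norm (γ : Γ) : ‖l1Basis γ‖ = 1 := by
  rw [l1Basis, norm_indicatorConstLp one_ne_zero ENNReal.one_ne_top]
  simp

lemma l1_tsum_nnnorm (x : Lp ℝ 1 (Measure.count : Measure Γ)) :
    ∑' γ, (‖x γ‖₊ : ENNReal) = eLpNorm x 1 Measure.count := by
  rw [eLpNorm_one_eq_lintegral_enorm, lintegral_count]
  rfl

lemma l1_summable (x : Lp ℝ 1 (Measure.count : Measure Γ)) :
    Summable fun γ => ‖x γ‖ := by
  have hne : ∑' γ, ((‖x γ‖₊ : ℝ≥0) : ENNReal) ≠ ⊤ := by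
    rw [l1_tsum_nnnorm]; exact (Lp.eLpNorm_lt_top x).ne
  have := ENNReal.tsum_coe_ne_top_iff_summable.mp hne
  exact NNReal.summable_coe.mpr this

lemma l1_norm_eq (x : Lp ℝ 1 (Measure.count : Measure Γ)) :
    ‖x‖ = ∑' γ, ‖x γ‖ := by
  rw [Lp.norm_def, ← l1_tsum_nnnorm]
  rw [ENNReal.tsum_toReal_eq (fun γ => ENNReal.coe_ne_top)]
  simp

lemma count_coeFn_sum {ι : Type*} (s : Finset ι)
    (f : ι → Lp ℝ 1 (Measure.count : Measure Γ)) :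
    ⇑(∑ i ∈ s, f i) = ∑ i ∈ s, ⇑(f i) := by
  induction s using Finset.cons_induction with
  | empty => simpa using count_ae_eq (Lp.coeFn_zero ℝ 1 (Measure.count : Measure Γ))
  | cons a s ha ih =>
    rw [Finset.sum_cons, Finset.sum_cons, count_ae_eq (Lp.coeFn_add _ _), ih]

lemma l1_hasSum (x : Lp ℝ 1 (Measure.count : Measure Γ)) :
    HasSum (fun γ => x γ • l1Basis γ) x := by
  classical
  rw [HasSum, tendsto_iff_norm_sub_tendsto_zero]
  have key : ∀ s : Finset Γ, ‖(∑ γ ∈ s, x γ • l1Basis γ) - x‖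
      = ∑' δ : {a // a ∉ s}, ‖x δ.1‖ := by
    intro s
    have h2 : ∀ γ : Γ, ⇑(x γ • l1Basis γ) = x γ • ⇑(l1Basis γ) :=
      fun γ => count_ae_eq (Lp.coeFn_smul _ _)
    have hS : ⇑(∑ γ ∈ s, x γ • l1Basis γ)
        = fun δ => if δ ∈ s then x δ else 0 := by
      have h1 : ⇑(∑ γ ∈ s, x γ • l1Basis γ) = ∑ γ ∈ s, ⇑(x γ • l1Basis γ) :=
        count_coeFn_sum s _
      funext δ
      rw [h1, Finset.sum_apply,
        Finset.sum_congr rfl fun γ _ => by rw [h2, Pi.smul_apply, l1Basis_coeFn]]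
      simp only [Set.indicator_apply, Set.mem_singleton_iff, smul_eq_mul, mul_ite, mul_one,
        mul_zero]
      rw [Finset.sum_congr rfl fun γ _ => by rw [show (δ = γ) = (γ = δ) from by
        simp [eq_comm]]]
      simp [Finset.sum_ite_eq]
    have hdiff : ⇑((∑ γ ∈ s, x γ • l1Basis γ) - x)
        = fun δ => (if δ ∈ s then x δ else 0) - x δ := by
      rw [count_ae_eq (Lp.coeFn_sub (∑ γ ∈ s, x γ • l1Basis γ) x), hS]
      rfl
    calc ‖(∑ γ ∈ s, x γ • l1Basis γ) - x‖
        = ∑' δ, ‖((∑ γ ∈ s, x γ • l1Basis γ) - x) δ‖ := l1_norm_eq _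
      _ = ∑' δ, Set.indicator {a | a ∉ s} (fun δ => ‖x δ‖) δ := by
          refine tsum_congr fun δ => ?_
          rw [hdiff]
          by_cases hδ : δ ∈ s <;> simp [Set.indicator_apply, hδ]
      _ = ∑' δ : {a // a ∉ s}, ‖x δ.1‖ := (tsum_subtype {a | a ∉ s} fun δ => ‖x δ‖).symm
  refine (tendsto_tsum_compl_atTop_zero fun γ => ‖x γ‖).congr fun s => (key s).symm

lemma l1_coords_nonneg {x : Lp ℝ 1 (Measure.count : Measure Γ)} (hx : 0 ≤ x) (γ : Γ) :
    0 ≤ x γ :=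
  count_ae_all ((Lp.coeFn_nonneg x).mpr hx) γ

variable {F : Type*} [NormedAddCommGroup F] [NormedSpace ℝ F] [CompleteSpace F]

lemma l1_term_norm_summable (x : Lp ℝ 1 (Measure.count : Measure Γ)) (v : Γ → F) {C : ℝ}
    (hv : ∀ γ, ‖v γ‖ ≤ C) : Summable fun γ => ‖x γ • v γ‖ := by
  refine Summable.of_nonneg_of_le (fun γ => norm_nonneg _)
    (fun γ => ?_) ((l1_summable x).mul_right C)
  rw [norm_smul]
  exact mul_le_mul_of_nonneg_left (hv γ) (norm_nonneg _)

lemma l1_term_summable (x : Lp ℝ 1 (Measure.count : Measure Γ)) (v : Γ → F) {C : ℝ}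
    (hv : ∀ γ, ‖v γ‖ ≤ C) : Summable fun γ => x γ • v γ :=
  (l1_term_norm_summable x v hv).of_norm

/-- The operator `x ↦ ∑ γ, x γ • v γ` on `ℓ¹(Γ)` built from a bounded family `v`. -/
noncomputable def l1SumOp (v : Γ → F) {C : ℝ} (hv : ∀ γ, ‖v γ‖ ≤ C) :
    Lp ℝ 1 (Measure.count : Measure Γ) →L[ℝ] F := by
  refine LinearMap.mkContinuous
    { toFun := fun x => ∑' γ, x γ • v γ
      map_add' := fun x y => ?_
      map_smul' := fun c x => ?_ } C (fun x => ?_)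
  · have hxy : ⇑(x + y) = ⇑x + ⇑y := count_ae_eq (Lp.coeFn_add x y)
    calc ∑' γ, (x + y) γ • v γ = ∑' γ, (x γ • v γ + y γ • v γ) := by
          refine tsum_congr fun γ => ?_
          rw [hxy]; simp [add_smul]
      _ = (∑' γ, x γ • v γ) + ∑' γ, y γ • v γ :=
          Summable.tsum_add (l1_term_summable x v hv) (l1_term_summable y v hv)
  · have hcx : ⇑(c • x) = c • ⇑x := count_ae_eq (Lp.coeFn_smul c x)
    calc ∑' γ, (c • x) γ • v γ = ∑' γ, c • (x γ • v γ) := by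
          refine tsum_congr fun γ => ?_
          rw [hcx]; simp [smul_smul]
      _ = c • ∑' γ, x γ • v γ :=
          ((l1_term_summable x v hv).hasSum.const_smul c).tsum_eq
  · calc ‖∑' γ, x γ • v γ‖ ≤ ∑' γ, ‖x γ • v γ‖ :=
          norm_tsum_le_tsum_norm (l1_term_norm_summable x v hv)
      _ ≤ ∑' γ, ‖x γ‖ * C := by
          refine Summable.tsum_le_tsum (fun γ => ?_) (l1_term_norm_summable x v hv)
            ((l1_summable x).mul_right C)
          rw [norm_smul]
          exact mul_le_mul_of_nonneg_left (hv γ) (norm_nonneg _)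
      _ = C * ‖x‖ := by rw [(l1_summable x).tsum_mul_right, l1_norm_eq, mul_comm]

lemma l1SumOp_apply (v : Γ → F) {C : ℝ} (hv : ∀ γ, ‖v γ‖ ≤ C)
    (x : Lp ℝ 1 (Measure.count : Measure Γ)) :
    l1SumOp v hv x = ∑' γ, x γ • v γ := rfl

end L1

section NormPosPart

variable {F : Type*} [NormedAddCommGroup F] [Lattice F] [HasSolidNorm F] [IsOrderedAddMonoid F]

lemma aux_norm_posPart_le (a : F) : ‖a⁺‖ ≤ ‖a‖ := by
  refine norm_le_norm_of_abs_le_abs ?_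
  rw [abs_of_nonneg (posPart_nonneg a)]
  exact sup_le (le_abs_self a) (abs_nonneg a)

lemma aux_norm_negPart_le (a : F) : ‖a⁻‖ ≤ ‖a‖ := by
  refine norm_le_norm_of_abs_le_abs ?_
  rw [abs_of_nonneg (negPart_nonneg a)]
  exact sup_le (neg_le_abs a) (abs_nonneg a)

end NormPosPart

open MeasureTheory in
/-- Every continuous linear operator from `ℓ¹(Γ)` (realized as `L¹` of counting
measure on `Γ`, with every subset of `Γ` measurable) into a Banach lattice `F`
is regular. -/
theorem regular_of_continuous_from_l1
    {Γ : Type*} [MeasurableSpace Γ] (hmeas : ∀ s : Set Γ, MeasurableSet s)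
    {F : Type*} [NormedAddCommGroup F] [Lattice F] [HasSolidNorm F] [IsOrderedAddMonoid F] [NormedSpace ℝ F] [CompleteSpace F]
    (T : Lp ℝ 1 (Measure.count : Measure Γ) →L[ℝ] F) :
    IsRegularOp T := by
  haveI : MeasurableSingletonClass Γ := ⟨fun γ => hmeas {γ}⟩
  set u : Γ → F := fun γ => (T (l1Basis γ))⁺ with hu
  set w : Γ → F := fun γ => (T (l1Basis γ))⁻ with hw
  have hTe : ∀ γ, ‖T (l1Basis γ)‖ ≤ ‖T‖ := fun γ => by
    simpa [l1Basis_norm γ] using T.le_opNorm (l1Basis γ)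
  have hub : ∀ γ, ‖u γ‖ ≤ ‖T‖ := fun γ => (aux_norm_posPart_le _).trans (hTe γ)
  have hwb : ∀ γ, ‖w γ‖ ≤ ‖T‖ := fun γ => (aux_norm_negPart_le _).trans (hTe γ)
  refine ⟨l1SumOp u hub, l1SumOp w hwb, ?_, ?_, ?_⟩
  · intro x hx
    rw [l1SumOp_apply]
    exact tsum_nonneg fun γ =>
      real_smul_nonneg (l1_coords_nonneg hx γ) (posPart_nonneg _)
  · intro x hx
    rw [l1SumOp_apply]
    exact tsum_nonneg fun γ =>
      real_smul_nonneg (l1_coords_nonneg hx γ) (negPart_nonneg _)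
  · ext x
    have hT : HasSum (fun γ => x γ • T (l1Basis γ)) (T x) := by
      have := (l1_hasSum x).mapL T
      simpa using this
    have hP : HasSum (fun γ => x γ • u γ) (l1SumOp u hub x) :=
      (l1_term_summable x u hub).hasSum
    have hQ : HasSum (fun γ => x γ • w γ) (l1SumOp w hwb x) :=
      (l1_term_summable x w hwb).hasSum
    have hPQ : HasSum (fun γ => x γ • T (l1Basis γ))
        (l1SumOp u hub x - l1SumOp w hwb x) := by
      refine (hP.sub hQ).congr_fun fun γ => ?_
      rw [← smul_sub, hu, hw, posPart_sub_negPart]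
    simpa using hT.unique hPQ
end
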